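/- arXiv:2006.00462 — 6 statements merged into one kernel-verified Lean document; each statement's English description precedes it below -/
import Mathlib

section
/- Let X be a normed space, let φ : X → (-∞,∞] with x̄ ∈ dom φ, and let ψ : X → (-∞,∞] be a proper function such that ψ(u) ≤ dφ(x̄)(u) for all u ∈ X. Then φ is properly epi-differentiable at x̄ with ψ(·) = dφ(x̄)(·) if and only if for every u ∈ X there exists a map ũ : [0,ε] → X (not necessarily continuous) with lim_{t↓0} ũ(t) = ũ(0) = u and ψ(u) = lim_{t↓0} (φ(x̄ + t·ũ(t)) − φ(x̄))/t (as a limit in the extended reals). -/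
open Filter Topology Set Metric Pointwise

noncomputable section

variable {E : Type*} [NormedAddCommGroup E] [NormedSpace ℝ E]

/-- Bouligand–Severi contingent tangent cone. -/
def contTangent (Ω : Set E) (x : E) : Set E :=
  {u | ∃ t : ℕ → ℝ, ∃ v : ℕ → E,
    (∀ k, 0 < t k) ∧ Tendsto t atTop (𝓝 0) ∧ Tendsto v atTop (𝓝 u) ∧
    ∀ k, x + t k • v k ∈ Ω}

/-- Dini–Hadamard subnormal cone. -/
def subNormal (Ω : Set E) (x : E) : Set (E →L[ℝ] ℝ) :=
  {v | ∀ u ∈ contTangent Ω x, v u ≤ 0}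

/-- Normal cone of convex analysis. -/
def convNormal (Θ : Set E) (y : E) : Set (E →L[ℝ] ℝ) :=
  {l | ∀ z ∈ Θ, l (z - y) ≤ 0}

/-- Difference quotient of an extended-real-valued function. -/
def diffQuot (φ : E → EReal) (x : E) (t : ℝ) (u : E) : EReal :=
  ((t⁻¹ : ℝ) : EReal) * (φ (x + t • u) - φ x)

/-- Dini–Hadamard subderivative. -/
def subDeriv (φ : E → EReal) (x : E) (u : E) : EReal :=
  Filter.liminf (fun p : ℝ × E => diffQuot φ x p.1 p.2) ((𝓝[>] (0:ℝ)) ×ˢ 𝓝 u)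

/-- Dini–Hadamard subdifferential. -/
def subDiff (φ : E → EReal) (x : E) : Set (E →L[ℝ] ℝ) :=
  {v | ∀ u, (v u : EReal) ≤ subDeriv φ x u}

/-- Proper extended-real-valued function. -/
def properFun (ψ : E → EReal) : Prop := (∀ u, ψ u ≠ ⊥) ∧ ∃ u, ψ u ≠ ⊤

def epiSet (g : E → EReal) : Set (E × ℝ) := {p | g p.1 ≤ (p.2 : EReal)}

/-- Painlevé–Kuratowski sequential outer limit as t ↓ 0. -/
def outerLim {α : Type*} [TopologicalSpace α] (S : ℝ → Set α) : Set α :=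
  {z | ∃ t : ℕ → ℝ, ∃ w : ℕ → α, (∀ k, 0 < t k) ∧ Tendsto t atTop (𝓝 0) ∧
    Tendsto w atTop (𝓝 z) ∧ ∀ k, w k ∈ S (t k)}

/-- Painlevé–Kuratowski sequential inner limit as t ↓ 0. -/
def innerLim {α : Type*} [TopologicalSpace α] (S : ℝ → Set α) : Set α :=
  {z | ∀ t : ℕ → ℝ, (∀ k, 0 < t k) → Tendsto t atTop (𝓝 0) →
    ∃ w : ℕ → α, Tendsto w atTop (𝓝 z) ∧ ∀ᶠ k in atTop, w k ∈ S (t k)}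

/-- Epi-differentiability at a point. -/
def epiDiffAt (φ : E → EReal) (x : E) : Prop :=
  outerLim (fun t => epiSet (fun u => diffQuot φ x t u)) = epiSet (subDeriv φ x) ∧
  innerLim (fun t => epiSet (fun u => diffQuot φ x t u)) = epiSet (subDeriv φ x)

/-- Relative Lipschitz continuity around x w.r.t. Ω with constant ℓ. -/
def RelLipschitzOn (φ : E → EReal) (Ω : Set E) (x : E) (ℓ : ℝ) : Prop :=
  ∃ U ∈ 𝓝 x, ∀ y ∈ Ω ∩ U, ∀ z ∈ Ω ∩ U, φ y - φ z ≤ ((ℓ * ‖y - z‖ : ℝ) : EReal)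

def RelLipschitzAround (φ : E → EReal) (Ω : Set E) (x : E) : Prop :=
  ∃ ℓ : ℝ, 0 ≤ ℓ ∧ RelLipschitzOn φ Ω x ℓ

/-- Local Lipschitz continuity of an extended-real-valued function around x (finite nearby). -/
def LocLipschitzAt (φ : E → EReal) (x : E) : Prop :=
  ∃ ℓ : ℝ, ∃ U ∈ 𝓝 x, (∀ z ∈ U, φ z ≠ ⊤) ∧
    ∀ z ∈ U, ∀ w ∈ U, φ z - φ w ≤ ((ℓ * ‖z - w‖ : ℝ) : EReal)

/-- Dini–Hadamard regularity. -/
def DHRegular (φ : E → EReal) (x : E) : Prop :=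
  ∀ u, sSup ((fun v : E →L[ℝ] ℝ => (v u : EReal)) '' subDiff φ x) = subDeriv φ x u

def weakStarClosure (S : Set (E →L[ℝ] ℝ)) : Set (E →L[ℝ] ℝ) :=
  closure (show Set (WeakDual ℝ E) from S)

def IsWeakStarClosed (S : Set (E →L[ℝ] ℝ)) : Prop :=
  IsClosed (show Set (WeakDual ℝ E) from S)


section AuxLemmas

variable {X : Type*} [NormedAddCommGroup X] [NormedSpace ℝ X]

lemma liminf_map_aux {α β : Type*} (m : α → β) (l : Filter α) (g : β → EReal) :
    Filter.liminf g (Filter.map m l) = Filter.liminf (g ∘ m) l := by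
  simp [Filter.liminf_eq, Filter.eventually_map]

lemma ereal_sub_ne_bot {a b : EReal} (ha : a ≠ ⊥) (hb : b ≠ ⊤) : a - b ≠ ⊥ := by
  induction a with
  | bot => exact absurd rfl ha
  | coe a =>
      induction b with
      | bot => simp
      | coe b => rw [← EReal.coe_sub]; exact EReal.coe_ne_bot _
      | top => exact absurd rfl hb
  | top =>
      induction b with
      | bot => simp
      | coe b => rw [sub_eq_add_neg, ← EReal.coe_neg, EReal.top_add_coe]; exact top_ne_bot
      | top => exact absurd rfl hb

lemma ereal_coe_inv_mul_ne_bot {t : ℝ} (ht : 0 < t) {a : EReal} (ha : a ≠ ⊥) :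
    ((t⁻¹ : ℝ) : EReal) * a ≠ ⊥ := by
  induction a with
  | bot => exact absurd rfl ha
  | coe a => rw [← EReal.coe_mul]; exact EReal.coe_ne_bot _
  | top => rw [EReal.coe_mul_top_of_pos (by positivity)]; exact top_ne_bot

lemma dq_ne_bot (φ : X → EReal) (xb : X) (hφbot : ∀ x, φ x ≠ ⊥) (hxb : φ xb ≠ ⊤)
    (t : ℝ) (ht : 0 < t) (v : X) : diffQuot φ xb t v ≠ ⊥ :=
  ereal_coe_inv_mul_ne_bot ht (ereal_sub_ne_bot (hφbot _) hxb)

lemma subDeriv_le_liminf_pair (φ : X → EReal) (xb : X) {ι : Type*} {l : Filter ι}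
    {t : ι → ℝ} {v : ι → X} {u : X}
    (hpair : Tendsto (fun i => (t i, v i)) l ((𝓝[>] (0:ℝ)) ×ˢ 𝓝 u)) :
    subDeriv φ xb u ≤ Filter.liminf (fun i => diffQuot φ xb (t i) (v i)) l := by
  have h1 : subDeriv φ xb u ≤
      Filter.liminf (fun p : ℝ × X => diffQuot φ xb p.1 p.2)
        (Filter.map (fun i => (t i, v i)) l) :=
    Filter.liminf_le_liminf_of_le hpair
  rwa [liminf_map_aux] at h1

lemma subDeriv_le_of_seq (φ : X → EReal) (xb : X) {ι : Type*} {l : Filter ι} [l.NeBot]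
    {t : ι → ℝ} {v : ι → X} {u : X}
    (hpair : Tendsto (fun i => (t i, v i)) l ((𝓝[>] (0:ℝ)) ×ˢ 𝓝 u))
    {g : ι → EReal} {L : EReal}
    (hle : ∀ᶠ i in l, diffQuot φ xb (t i) (v i) ≤ g i)
    (hg : Tendsto g l (𝓝 L)) : subDeriv φ xb u ≤ L := by
  refine (subDeriv_le_liminf_pair φ xb hpair).trans ?_
  calc Filter.liminf (fun i => diffQuot φ xb (t i) (v i)) l
      ≤ Filter.liminf g l := Filter.liminf_le_liminf hle
    _ = L := hg.liminf_eq

end AuxLemmas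

/-- characterization of proper epi-differentiability via paths. -/
theorem proper_epi_differentiability_characterization
    {X : Type*} [NormedAddCommGroup X] [NormedSpace ℝ X]
    (φ ψ : X → EReal) (xb : X)
    (hφbot : ∀ x, φ x ≠ ⊥) (hxb : φ xb ≠ ⊤)
    (hψproper : properFun ψ)
    (hψle : ∀ u, ψ u ≤ subDeriv φ xb u) :
    (epiDiffAt φ xb ∧ properFun (subDeriv φ xb) ∧ ∀ u, ψ u = subDeriv φ xb u) ↔
    (∀ u : X, ∃ utl : ℝ → X, utl 0 = u ∧ Tendsto utl (𝓝[>] (0:ℝ)) (𝓝 u) ∧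
      Tendsto (fun t => diffQuot φ xb t (utl t)) (𝓝[>] (0:ℝ)) (𝓝 (ψ u))) := by
  have hF : (𝓝[>] (0:ℝ)).NeBot := inferInstance
  constructor
  · -- forward direction
    rintro ⟨hepi, hproper, hpsi⟩ u
    rcases eq_or_ne (subDeriv φ xb u) ⊤ with hT | hT
    · -- infinite subderivative: constant path
      refine ⟨fun _ => u, rfl, tendsto_const_nhds, ?_⟩
      have hle := subDeriv_le_liminf_pair φ xb (t := id) (v := fun _ => u) (u := u)
          (tendsto_id.prodMk tendsto_const_nhds)
      rw [hT] at hle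
      have hinf : Filter.liminf (fun t => diffQuot φ xb t u) (𝓝[>] (0:ℝ)) = ⊤ :=
        top_le_iff.1 hle
      have hsup : Filter.limsup (fun t => diffQuot φ xb t u) (𝓝[>] (0:ℝ)) = ⊤ :=
        top_le_iff.1 (hinf ▸ Filter.liminf_le_limsup)
      have htend := tendsto_of_liminf_eq_limsup hinf hsup
      rw [hpsi u, hT]
      exact htend
    · -- finite subderivative
      set rr : ℝ := (subDeriv φ xb u).toReal with hrr
      have hbot : subDeriv φ xb u ≠ ⊥ := hproper.1 u
      have hru : subDeriv φ xb u = (rr : EReal) := (EReal.coe_toReal hT hbot).symm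
      set F0 : ℝ → X → EReal :=
        fun t v => max (diffQuot φ xb t v) (rr:EReal) + ((‖v - u‖ : ℝ) : EReal) with hF0
      set h : ℝ → EReal := fun t => ⨅ v, F0 t v with hh
      have hF0ge : ∀ t v, (rr : EReal) ≤ F0 t v := fun t v =>
        le_trans (le_max_right _ _)
          (le_add_of_nonneg_right (by exact_mod_cast norm_nonneg (v - u)))
      have hhge : ∀ t, (rr:EReal) ≤ h t := fun t => le_iInf (hF0ge t)
      have hlimsup : ∀ ε : ℝ, 0 < ε → ∀ᶠ t in 𝓝[>] (0:ℝ), h t < ((rr + ε : ℝ):EReal) := by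
        intro ε hε
        by_contra hcon
        obtain ⟨ns, hns, hnsp⟩ := Filter.exists_seq_forall_of_frequently
          (Filter.not_eventually.1 hcon)
        obtain ⟨N, hN⟩ := eventually_atTop.1
          (hns.eventually (self_mem_nhdsWithin : ∀ᶠ s in 𝓝[>] (0:ℝ), s ∈ Set.Ioi 0))
        set t' : ℕ → ℝ := fun k => ns (k + N) with ht'
        have ht'0 : ∀ k, 0 < t' k := fun k => hN _ (Nat.le_add_left N k)
        have ht'F : Tendsto t' atTop (𝓝[>] (0:ℝ)) := hns.comp (tendsto_add_atTop_nat N)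
        have hurm : (u, rr) ∈ epiSet (subDeriv φ xb) := by
          show subDeriv φ xb u ≤ ((rr:ℝ) : EReal)
          rw [hru]
        rw [← hepi.2] at hurm
        obtain ⟨w, hw, hwmem⟩ := hurm t' ht'0 (ht'F.mono_right nhdsWithin_le_nhds)
        have hw1 : Tendsto (fun k => (w k).1) atTop (𝓝 u) := (continuous_fst.tendsto _).comp hw
        have hw2 : Tendsto (fun k => (w k).2) atTop (𝓝 rr) := (continuous_snd.tendsto _).comp hw
        have hg : Tendsto (fun k => max (w k).2 rr + ‖(w k).1 - u‖) atTop (𝓝 rr) := by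
          have := (hw2.max (tendsto_const_nhds (x := rr))).add
            (tendsto_iff_norm_sub_tendsto_zero.1 hw1)
          simpa using this
        have hglt := hg.eventually_lt_const (show rr < rr + ε by linarith)
        have hhle : ∀ᶠ k in atTop,
            h (t' k) ≤ ((max (w k).2 rr + ‖(w k).1 - u‖ : ℝ) : EReal) := by
          filter_upwards [hwmem] with k hk
          have hk' : diffQuot φ xb (t' k) (w k).1 ≤ (((w k).2 : ℝ) : EReal) := hk
          have h1 : h (t' k) ≤ F0 (t' k) (w k).1 := iInf_le _ _
          refine h1.trans ?_
          have h2 : max (diffQuot φ xb (t' k) (w k).1) (rr:EReal)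
              ≤ ((max (w k).2 rr : ℝ):EReal) := by
            rw [EReal.coe_strictMono.monotone.map_max]
            exact max_le_max hk' le_rfl
          calc F0 (t' k) (w k).1
              ≤ ((max (w k).2 rr :ℝ):EReal) + ((‖(w k).1 - u‖ : ℝ):EReal) :=
                add_le_add h2 le_rfl
            _ = _ := by rw [← EReal.coe_add]
        obtain ⟨k, hk1, hk2⟩ := (hhle.and hglt).exists
        exact hnsp (k + N) (lt_of_le_of_lt hk1 (by exact_mod_cast hk2))
      have hex : ∀ s : ℝ, ∃ v : X, (0 < s → h s ≠ ⊤ → F0 s v < h s + ((s:ℝ):EReal)) ∧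
          (¬(0 < s ∧ h s ≠ ⊤) → v = u) := by
        intro s
        by_cases hc : 0 < s ∧ h s ≠ ⊤
        · have hsnb : h s ≠ ⊥ := (lt_of_lt_of_le (EReal.bot_lt_coe rr) (hhge s)).ne'
          have hreal : h s = (((h s).toReal : ℝ) : EReal) := (EReal.coe_toReal hc.2 hsnb).symm
          have hlt : h s < h s + ((s:ℝ):EReal) := by
            conv_lhs => rw [hreal]
            conv_rhs => rw [hreal]
            rw [← EReal.coe_add]
            exact_mod_cast (by linarith [hc.1] : (h s).toReal < (h s).toReal + s)
          have hlt' : (⨅ v, F0 s v) < h s + ((s:ℝ):EReal) := hlt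
          obtain ⟨v, hv⟩ := iInf_lt_iff.1 hlt'
          exact ⟨v, fun _ _ => hv, fun hcon => absurd hc hcon⟩
        · exact ⟨u, fun h1 h2 => absurd ⟨h1, h2⟩ hc, fun _ => rfl⟩
      choose utl hutl1 hutl2 using hex
      have hutl0 : utl 0 = u := hutl2 0 (by simp)
      have hFb : ∀ ε : ℝ, 0 < ε → ∀ᶠ s in 𝓝[>] (0:ℝ), F0 s (utl s) < ((rr + ε:ℝ):EReal) := by
        intro ε hε
        have e1 : ∀ᶠ s in 𝓝[>] (0:ℝ), s ∈ Set.Ioi (0:ℝ) := self_mem_nhdsWithin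
        have e2 : ∀ᶠ s in 𝓝[>] (0:ℝ), s < ε/2 :=
          (tendsto_id.mono_right nhdsWithin_le_nhds).eventually_lt_const (by linarith)
        filter_upwards [hlimsup (ε/2) (by linarith), e1, e2] with s h1 h2 h3
        have htop : h s ≠ ⊤ := ne_top_of_lt h1
        calc F0 s (utl s) < h s + ((s:ℝ):EReal) := hutl1 s h2 htop
          _ ≤ ((rr + ε/2:ℝ):EReal) + ((ε/2:ℝ):EReal) := add_le_add h1.le (by exact_mod_cast h3.le)
          _ = ((rr + ε:ℝ):EReal) := by rw [← EReal.coe_add]; congr 1; ring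
      have hnormb : ∀ ε : ℝ, 0 < ε → ∀ᶠ s in 𝓝[>] (0:ℝ), ‖utl s - u‖ < ε := by
        intro ε hε
        filter_upwards [hFb ε hε] with s hs
        have h1 : ((rr:ℝ):EReal) + ((‖utl s - u‖:ℝ):EReal) ≤ F0 s (utl s) :=
          add_le_add (le_max_right _ _) le_rfl
        have h2 : ((rr + ‖utl s - u‖ : ℝ):EReal) < ((rr + ε:ℝ):EReal) := by
          rw [EReal.coe_add]; exact lt_of_le_of_lt h1 hs
        have h3 : rr + ‖utl s - u‖ < rr + ε := by exact_mod_cast h2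
        linarith
      have hul : Tendsto utl (𝓝[>] (0:ℝ)) (𝓝 u) := by
        rw [tendsto_iff_norm_sub_tendsto_zero, Metric.tendsto_nhds]
        intro ε hε
        filter_upwards [hnormb ε hε] with s hs
        rw [Real.dist_eq, sub_zero, abs_of_nonneg (norm_nonneg _)]
        exact hs
      refine ⟨utl, hutl0, hul, ?_⟩
      rw [hpsi u, hru, tendsto_order]
      constructor
      · intro a ha
        have hpair : Tendsto (fun s => (s, utl s)) (𝓝[>] (0:ℝ)) ((𝓝[>] (0:ℝ)) ×ˢ 𝓝 u) :=
          tendsto_id.prodMk hul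
        have hli := subDeriv_le_liminf_pair φ xb (t := id) (v := utl) (u := u) hpair
        rw [hru] at hli
        exact Filter.eventually_lt_of_lt_liminf (lt_of_lt_of_le ha hli)
      · intro b hb
        obtain ⟨ε, hε, hεb⟩ : ∃ ε : ℝ, 0 < ε ∧ ((rr + ε:ℝ):EReal) ≤ b := by
          induction b with
          | bot => exact absurd hb (by simp)
          | coe b =>
              have hrb : rr < b := by exact_mod_cast hb
              exact ⟨(b - rr)/2, by linarith,
                by exact_mod_cast (by linarith : rr + (b-rr)/2 ≤ b)⟩
          | top => exact ⟨1, one_pos, le_top⟩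
        filter_upwards [hFb ε hε] with s hs
        have h1 : diffQuot φ xb s (utl s) ≤ F0 s (utl s) :=
          le_trans (le_max_left _ _)
            (le_add_of_nonneg_right (by exact_mod_cast norm_nonneg (utl s - u)))
        exact (h1.trans_lt hs).trans_le hεb
  · -- backward direction
    intro H
    have key : ∀ u, ψ u = subDeriv φ xb u := by
      intro u
      obtain ⟨utl, h0, hul, hdq⟩ := H u
      refine le_antisymm (hψle u) ?_
      exact subDeriv_le_of_seq φ xb (t := id) (v := utl) (u := u)
        (tendsto_id.prodMk hul) (Filter.Eventually.of_forall fun t => le_rfl) hdq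
    have hproper : properFun (subDeriv φ xb) :=
      ⟨fun u => (key u) ▸ hψproper.1 u, hψproper.2.imp fun u h => (key u) ▸ h⟩
    refine ⟨⟨?_, ?_⟩, hproper, key⟩
    · -- outer limit
      ext z
      obtain ⟨u, r⟩ := z
      constructor
      · rintro ⟨t, w, ht0, htlim, hwlim, hmem⟩
        have hw1 : Tendsto (fun k => (w k).1) atTop (𝓝 u) := (continuous_fst.tendsto _).comp hwlim
        have hw2 : Tendsto (fun k => (((w k).2 : ℝ) : EReal)) atTop (𝓝 ((r:ℝ) : EReal)) :=
          (continuous_coe_real_ereal.tendsto _).comp ((continuous_snd.tendsto _).comp hwlim)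
        have hpair : Tendsto (fun k => (t k, (w k).1)) atTop ((𝓝[>] (0:ℝ)) ×ˢ 𝓝 u) :=
          (tendsto_nhdsWithin_of_tendsto_nhds_of_eventually_within _ htlim
            (Filter.Eventually.of_forall ht0)).prodMk hw1
        exact subDeriv_le_of_seq φ xb hpair (Filter.Eventually.of_forall fun k => hmem k) hw2
      · intro hur
        have hur' : subDeriv φ xb u ≤ ((r:ℝ) : EReal) := hur
        obtain ⟨utl, h0, hul, hdq⟩ := H u
        have hψr : ψ u ≤ ((r:ℝ) : EReal) := by rw [key u]; exact hur'
        have hS : ∀ k : ℕ, ∃ s : ℝ, 0 < s ∧ s < 1/((k:ℝ)+1) ∧ ‖utl s - u‖ < 1/((k:ℝ)+1) ∧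
            diffQuot φ xb s (utl s) < ((r + 1/((k:ℝ)+1) : ℝ) : EReal) := by
          intro k
          have hk : (0:ℝ) < 1/((k:ℝ)+1) := by positivity
          have e1 : ∀ᶠ s in 𝓝[>] (0:ℝ), s ∈ Set.Ioi (0:ℝ) := self_mem_nhdsWithin
          have e2 : ∀ᶠ s in 𝓝[>] (0:ℝ), s < 1/((k:ℝ)+1) :=
            (tendsto_id.mono_right nhdsWithin_le_nhds).eventually_lt_const hk
          have e3 : ∀ᶠ s in 𝓝[>] (0:ℝ), ‖utl s - u‖ < 1/((k:ℝ)+1) :=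
            (tendsto_iff_norm_sub_tendsto_zero.1 hul).eventually_lt_const hk
          have hlt : ψ u < ((r + 1/((k:ℝ)+1) : ℝ) : EReal) :=
            hψr.trans_lt (by exact_mod_cast (by linarith : r < r + 1/((k:ℝ)+1)))
          have e4 := hdq.eventually_lt_const hlt
          obtain ⟨s, hs⟩ := ((e1.and e2).and (e3.and e4)).exists
          exact ⟨s, hs.1.1, hs.1.2, hs.2.1, hs.2.2⟩
        choose t ht0 htlt hnorm hdqlt using hS
        have h1k : Tendsto (fun k : ℕ => 1/((k:ℝ)+1)) atTop (𝓝 0) :=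
          tendsto_one_div_add_atTop_nhds_zero_nat
        have htlim : Tendsto t atTop (𝓝 0) :=
          tendsto_of_tendsto_of_tendsto_of_le_of_le tendsto_const_nhds h1k
            (fun k => (ht0 k).le) (fun k => (htlt k).le)
        have hvlim : Tendsto (fun k => utl (t k)) atTop (𝓝 u) := by
          rw [tendsto_iff_norm_sub_tendsto_zero]
          exact squeeze_zero (fun k => norm_nonneg _) (fun k => (hnorm k).le) h1k
        set s : ℕ → ℝ :=
          fun k => (max (diffQuot φ xb (t k) (utl (t k))) ((r:ℝ):EReal)).toReal with hsdef
        have hmaxnb : ∀ k, max (diffQuot φ xb (t k) (utl (t k))) ((r:ℝ):EReal) ≠ ⊥ :=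
          fun k => (lt_of_lt_of_le (EReal.bot_lt_coe r) (le_max_right _ _)).ne'
        have hmaxle : ∀ k, max (diffQuot φ xb (t k) (utl (t k))) ((r:ℝ):EReal)
            ≤ ((r + 1/((k:ℝ)+1) : ℝ) : EReal) := fun k =>
          max_le (hdqlt k).le (by
            have hk : (0:ℝ) < 1/((k:ℝ)+1) := by positivity
            exact_mod_cast (by linarith : r ≤ r + 1/((k:ℝ)+1)))
        have hmaxnt : ∀ k, max (diffQuot φ xb (t k) (utl (t k))) ((r:ℝ):EReal) ≠ ⊤ :=
          fun k => ne_top_of_le_ne_top (EReal.coe_ne_top _) (hmaxle k)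
        have hsl : ∀ k, r ≤ s k := by
          intro k
          have := EReal.toReal_le_toReal (le_max_right (diffQuot φ xb (t k) (utl (t k))) ((r:ℝ):EReal))
            (EReal.coe_ne_bot r) (hmaxnt k)
          simpa using this
        have hsu : ∀ k, s k ≤ r + 1/((k:ℝ)+1) := by
          intro k
          have := EReal.toReal_le_toReal (hmaxle k) (hmaxnb k) (EReal.coe_ne_top _)
          rw [EReal.toReal_coe] at this; exact this
        have hslim : Tendsto s atTop (𝓝 r) := by
          have hup : Tendsto (fun k : ℕ => r + 1/((k:ℝ)+1)) atTop (𝓝 r) := by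
            simpa using (tendsto_const_nhds (x := r)).add h1k
          exact tendsto_of_tendsto_of_tendsto_of_le_of_le tendsto_const_nhds hup hsl hsu
        refine ⟨t, fun k => (utl (t k), s k), ht0, htlim, hvlim.prodMk_nhds hslim, ?_⟩
        intro k
        show diffQuot φ xb (t k) (utl (t k)) ≤ ((s k : ℝ) : EReal)
        rw [hsdef, EReal.coe_toReal (hmaxnt k) (hmaxnb k)]
        exact le_max_left _ _
    · -- inner limit
      ext z
      obtain ⟨u, r⟩ := z
      constructor
      · intro hz
        have ht0 : ∀ k : ℕ, (0:ℝ) < 1/((k:ℝ)+1) := fun k => by positivity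
        obtain ⟨w, hwlim, hmem⟩ := hz (fun k => 1/((k:ℝ)+1)) ht0
          tendsto_one_div_add_atTop_nhds_zero_nat
        have hw1 : Tendsto (fun k => (w k).1) atTop (𝓝 u) := (continuous_fst.tendsto _).comp hwlim
        have hw2 : Tendsto (fun k => (((w k).2 : ℝ) : EReal)) atTop (𝓝 ((r:ℝ) : EReal)) :=
          (continuous_coe_real_ereal.tendsto _).comp ((continuous_snd.tendsto _).comp hwlim)
        have hpair : Tendsto (fun k : ℕ => (1/((k:ℝ)+1), (w k).1)) atTop ((𝓝[>] (0:ℝ)) ×ˢ 𝓝 u) :=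
          (tendsto_nhdsWithin_of_tendsto_nhds_of_eventually_within _
            tendsto_one_div_add_atTop_nhds_zero_nat
            (Filter.Eventually.of_forall ht0)).prodMk hw1
        exact subDeriv_le_of_seq φ xb hpair hmem hw2
      · intro hur t ht0 htlim
        have hur' : subDeriv φ xb u ≤ ((r:ℝ) : EReal) := hur
        obtain ⟨utl, h0, hul, hdq⟩ := H u
        have hψr : ψ u ≤ ((r:ℝ) : EReal) := by rw [key u]; exact hur'
        have htF : Tendsto t atTop (𝓝[>] (0:ℝ)) :=
          tendsto_nhdsWithin_of_tendsto_nhds_of_eventually_within _ htlim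
            (Filter.Eventually.of_forall ht0)
        have hv : Tendsto (fun k => utl (t k)) atTop (𝓝 u) := hul.comp htF
        have hΔ : Tendsto (fun k => diffQuot φ xb (t k) (utl (t k))) atTop (𝓝 (ψ u)) :=
          hdq.comp htF
        have hmax : Tendsto (fun k => max (diffQuot φ xb (t k) (utl (t k))) ((r:ℝ):EReal))
            atTop (𝓝 ((r:ℝ):EReal)) := by
          have := hΔ.max (tendsto_const_nhds (x := ((r:ℝ):EReal)))
          rwa [max_eq_right hψr] at this
        set s : ℕ → ℝ :=
          fun k => (max (diffQuot φ xb (t k) (utl (t k))) ((r:ℝ):EReal)).toReal with hsdef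
        have hslim : Tendsto s atTop (𝓝 r) := by
          have h2 := (EReal.tendsto_toReal (EReal.coe_ne_top r) (EReal.coe_ne_bot r)).comp hmax
          simpa [hsdef, Function.comp_def] using h2
        refine ⟨fun k => (utl (t k), s k), hv.prodMk_nhds hslim, ?_⟩
        have hev : ∀ᶠ k in atTop,
            max (diffQuot φ xb (t k) (utl (t k))) ((r:ℝ):EReal) < ⊤ :=
          hmax.eventually_lt_const (EReal.coe_lt_top r)
        filter_upwards [hev] with k hk
        show diffQuot φ xb (t k) (utl (t k)) ≤ ((s k : ℝ) : EReal)
        have hnb : max (diffQuot φ xb (t k) (utl (t k))) ((r:ℝ):EReal) ≠ ⊥ :=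
          (lt_of_lt_of_le (EReal.bot_lt_coe r) (le_max_right _ _)).ne'
        rw [hsdef, EReal.coe_toReal hk.ne hnb]
        exact le_max_left _ _
end
end

section
/- Let X be a normed space and let φ : X → (-∞,∞] be relatively Lipschitz continuous around x̄ ∈ dom φ with respect to its domain, with constant ℓ ≥ 0. Then the subderivative dφ(x̄) : X → [−∞,∞] is a proper function, its domain satisfies dom dφ(x̄) = T_{dom φ}(x̄), and |dφ(x̄)(u)| ≤ ℓ‖u‖ for all u ∈ T_{dom φ}(x̄). -/
open Filter Topology Set Metric Pointwise

noncomputable section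

variable {E : Type*} [NormedAddCommGroup E] [NormedSpace ℝ E]

private lemma seq_mem_tangent {X : Type*} [NormedAddCommGroup X] [NormedSpace ℝ X]
    {Ω : Set X} {xb u : X}
    (h : ∀ ε > (0:ℝ), ∃ t ∈ Ioo (0:ℝ) ε, ∃ w ∈ ball u ε, xb + t • w ∈ Ω) :
    u ∈ contTangent Ω xb := by
  choose t ht w hw hm using fun k : ℕ => h (1/(k+1)) (by positivity)
  refine ⟨t, w, fun k => (ht k).1, ?_, ?_, hm⟩
  · exact squeeze_zero (fun k => (ht k).1.le) (fun k => (ht k).2.le)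
      tendsto_one_div_add_atTop_nhds_zero_nat
  · rw [tendsto_iff_dist_tendsto_zero]
    exact squeeze_zero (fun k => dist_nonneg) (fun k => (mem_ball.1 (hw k)).le)
      tendsto_one_div_add_atTop_nhds_zero_nat

/-- subderivatives of relatively Lipschitzian functions. -/
theorem subderivative_of_relatively_lipschitz
    {X : Type*} [NormedAddCommGroup X] [NormedSpace ℝ X]
    (φ : X → EReal) (xb : X) (ℓ : ℝ)
    (hφbot : ∀ x, φ x ≠ ⊥) (hxb : φ xb ≠ ⊤) (hℓ : 0 ≤ ℓ)
    (hlip : RelLipschitzOn φ {x | φ x ≠ ⊤} xb ℓ) :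
    properFun (subDeriv φ xb) ∧
    {u | subDeriv φ xb u ≠ ⊤} = contTangent {x | φ x ≠ ⊤} xb ∧
    ∀ u ∈ contTangent {x | φ x ≠ ⊤} xb,
      ((-(ℓ * ‖u‖) : ℝ) : EReal) ≤ subDeriv φ xb u ∧
      subDeriv φ xb u ≤ ((ℓ * ‖u‖ : ℝ) : EReal) := by

  obtain ⟨U, hU, hlipU⟩ := hlip
  obtain ⟨r, hr, hball⟩ := Metric.mem_nhds_iff.1 hU
  obtain ⟨c, hc⟩ : ∃ c : ℝ, φ xb = (c : EReal) :=
    ⟨(φ xb).toReal, (EReal.coe_toReal hxb (hφbot xb)).symm⟩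
  have hxbU : xb ∈ U := mem_of_mem_nhds hU
  -- pointwise key estimate
  have key : ∀ t : ℝ, ∀ w : X, 0 < t → t * ‖w‖ < r →
      ((-(ℓ * ‖w‖) : ℝ) : EReal) ≤ diffQuot φ xb t w ∧
      (φ (xb + t • w) ≠ ⊤ → diffQuot φ xb t w ≤ ((ℓ * ‖w‖ : ℝ) : EReal)) := by
    intro t w ht hrw
    have hnorm : ‖xb + t • w - xb‖ = t * ‖w‖ := by
      rw [add_sub_cancel_left, norm_smul, Real.norm_eq_abs, abs_of_pos ht]
    by_cases htop : φ (xb + t • w) = ⊤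
    · constructor
      · rw [diffQuot, htop, hc, EReal.top_sub_coe,
          EReal.coe_mul_top_of_pos (inv_pos.2 ht)]
        exact le_top
      · intro h; exact absurd htop h
    · obtain ⟨a, ha⟩ : ∃ a : ℝ, φ (xb + t • w) = (a : EReal) :=
        ⟨(φ (xb + t • w)).toReal, (EReal.coe_toReal htop (hφbot _)).symm⟩
      have hyU : xb + t • w ∈ U := hball (by rwa [mem_ball_iff_norm, hnorm])
      have hy : xb + t • w ∈ {x | φ x ≠ ⊤} ∩ U := ⟨htop, hyU⟩
      have hx : xb ∈ {x | φ x ≠ ⊤} ∩ U := ⟨hxb, hxbU⟩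
      have h1 : a - c ≤ ℓ * (t * ‖w‖) := by
        have := hlipU _ hy _ hx
        rw [ha, hc, ← EReal.coe_sub, hnorm] at this
        exact EReal.coe_le_coe_iff.1 this
      have h2 : c - a ≤ ℓ * (t * ‖w‖) := by
        have := hlipU _ hx _ hy
        rw [ha, hc, ← EReal.coe_sub, ← norm_sub_rev, hnorm] at this
        exact EReal.coe_le_coe_iff.1 this
      have hq : diffQuot φ xb t w = ((t⁻¹ * (a - c) : ℝ) : EReal) := by
        rw [diffQuot, ha, hc, ← EReal.coe_sub, ← EReal.coe_mul]
      have htne : t ≠ 0 := ne_of_gt ht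
      constructor
      · rw [hq]
        apply EReal.coe_le_coe_iff.2
        have : -(ℓ * (t * ‖w‖)) ≤ a - c := by linarith
        calc -(ℓ * ‖w‖) = t⁻¹ * (-(ℓ * (t * ‖w‖))) := by field_simp
          _ ≤ t⁻¹ * (a - c) := by
              apply mul_le_mul_of_nonneg_left this (le_of_lt (inv_pos.2 ht))
      · intro _
        rw [hq]
        apply EReal.coe_le_coe_iff.2
        calc t⁻¹ * (a - c) ≤ t⁻¹ * (ℓ * (t * ‖w‖)) :=
              mul_le_mul_of_nonneg_left h1 (le_of_lt (inv_pos.2 ht))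
          _ = ℓ * ‖w‖ := by field_simp
  -- lower bound, valid for every u
  have lower : ∀ u : X, ((-(ℓ * ‖u‖) : ℝ) : EReal) ≤ subDeriv φ xb u := by
    intro u
    have hδ : 0 < r / (‖u‖ + 1) := by positivity
    have hev : ∀ᶠ p : ℝ × X in (𝓝[>] (0:ℝ)) ×ˢ 𝓝 u,
        ((-(ℓ * ‖p.2‖) : ℝ) : EReal) ≤ diffQuot φ xb p.1 p.2 := by
      filter_upwards [Filter.prod_mem_prod
        (Ioo_mem_nhdsGT_of_mem ⟨le_refl (0:ℝ), hδ⟩)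
        (Metric.ball_mem_nhds u one_pos)] with p hp
      obtain ⟨⟨ht0, htδ⟩, hpb⟩ := hp
      have hw : ‖p.2‖ < ‖u‖ + 1 := by
        have h := mem_ball_iff_norm.1 hpb
        have h2 : ‖p.2‖ - ‖u‖ ≤ ‖p.2 - u‖ := norm_sub_norm_le _ _
        linarith
      have hlt : p.1 * ‖p.2‖ < r := by
        have h0 : 0 ≤ ‖p.2‖ := norm_nonneg _
        have h1 : p.1 * ‖p.2‖ ≤ p.1 * (‖u‖ + 1) :=
          mul_le_mul_of_nonneg_left hw.le ht0.le
        have h2 : p.1 * (‖u‖ + 1) < (r / (‖u‖ + 1)) * (‖u‖ + 1) :=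
          mul_lt_mul_of_pos_right htδ (by positivity)
        have h3 : (r / (‖u‖ + 1)) * (‖u‖ + 1) = r := by field_simp
        linarith
      exact (key p.1 p.2 ht0 hlt).1
    have hg : Tendsto (fun p : ℝ × X => ((-(ℓ * ‖p.2‖) : ℝ) : EReal))
        ((𝓝[>] (0:ℝ)) ×ˢ 𝓝 u) (𝓝 ((-(ℓ * ‖u‖) : ℝ) : EReal)) := by
      apply EReal.tendsto_coe.2
      have hc : Continuous (fun p : ℝ × X => -(ℓ * ‖p.2‖)) := by continuity
      have := hc.tendsto ((0:ℝ), u)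
      exact this.mono_left (by
        rw [nhds_prod_eq]
        exact Filter.prod_mono nhdsWithin_le_nhds le_rfl)
    calc ((-(ℓ * ‖u‖) : ℝ) : EReal)
        = Filter.liminf (fun p : ℝ × X => ((-(ℓ * ‖p.2‖) : ℝ) : EReal))
            ((𝓝[>] (0:ℝ)) ×ˢ 𝓝 u) := (hg.liminf_eq).symm
      _ ≤ subDeriv φ xb u := Filter.liminf_le_liminf hev
  -- upper bound on the tangent cone
  have upper : ∀ u ∈ contTangent {x | φ x ≠ ⊤} xb,
      subDeriv φ xb u ≤ ((ℓ * ‖u‖ : ℝ) : EReal) := by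
    rintro u ⟨t, v, ht0, htl, hvl, hmem⟩
    have hmap : Tendsto (fun k => (t k, v k)) atTop ((𝓝[>] (0:ℝ)) ×ˢ 𝓝 u) :=
      (tendsto_nhdsWithin_iff.2 ⟨htl, Filter.Eventually.of_forall ht0⟩).prodMk hvl
    have h1 : subDeriv φ xb u ≤
        Filter.liminf (fun k => diffQuot φ xb (t k) (v k)) atTop := by
      rw [subDeriv]
      refine le_trans (Filter.liminf_le_liminf_of_le hmap) ?_
      exact le_of_eq (Filter.liminf_comp _ _ _).symm
    have hev : ∀ᶠ k in atTop,
        diffQuot φ xb (t k) (v k) ≤ ((ℓ * ‖v k‖ : ℝ) : EReal) := by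
      have hT : Tendsto (fun k => t k * ‖v k‖) atTop (𝓝 0) := by
        have := htl.mul hvl.norm
        simpa using this
      filter_upwards [hT.eventually (gt_mem_nhds hr)] with k hk
      exact (key (t k) (v k) (ht0 k) hk).2 (hmem k)
    have h3 : Filter.liminf (fun k => ((ℓ * ‖v k‖ : ℝ) : EReal)) atTop
        = ((ℓ * ‖u‖ : ℝ) : EReal) :=
      Tendsto.liminf_eq (EReal.tendsto_coe.2 (tendsto_const_nhds.mul hvl.norm))
    exact h1.trans ((Filter.liminf_le_liminf hev).trans_eq h3)
  -- outside the tangent cone the subderivative is +∞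
  have htop : ∀ u : X, u ∉ contTangent {x | φ x ≠ ⊤} xb → subDeriv φ xb u = ⊤ := by
    intro u hu
    have hex : ∃ ε > (0:ℝ), ∀ τ ∈ Ioo (0:ℝ) ε, ∀ w ∈ ball u ε, φ (xb + τ • w) = ⊤ := by
      by_contra h
      push_neg at h
      refine hu (seq_mem_tangent (fun ε hε => ?_))
      obtain ⟨τ, hτ, w, hw, hne⟩ := h ε hε
      exact ⟨τ, hτ, w, hw, hne⟩
    obtain ⟨ε, hε, hall⟩ := hex
    refine top_le_iff.1 (Filter.le_liminf_of_le (by isBoundedDefault) ?_)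
    filter_upwards [Filter.prod_mem_prod
      (Ioo_mem_nhdsGT_of_mem ⟨le_refl (0:ℝ), hε⟩)
      (Metric.ball_mem_nhds u hε)] with p hp
    rw [diffQuot, hall p.1 hp.1 p.2 hp.2, hc, EReal.top_sub_coe,
      EReal.coe_mul_top_of_pos (inv_pos.2 hp.1.1)]
  have h0mem : (0:X) ∈ contTangent {x | φ x ≠ ⊤} xb := by
    refine ⟨fun k => 1/(k+1), fun _ => (0:X), fun k => by positivity,
      tendsto_one_div_add_atTop_nhds_zero_nat, tendsto_const_nhds, fun k => ?_⟩
    simpa [smul_zero] using hxb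
  refine ⟨⟨?_, ⟨0, ?_⟩⟩, ?_, fun u hu => ⟨lower u, upper u hu⟩⟩
  · intro u h
    have := lower u
    rw [h, le_bot_iff] at this
    exact EReal.coe_ne_bot _ this
  · exact ne_top_of_le_ne_top (EReal.coe_ne_top _) (upper 0 h0mem)
  · ext u
    constructor
    · intro h
      by_contra hn
      exact h (htop u hn)
    · intro h
      exact ne_top_of_le_ne_top (EReal.coe_ne_top _) (upper u h)
end
end

section
/- Let X and Y be normed spaces, let f : X → Y be Fréchet differentiable at x̄ ∈ X, and let θ : Y → (-∞,∞] be relatively Lipschitz continuous around ȳ := f(x̄) with respect to its domain. If θ is epi-differentiable at ȳ and the Abadie qualification condition holds at x̄ for φ := θ∘f, then the subderivative chain rule d(θ∘f)(x̄)(u) = dθ(ȳ)(∇f(x̄)u) holds for all u ∈ X. -/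
open Filter Topology Set Metric Pointwise

noncomputable section

variable {E : Type*} [NormedAddCommGroup E] [NormedSpace ℝ E]

/-- Hadamard-type convergence of difference quotients from Fréchet differentiability. -/
lemma hadamard_tendsto_aux {X Y : Type*} [NormedAddCommGroup X] [NormedSpace ℝ X]
    [NormedAddCommGroup Y] [NormedSpace ℝ Y]
    {f : X → Y} {f' : X →L[ℝ] Y} {xb : X} (hf' : HasFDerivAt f f' xb) (u : X) :
    Tendsto (fun p : ℝ × X => (p.1)⁻¹ • (f (xb + p.1 • p.2) - f xb))
      ((𝓝[>] (0:ℝ)) ×ˢ 𝓝 u) (𝓝 (f' u)) := by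
  have hlo := hasFDerivAt_iff_isLittleO_nhds_zero.mp hf'
  have hsmul : Tendsto (fun p : ℝ × X => p.1 • p.2) ((𝓝[>] (0:ℝ)) ×ˢ 𝓝 u) (𝓝 0) := by
    have := (tendsto_fst.mono_left (by exact prod_mono nhdsWithin_le_nhds le_rfl)).smul
      (tendsto_snd (f := 𝓝[>] (0:ℝ)) (g := 𝓝 u))
    simpa using this
  have hrem : Tendsto (fun p : ℝ × X =>
      (p.1)⁻¹ • (f (xb + p.1 • p.2) - f xb - f' (p.1 • p.2)))
      ((𝓝[>] (0:ℝ)) ×ˢ 𝓝 u) (𝓝 0) := by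
    rw [NormedAddCommGroup.tendsto_nhds_zero]
    intro ε hε
    have hc : (0:ℝ) < ε / (2 * (‖u‖ + 1)) := by positivity
    have h1 := hsmul.eventually (hlo.def hc)
    have h2 : ∀ᶠ p : ℝ × X in (𝓝[>] (0:ℝ)) ×ˢ 𝓝 u, 0 < p.1 :=
      eventually_prod_iff.mpr ⟨fun t => 0 < t, self_mem_nhdsWithin, fun _ => True,
        univ_mem, fun {a} h {b} _ => h⟩
    have h3 : ∀ᶠ p : ℝ × X in (𝓝[>] (0:ℝ)) ×ˢ 𝓝 u, ‖p.2‖ < ‖u‖ + 1 := by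
      have : ∀ᶠ z : X in 𝓝 u, ‖z‖ < ‖u‖ + 1 := by
        have : Tendsto (fun z : X => ‖z‖) (𝓝 u) (𝓝 ‖u‖) := continuous_norm.tendsto u
        exact this.eventually_lt_const (by linarith)
      exact this.prod_inr _
    filter_upwards [h1, h2, h3] with p hp1 hp2 hp3
    have hnorm : ‖(p.1)⁻¹ • (f (xb + p.1 • p.2) - f xb - f' (p.1 • p.2))‖
        = (p.1)⁻¹ * ‖f (xb + p.1 • p.2) - f xb - f' (p.1 • p.2)‖ := by
      rw [norm_smul, Real.norm_eq_abs, abs_of_pos (by positivity)]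
    rw [hnorm]
    have hns : ‖p.1 • p.2‖ = p.1 * ‖p.2‖ := by
      rw [norm_smul, Real.norm_eq_abs, abs_of_pos hp2]
    have : (p.1)⁻¹ * ‖f (xb + p.1 • p.2) - f xb - f' (p.1 • p.2)‖
        ≤ (p.1)⁻¹ * (ε / (2 * (‖u‖ + 1)) * (p.1 * ‖p.2‖)) := by
      apply mul_le_mul_of_nonneg_left _ (by positivity)
      simpa [hns] using hp1
    have hinv : (p.1)⁻¹ * (ε / (2 * (‖u‖ + 1)) * (p.1 * ‖p.2‖))
        = ε / (2 * (‖u‖ + 1)) * ‖p.2‖ := by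
      field_simp
    rw [hinv] at this
    have hub : ε / (2 * (‖u‖ + 1)) * ‖p.2‖ < ε := by
      have h0 : (0:ℝ) < ‖u‖ + 1 := by positivity
      have := mul_lt_mul_of_pos_left hp3 hc
      calc ε / (2 * (‖u‖ + 1)) * ‖p.2‖ < ε / (2 * (‖u‖ + 1)) * (‖u‖ + 1) := this
        _ = ε / 2 := by field_simp
        _ < ε := by linarith
    linarith
  have heq : ∀ᶠ p : ℝ × X in (𝓝[>] (0:ℝ)) ×ˢ 𝓝 u,
      (p.1)⁻¹ • (f (xb + p.1 • p.2) - f xb - f' (p.1 • p.2)) + f' p.2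
      = (p.1)⁻¹ • (f (xb + p.1 • p.2) - f xb) := by
    have h2 : ∀ᶠ p : ℝ × X in (𝓝[>] (0:ℝ)) ×ˢ 𝓝 u, 0 < p.1 :=
      eventually_prod_iff.mpr ⟨fun t => 0 < t, self_mem_nhdsWithin, fun _ => True,
        univ_mem, fun {a} h {b} _ => h⟩
    filter_upwards [h2] with p hp
    have : f' (p.1 • p.2) = p.1 • f' p.2 := by rw [map_smul]
    rw [smul_sub, this, smul_smul, inv_mul_cancel₀ hp.ne', one_smul, smul_sub]
    abel
  have hf'cont : Tendsto (fun p : ℝ × X => f' p.2) ((𝓝[>] (0:ℝ)) ×ˢ 𝓝 u) (𝓝 (f' u)) :=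
    (f'.continuous.tendsto u).comp tendsto_snd
  have := hrem.add hf'cont
  rw [zero_add] at this
  exact this.congr' heq

section Helpers
variable {Y : Type*} [NormedAddCommGroup Y] [NormedSpace ℝ Y]

lemma diffQuot_eq_coe {θ : Y → EReal} {yb : Y} {t : ℝ} {w : Y}
    (h1 : θ (yb + t • w) ≠ ⊤) (h1' : θ (yb + t • w) ≠ ⊥)
    (h2 : θ yb ≠ ⊤) (h2' : θ yb ≠ ⊥) :
    diffQuot θ yb t w
      = ((t⁻¹ * ((θ (yb + t • w)).toReal - (θ yb).toReal) : ℝ) : EReal) := by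
  rw [diffQuot]
  rw [← EReal.coe_toReal h1 h1', ← EReal.coe_toReal h2 h2', ← EReal.coe_sub, ← EReal.coe_mul]
  simp

lemma ne_top_of_diffQuot_le {θ : Y → EReal} {yb : Y}
    (hbot : ∀ y, θ y ≠ ⊥) (htop : θ yb ≠ ⊤)
    {t : ℝ} (ht : 0 < t) {w : Y} {ρ : ℝ}
    (h : diffQuot θ yb t w ≤ (ρ : EReal)) :
    θ (yb + t • w) ≠ ⊤ ∧
      (θ (yb + t • w)).toReal - (θ yb).toReal ≤ t * ρ := by
  have hA : θ (yb + t • w) ≠ ⊤ := by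
    intro hAtop
    rw [diffQuot, hAtop, ← EReal.coe_toReal htop (hbot yb), EReal.top_sub_coe,
      EReal.coe_mul_top_of_pos (by positivity)] at h
    exact (EReal.coe_lt_top ρ).not_ge h
  refine ⟨hA, ?_⟩
  rw [diffQuot_eq_coe hA (hbot _) htop (hbot yb), EReal.coe_le_coe_iff] at h
  have h2 := mul_le_mul_of_nonneg_left h ht.le
  rwa [← mul_assoc, mul_inv_cancel₀ ht.ne', one_mul] at h2

lemma sub_toReal_le_of_ereal_sub_le {a b : EReal} {r : ℝ}
    (ha : a ≠ ⊤) (ha' : a ≠ ⊥) (hb : b ≠ ⊤) (hb' : b ≠ ⊥)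
    (h : a - b ≤ (r : EReal)) : a.toReal - b.toReal ≤ r := by
  rw [← EReal.coe_toReal ha ha', ← EReal.coe_toReal hb hb', ← EReal.coe_sub,
    EReal.coe_le_coe_iff] at h
  exact h

end Helpers

/-- subderivative chain rule under the Abadie qualification condition. -/
theorem subderivative_chain_rule_AQC
    {X Y : Type*} [NormedAddCommGroup X] [NormedSpace ℝ X]
    [NormedAddCommGroup Y] [NormedSpace ℝ Y]
    (f : X → Y) (f' : X →L[ℝ] Y) (θ : Y → EReal) (xb : X)
    (hf' : HasFDerivAt f f' xb)
    (hθbot : ∀ y, θ y ≠ ⊥) (hxb : θ (f xb) ≠ ⊤)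
    (hθlip : RelLipschitzAround θ {y | θ y ≠ ⊤} (f xb))
    (hθepi : epiDiffAt θ (f xb))
    (hAQC : contTangent {x | θ (f x) ≠ ⊤} xb =
      {u : X | f' u ∈ contTangent {y | θ y ≠ ⊤} (f xb)}) :
    ∀ u : X, subDeriv (fun x => θ (f x)) xb u = subDeriv θ (f xb) (f' u) := by
  
  intro u
  -- Easy direction: subDeriv θ (f xb) (f' u) ≤ subDeriv (θ ∘ f) xb u
  have hEvPos : ∀ᶠ p : ℝ × X in (𝓝[>] (0:ℝ)) ×ˢ 𝓝 u, 0 < p.1 :=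
    eventually_prod_iff.mpr ⟨fun t => 0 < t, self_mem_nhdsWithin, fun _ => True,
      univ_mem, fun {a} h {b} _ => h⟩
  have hEasy : subDeriv θ (f xb) (f' u) ≤ subDeriv (fun x => θ (f x)) xb u := by
    set g : ℝ × X → ℝ × Y := fun p => (p.1, (p.1)⁻¹ • (f (xb + p.1 • p.2) - f xb)) with hgdef
    have hgt : Tendsto g ((𝓝[>] (0:ℝ)) ×ˢ 𝓝 u) ((𝓝[>] (0:ℝ)) ×ˢ 𝓝 (f' u)) :=
      Tendsto.prodMk tendsto_fst (hadamard_tendsto_aux hf' u)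
    have h1 : subDeriv θ (f xb) (f' u)
        ≤ liminf (fun p : ℝ × Y => diffQuot θ (f xb) p.1 p.2)
          (map g ((𝓝[>] (0:ℝ)) ×ˢ 𝓝 u)) :=
      liminf_le_liminf_of_le hgt
    rw [← liminf_comp] at h1
    refine h1.trans_eq (liminf_congr ?_)
    filter_upwards [hEvPos] with p hp
    show diffQuot θ (f xb) (g p).1 (g p).2 = diffQuot (fun x => θ (f x)) xb p.1 p.2
    have harg : f xb + p.1 • ((p.1)⁻¹ • (f (xb + p.1 • p.2) - f xb)) = f (xb + p.1 • p.2) := by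
      rw [smul_inv_smul₀ hp.ne']
      abel
    simp only [hgdef, diffQuot]
    rw [harg]
  refine le_antisymm ?_ hEasy
  -- Hard direction
  have hKey : ∀ r : ℝ, subDeriv θ (f xb) (f' u) ≤ (r : EReal) →
      subDeriv (fun x => θ (f x)) xb u ≤ (r : EReal) := by
    intro r hr
    have hinner : (f' u, r) ∈ innerLim (fun t => epiSet (fun w => diffQuot θ (f xb) t w)) := by
      rw [hθepi.2]; exact hr
    -- tangent cone membership for f' u
    have htan : f' u ∈ contTangent {y | θ y ≠ ⊤} (f xb) := by
      have hpos0 : ∀ k : ℕ, (0:ℝ) < 1/((k:ℝ)+1) := fun k => by positivity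
      have hseq0 : Tendsto (fun k : ℕ => 1/((k:ℝ)+1)) atTop (𝓝 0) :=
        tendsto_one_div_add_atTop_nhds_zero_nat
      obtain ⟨w, hw, hwk⟩ := hinner (fun k : ℕ => 1/((k:ℝ)+1)) hpos0 hseq0
      obtain ⟨N, hN⟩ := eventually_atTop.mp hwk
      refine ⟨fun k => 1/(((k+N:ℕ):ℝ)+1), fun k => (w (k+N)).1, fun k => hpos0 _,
        hseq0.comp (tendsto_add_atTop_nat N),
        ((continuous_fst.tendsto _).comp hw).comp (tendsto_add_atTop_nat N), ?_⟩
      intro k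
      have h1 := hN (k+N) (Nat.le_add_left N k)
      exact (ne_top_of_diffQuot_le hθbot hxb (hpos0 (k+N)) h1).1
    have hu_tan : u ∈ contTangent {x | θ (f x) ≠ ⊤} xb := by rw [hAQC]; exact htan
    obtain ⟨t, v, htpos, ht0, hv, hmem⟩ := hu_tan
    obtain ⟨w, hw, hwk⟩ := hinner t htpos ht0
    obtain ⟨ℓ, hℓ, U, hU, hlip⟩ := hθlip
    have hxconv : Tendsto (fun k => xb + t k • v k) atTop (𝓝 xb) := by
      have h : Tendsto (fun k => t k • v k) atTop (𝓝 ((0:ℝ) • u)) := ht0.smul hv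
      rw [zero_smul] at h
      simpa using tendsto_const_nhds.add h
    have hyconv : Tendsto (fun k => f (xb + t k • v k)) atTop (𝓝 (f xb)) :=
      hf'.continuousAt.tendsto.comp hxconv
    have hw1 : Tendsto (fun k => (w k).1) atTop (𝓝 (f' u)) := (continuous_fst.tendsto _).comp hw
    have hw2 : Tendsto (fun k => (w k).2) atTop (𝓝 r) := (continuous_snd.tendsto _).comp hw
    have hzconv : Tendsto (fun k => f xb + t k • (w k).1) atTop (𝓝 (f xb)) := by
      have h : Tendsto (fun k => t k • (w k).1) atTop (𝓝 ((0:ℝ) • f' u)) := ht0.smul hw1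
      rw [zero_smul] at h
      simpa using tendsto_const_nhds.add h
    have hkprod : Tendsto (fun k => (t k, v k)) atTop ((𝓝[>] (0:ℝ)) ×ˢ 𝓝 u) :=
      Tendsto.prodMk (tendsto_nhdsWithin_of_tendsto_nhds_of_eventually_within _ ht0
        (Eventually.of_forall htpos)) hv
    have hquot : Tendsto (fun k => (t k)⁻¹ • (f (xb + t k • v k) - f xb)) atTop (𝓝 (f' u)) :=
      (hadamard_tendsto_aux hf' u).comp hkprod
    have hbound : ∀ᶠ k in atTop, diffQuot (fun x => θ (f x)) xb (t k) (v k)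
        ≤ (((w k).2 + ℓ * ‖(t k)⁻¹ • (f (xb + t k • v k) - f xb) - (w k).1‖ : ℝ) : EReal) := by
      filter_upwards [hwk, hyconv.eventually (eventually_mem_set.mpr hU),
        hzconv.eventually (eventually_mem_set.mpr hU)] with k hk1 hk2 hk3
      obtain ⟨hzt, hzabove⟩ := ne_top_of_diffQuot_le hθbot hxb (htpos k) hk1
      have hl := hlip _ ⟨hmem k, hk2⟩ _ ⟨hzt, hk3⟩
      have hlr := sub_toReal_le_of_ereal_sub_le (hmem k) (hθbot _) hzt (hθbot _) hl
      have hnorm : ‖f (xb + t k • v k) - (f xb + t k • (w k).1)‖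
          = t k * ‖(t k)⁻¹ • (f (xb + t k • v k) - f xb) - (w k).1‖ := by
        rw [← norm_smul_of_nonneg (htpos k).le, smul_sub, smul_inv_smul₀ (htpos k).ne']
        congr 1
        abel
      set a := (θ (f (xb + t k • v k))).toReal with ha
      set b := (θ (f xb + t k • (w k).1)).toReal with hb
      set c := (θ (f xb)).toReal with hc
      set Nk := ‖(t k)⁻¹ • (f (xb + t k • v k) - f xb) - (w k).1‖ with hNk
      rw [hnorm] at hlr
      -- hlr : a - b ≤ ℓ * (t k * Nk), hzabove : b - c ≤ t k * (w k).2
      have hsum : a - c ≤ t k * ((w k).2 + ℓ * Nk) := by nlinarith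
      have hfin : (t k)⁻¹ * (a - c) ≤ (w k).2 + ℓ * Nk := by
        have h2 := mul_le_mul_of_nonneg_left hsum (inv_nonneg.mpr (htpos k).le)
        rwa [← mul_assoc, inv_mul_cancel₀ (htpos k).ne', one_mul] at h2
      have heq := diffQuot_eq_coe (θ := fun x => θ (f x)) (yb := xb) (t := t k) (w := v k)
        (hmem k) (hθbot _) hxb (hθbot _)
      rw [heq]
      exact_mod_cast hfin
    have hRHS : Tendsto (fun k =>
        (((w k).2 + ℓ * ‖(t k)⁻¹ • (f (xb + t k • v k) - f xb) - (w k).1‖ : ℝ) : EReal))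
        atTop (𝓝 (r : EReal)) := by
      rw [EReal.tendsto_coe]
      have hnt : Tendsto (fun k => ‖(t k)⁻¹ • (f (xb + t k • v k) - f xb) - (w k).1‖)
          atTop (𝓝 0) := by
        have h := hquot.sub hw1
        rw [sub_self] at h
        simpa [Function.comp_def] using (continuous_norm.tendsto (0:Y)).comp h
      have h := hw2.add (hnt.const_mul ℓ)
      simpa using h
    calc subDeriv (fun x => θ (f x)) xb u
        ≤ liminf (fun p : ℝ × X => diffQuot (fun x => θ (f x)) xb p.1 p.2)
          (map (fun k => (t k, v k)) atTop) := liminf_le_liminf_of_le hkprod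
      _ = liminf (fun k => diffQuot (fun x => θ (f x)) xb (t k) (v k)) atTop :=
        (liminf_comp _ _ _).symm
      _ ≤ liminf (fun k =>
          (((w k).2 + ℓ * ‖(t k)⁻¹ • (f (xb + t k • v k) - f xb) - (w k).1‖ : ℝ) : EReal))
          atTop := liminf_le_liminf hbound
      _ = (r : EReal) := hRHS.liminf_eq
  by_contra hcon
  push_neg at hcon
  obtain ⟨r, hr1, hr2⟩ := EReal.exists_between_coe_real hcon
  exact absurd (hKey r hr1.le) (not_le.mpr hr2)
end
end

section
/- Let X be a normed space, let φ, ψ : X → (-∞,∞] with x̄ ∈ dom φ ∩ dom ψ, and assume both φ and ψ are relatively Lipschitz continuous around x̄ with respect to their domains and are epi-differentiable at x̄. Suppose that either (i) the tangential qualification condition T_{dom φ ∩ dom ψ}(x̄) = T_{dom φ}(x̄) ∩ T_{dom ψ}(x̄) holds, or (ii) there exist κ > 0 and a neighborhood U of x̄ such that dist(x; dom φ ∩ dom ψ) ≤ κ(dist(x; dom φ) + dist(x; dom ψ)) for all x ∈ U. Then d(φ+ψ)(x̄)(u) = dφ(x̄)(u) + dψ(x̄)(u) for all u ∈ X; furthermore,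 in case (ii) the sum φ+ψ is epi-differentiable at x̄. -/
open Filter Topology Set Metric Pointwise

noncomputable section

variable {E : Type*} [NormedAddCommGroup E] [NormedSpace ℝ E]

set_option linter.unusedSectionVars false
set_option maxHeartbeats 2000000

namespace SumRuleAux

variable {X : Type*} [NormedAddCommGroup X] [NormedSpace ℝ X]

lemma oneDivPos (k : ℕ) : 0 < 1 / ((k : ℝ) + 1) := by positivity

lemma oneDivTendsto : Tendsto (fun k : ℕ => 1 / ((k : ℝ) + 1)) atTop (𝓝 0) :=
  tendsto_one_div_add_atTop_nhds_zero_nat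

lemma tendsto_of_norm_sub_le {v : ℕ → X} {u : X} {δ : ℕ → ℝ}
    (hδ : Tendsto δ atTop (𝓝 0)) (h : ∀ᶠ k in atTop, ‖v k - u‖ ≤ δ k) :
    Tendsto v atTop (𝓝 u) := by
  rw [tendsto_iff_norm_sub_tendsto_zero]
  exact squeeze_zero' (Eventually.of_forall fun k => norm_nonneg _) h hδ

lemma liminf_le_seq {α : Type*} {F : Filter α} (u : α → EReal) {p : ℕ → α}
    (hp : Tendsto p atTop F) : F.liminf u ≤ atTop.liminf (fun k => u (p k)) := by
  calc F.liminf u ≤ (Filter.map p atTop).liminf u := Filter.liminf_le_liminf_of_le hp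
    _ = atTop.liminf (fun k => u (p k)) := by
        unfold Filter.liminf
        rw [Filter.map_map]
        rfl

lemma exists_lt_of_liminf_le {α : Type*} {F : Filter α} {u : α → EReal} {r : EReal}
    (h : F.liminf u ≤ r) {S : Set α} (hS : S ∈ F) {y : EReal} (hy : r < y) :
    ∃ p ∈ S, u p < y := by
  by_contra hcon
  push_neg at hcon
  have hle : y ≤ F.liminf u :=
    Filter.le_liminf_of_le (by isBoundedDefault) (Filter.eventually_of_mem hS hcon)
  exact absurd (hle.trans h) (not_le.mpr hy)

lemma exists_seq_of_liminf_le {u : X} {f : ℝ × X → EReal} {r : ℝ}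
    (h : Filter.liminf f ((𝓝[>] (0:ℝ)) ×ˢ 𝓝 u) ≤ (r : EReal)) :
    ∃ t : ℕ → ℝ, ∃ v : ℕ → X, (∀ k, 0 < t k) ∧ Tendsto t atTop (𝓝 0) ∧
      Tendsto v atTop (𝓝 u) ∧ ∀ k : ℕ, f (t k, v k) < ((r + 1 / ((k:ℝ)+1) : ℝ) : EReal) := by
  have key : ∀ k : ℕ, ∃ p : ℝ × X, p ∈ (Ioo (0:ℝ) (1/((k:ℝ)+1))) ×ˢ ball u (1/((k:ℝ)+1)) ∧
      f p < ((r + 1/((k:ℝ)+1) : ℝ) : EReal) := by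
    intro k
    have hS : (Ioo (0:ℝ) (1/((k:ℝ)+1))) ×ˢ ball u (1/((k:ℝ)+1)) ∈ (𝓝[>] (0:ℝ)) ×ˢ 𝓝 u :=
      Filter.prod_mem_prod (Ioo_mem_nhdsGT_of_mem ⟨le_refl _, oneDivPos k⟩)
        (ball_mem_nhds _ (oneDivPos k))
    have hy : (r : EReal) < ((r + 1/((k:ℝ)+1) : ℝ) : EReal) := by
      exact_mod_cast (by linarith [oneDivPos k] : r < r + 1/((k:ℝ)+1))
    exact exists_lt_of_liminf_le h hS hy
  choose p hp hfp using key
  refine ⟨fun k => (p k).1, fun k => (p k).2, fun k => (hp k).1.1, ?_, ?_,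
    fun k => by simpa using hfp k⟩
  · exact squeeze_zero' (Eventually.of_forall fun k => ((hp k).1.1).le)
      (Eventually.of_forall fun k => ((hp k).1.2).le) oneDivTendsto
  · refine tendsto_of_norm_sub_le oneDivTendsto (Eventually.of_forall fun k => ?_)
    have := mem_ball.mp (hp k).2
    rw [dist_eq_norm] at this
    exact this.le

lemma ereal_add_ne_bot {x y : EReal} (hx : x ≠ ⊥) (hy : y ≠ ⊥) : x + y ≠ ⊥ := by
  intro h
  rcases EReal.add_eq_bot_iff.mp h with h' | h' <;> [exact hx h'; exact hy h']

variable {φ ψ : X → EReal} {xb : X}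

lemma dq_mem (hbot : ∀ x, φ x ≠ ⊥) (hxb : φ xb ≠ ⊤) {t : ℝ} (ht : 0 < t) {v : X}
    (hv : φ (xb + t • v) ≠ ⊤) :
    diffQuot φ xb t v = ((t⁻¹ * ((φ (xb + t • v)).toReal - (φ xb).toReal) : ℝ) : EReal) := by
  unfold diffQuot
  rw [← EReal.coe_toReal hv (hbot _), ← EReal.coe_toReal hxb (hbot _), ← EReal.coe_sub,
    ← EReal.coe_mul]
  simp

lemma dq_top (hbot : ∀ x, φ x ≠ ⊥) (hxb : φ xb ≠ ⊤) {t : ℝ} (ht : 0 < t) {v : X}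
    (hv : φ (xb + t • v) = ⊤) : diffQuot φ xb t v = ⊤ := by
  unfold diffQuot
  rw [hv, ← EReal.coe_toReal hxb (hbot _), EReal.top_sub_coe,
    EReal.coe_mul_top_of_pos (inv_pos.mpr ht)]

lemma mem_of_dq_ne_top (hbot : ∀ x, φ x ≠ ⊥) (hxb : φ xb ≠ ⊤) {t : ℝ} (ht : 0 < t) {v : X}
    (h : diffQuot φ xb t v ≠ ⊤) : φ (xb + t • v) ≠ ⊤ :=
  fun hv => h (dq_top hbot hxb ht hv)

lemma dq_ne_bot (hbot : ∀ x, φ x ≠ ⊥) (hxb : φ xb ≠ ⊤) {t : ℝ} (ht : 0 < t) (v : X) :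
    diffQuot φ xb t v ≠ ⊥ := by
  by_cases hv : φ (xb + t • v) = ⊤
  · rw [dq_top hbot hxb ht hv]; simp
  · rw [dq_mem hbot hxb ht hv]; exact EReal.coe_ne_bot _

lemma HLreal (hbot : ∀ x, φ x ≠ ⊥) {ℓ : ℝ} {U : Set X}
    (HL : ∀ y ∈ {x | φ x ≠ ⊤} ∩ U, ∀ z ∈ {x | φ x ≠ ⊤} ∩ U,
      φ y - φ z ≤ ((ℓ * ‖y - z‖ : ℝ) : EReal))
    {y z : X} (hy : φ y ≠ ⊤) (hyU : y ∈ U) (hz : φ z ≠ ⊤) (hzU : z ∈ U) :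
    (φ y).toReal - (φ z).toReal ≤ ℓ * ‖y - z‖ := by
  have h := HL y ⟨hy, hyU⟩ z ⟨hz, hzU⟩
  rw [← EReal.coe_toReal hy (hbot y), ← EReal.coe_toReal hz (hbot z), ← EReal.coe_sub,
    EReal.coe_le_coe_iff] at h
  exact h

lemma dq_transfer (hbot : ∀ x, φ x ≠ ⊥) (hxb : φ xb ≠ ⊤) {ℓ : ℝ} (hℓ : 0 ≤ ℓ) {U : Set X}
    (HL : ∀ y ∈ {x | φ x ≠ ⊤} ∩ U, ∀ z ∈ {x | φ x ≠ ⊤} ∩ U,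
      φ y - φ z ≤ ((ℓ * ‖y - z‖ : ℝ) : EReal))
    {t : ℝ} (ht : 0 < t) {v w : X} {c : ℝ}
    (hv : φ (xb + t • v) ≠ ⊤) (hvU : xb + t • v ∈ U) (hwU : xb + t • w ∈ U)
    (hw : diffQuot φ xb t w ≤ (c : EReal)) :
    diffQuot φ xb t v ≤ ((c + ℓ * ‖v - w‖ : ℝ) : EReal) := by
  have hwT : φ (xb + t • w) ≠ ⊤ := by
    intro h; rw [dq_top hbot hxb ht h] at hw; exact absurd hw (by simp)
  rw [dq_mem hbot hxb ht hv, EReal.coe_le_coe_iff]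
  rw [dq_mem hbot hxb ht hwT, EReal.coe_le_coe_iff] at hw
  have hlip := HLreal hbot HL hv hvU hwT hwU
  have hnorm : ‖(xb + t • v) - (xb + t • w)‖ = t * ‖v - w‖ := by
    rw [show (xb + t • v) - (xb + t • w) = t • (v - w) by module, norm_smul,
      Real.norm_eq_abs, abs_of_pos ht]
  rw [hnorm] at hlip
  have hinv : 0 < t⁻¹ := inv_pos.mpr ht
  have h1 : t⁻¹ * ((φ (xb + t • v)).toReal - (φ xb).toReal)
      = t⁻¹ * ((φ (xb + t • v)).toReal - (φ (xb + t • w)).toReal)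
        + t⁻¹ * ((φ (xb + t • w)).toReal - (φ xb).toReal) := by ring
  rw [h1]
  have h2 : t⁻¹ * ((φ (xb + t • v)).toReal - (φ (xb + t • w)).toReal) ≤ ℓ * ‖v - w‖ := by
    calc t⁻¹ * ((φ (xb + t • v)).toReal - (φ (xb + t • w)).toReal)
        ≤ t⁻¹ * (ℓ * (t * ‖v - w‖)) := mul_le_mul_of_nonneg_left hlip hinv.le
      _ = ℓ * ‖v - w‖ := by field_simp
  linarith

end SumRuleAux
namespace SumRuleAux

variable {X : Type*} [NormedAddCommGroup X] [NormedSpace ℝ X]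
variable {φ ψ : X → EReal} {xb : X}

lemma subDeriv_ne_bot (hbot : ∀ x, φ x ≠ ⊥) (hxb : φ xb ≠ ⊤)
    (hlip : RelLipschitzAround φ {x | φ x ≠ ⊤} xb) (u : X) : subDeriv φ xb u ≠ ⊥ := by
  obtain ⟨ℓ, hℓ, U, hU, HL⟩ := hlip
  obtain ⟨ρ, hρ, hball⟩ := Metric.mem_nhds_iff.mp hU
  have hev : ∀ᶠ p : ℝ × X in (𝓝[>] (0:ℝ)) ×ˢ 𝓝 u,
      ((-(ℓ * (‖u‖ + 1)) : ℝ) : EReal) ≤ diffQuot φ xb p.1 p.2 := by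
    have hδ : 0 < ρ / (‖u‖ + 1) := by positivity
    filter_upwards [Filter.prod_mem_prod (Ioo_mem_nhdsGT_of_mem ⟨le_refl _, hδ⟩)
      (ball_mem_nhds u one_pos)] with p hp
    obtain ⟨⟨ht0, htδ⟩, hpv⟩ := hp
    have hvn : ‖p.2‖ < ‖u‖ + 1 := by
      have h1 := mem_ball.mp hpv
      rw [dist_eq_norm] at h1
      have h2 := norm_sub_norm_le p.2 u
      linarith
    have htv : p.1 * ‖p.2‖ < ρ := by
      have h3 : p.1 * ‖p.2‖ ≤ p.1 * (‖u‖ + 1) := by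
        apply mul_le_mul_of_nonneg_left hvn.le ht0.le
      have h4 : p.1 * (‖u‖ + 1) < (ρ / (‖u‖ + 1)) * (‖u‖ + 1) := by
        apply mul_lt_mul_of_pos_right htδ (by positivity)
      have h5 : (ρ / (‖u‖ + 1)) * (‖u‖ + 1) = ρ := by field_simp
      linarith
    have hmem : xb + p.1 • p.2 ∈ U := by
      apply hball
      rw [mem_ball, dist_eq_norm, add_sub_cancel_left, norm_smul, Real.norm_eq_abs,
        abs_of_pos ht0]
      exact htv
    by_cases hv2 : φ (xb + p.1 • p.2) = ⊤
    · rw [dq_top hbot hxb ht0 hv2]; exact le_top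
    · rw [dq_mem hbot hxb ht0 hv2, EReal.coe_le_coe_iff]
      have hlip := HLreal hbot HL hxb (hball (mem_ball_self hρ)) hv2 hmem
      have hnorm : ‖xb - (xb + p.1 • p.2)‖ = p.1 * ‖p.2‖ := by
        rw [norm_sub_rev, add_sub_cancel_left, norm_smul, Real.norm_eq_abs, abs_of_pos ht0]
      rw [hnorm] at hlip
      have hinv : 0 < p.1⁻¹ := inv_pos.mpr ht0
      have key : p.1⁻¹ * ((φ xb).toReal - (φ (xb + p.1 • p.2)).toReal)
          ≤ p.1⁻¹ * (ℓ * (p.1 * ‖p.2‖)) := mul_le_mul_of_nonneg_left hlip hinv.le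
      have e1 : p.1⁻¹ * (ℓ * (p.1 * ‖p.2‖)) = ℓ * ‖p.2‖ := by field_simp
      have e2 : ℓ * ‖p.2‖ ≤ ℓ * (‖u‖ + 1) := mul_le_mul_of_nonneg_left hvn.le hℓ
      have e3 : p.1⁻¹ * ((φ (xb + p.1 • p.2)).toReal - (φ xb).toReal)
          = -(p.1⁻¹ * ((φ xb).toReal - (φ (xb + p.1 • p.2)).toReal)) := by ring
      rw [e3]
      linarith
  intro hb
  have h2 : ((-(ℓ * (‖u‖ + 1)) : ℝ) : EReal) ≤ subDeriv φ xb u :=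
    Filter.le_liminf_of_le (by isBoundedDefault) hev
  rw [hb] at h2
  exact absurd h2 (not_le.mpr (EReal.bot_lt_coe _))

lemma approx_seq (hbot : ∀ x, φ x ≠ ⊥) (hepi : epiDiffAt φ xb) {u : X}
    (hne : subDeriv φ xb u ≠ ⊤) (hnb : subDeriv φ xb u ≠ ⊥)
    {t : ℕ → ℝ} (ht0 : ∀ k, 0 < t k) (htl : Tendsto t atTop (𝓝 0)) :
    ∃ w : ℕ → X, ∃ ρ : ℕ → ℝ, Tendsto w atTop (𝓝 u) ∧
      Tendsto ρ atTop (𝓝 ((subDeriv φ xb u).toReal)) ∧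
      ∀ᶠ k in atTop, diffQuot φ xb (t k) (w k) ≤ ((ρ k : ℝ) : EReal) := by
  have hmem : (u, (subDeriv φ xb u).toReal) ∈ epiSet (subDeriv φ xb) := by
    rw [epiSet, mem_setOf_eq, EReal.coe_toReal hne hnb]
  rw [← hepi.2] at hmem
  obtain ⟨w, hwt, hwm⟩ := hmem t ht0 htl
  refine ⟨fun k => (w k).1, fun k => (w k).2, ?_, ?_, hwm.mono fun k hk => hk⟩
  · exact (continuous_fst.tendsto _).comp hwt
  · exact (continuous_snd.tendsto _).comp hwt

lemma dq_add (hφb : ∀ x, φ x ≠ ⊥) (hψb : ∀ x, ψ x ≠ ⊥) (hφxb : φ xb ≠ ⊤) (hψxb : ψ xb ≠ ⊤)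
    {t : ℝ} (ht : 0 < t) (v : X) :
    diffQuot (fun x => φ x + ψ x) xb t v = diffQuot φ xb t v + diffQuot ψ xb t v := by
  have hσb : ∀ x, (fun x => φ x + ψ x) x ≠ ⊥ := fun x => ereal_add_ne_bot (hφb x) (hψb x)
  have hσxb : (fun x => φ x + ψ x) xb ≠ ⊤ := by
    show φ xb + ψ xb ≠ ⊤
    rw [← EReal.coe_toReal hφxb (hφb _), ← EReal.coe_toReal hψxb (hψb _), ← EReal.coe_add]
    exact EReal.coe_ne_top _
  by_cases hφv : φ (xb + t • v) = ⊤
  · have hσv : (fun x => φ x + ψ x) (xb + t • v) = ⊤ := by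
      show φ (xb + t • v) + ψ (xb + t • v) = ⊤
      rw [hφv, EReal.top_add_of_ne_bot (hψb _)]
    rw [dq_top hσb hσxb ht hσv, dq_top hφb hφxb ht hφv,
      EReal.top_add_of_ne_bot (dq_ne_bot hψb hψxb ht v)]
  by_cases hψv : ψ (xb + t • v) = ⊤
  · have hσv : (fun x => φ x + ψ x) (xb + t • v) = ⊤ := by
      show φ (xb + t • v) + ψ (xb + t • v) = ⊤
      rw [hψv, EReal.add_top_of_ne_bot (hφb _)]
    rw [dq_top hσb hσxb ht hσv, dq_top hψb hψxb ht hψv,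
      EReal.add_top_of_ne_bot (dq_ne_bot hφb hφxb ht v)]
  · have hσv : (fun x => φ x + ψ x) (xb + t • v) ≠ ⊤ := by
      show φ (xb + t • v) + ψ (xb + t • v) ≠ ⊤
      rw [← EReal.coe_toReal hφv (hφb _), ← EReal.coe_toReal hψv (hψb _), ← EReal.coe_add]
      exact EReal.coe_ne_top _
    rw [dq_mem hσb hσxb ht hσv, dq_mem hφb hφxb ht hφv, dq_mem hψb hψxb ht hψv,
      ← EReal.coe_add, EReal.coe_eq_coe_iff]
    show t⁻¹ * ((φ (xb + t • v) + ψ (xb + t • v)).toReal - (φ xb + ψ xb).toReal) = _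
    rw [EReal.toReal_add hφv (hφb _) hψv (hψb _), EReal.toReal_add hφxb (hφb _) hψxb (hψb _)]
    ring

lemma eventually_pos_fst {u : X} : ∀ᶠ p : ℝ × X in (𝓝[>] (0:ℝ)) ×ˢ 𝓝 u, 0 < p.1 := by
  filter_upwards [Filter.prod_mem_prod self_mem_nhdsWithin univ_mem] with p hp
  exact hp.1

lemma subDeriv_add_ge (hφb : ∀ x, φ x ≠ ⊥) (hψb : ∀ x, ψ x ≠ ⊥)
    (hφxb : φ xb ≠ ⊤) (hψxb : ψ xb ≠ ⊤) (u : X) :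
    subDeriv φ xb u + subDeriv ψ xb u ≤ subDeriv (fun x => φ x + ψ x) xb u := by
  unfold subDeriv
  have hcong : Filter.liminf (fun p : ℝ × X => diffQuot (fun x => φ x + ψ x) xb p.1 p.2)
      ((𝓝[>] (0:ℝ)) ×ˢ 𝓝 u)
      = Filter.liminf ((fun p : ℝ × X => diffQuot φ xb p.1 p.2)
          + fun p : ℝ × X => diffQuot ψ xb p.1 p.2) ((𝓝[>] (0:ℝ)) ×ˢ 𝓝 u) := by
    refine Filter.liminf_congr ?_
    filter_upwards [eventually_pos_fst] with p hp
    exact dq_add hφb hψb hφxb hψxb hp p.2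
  rw [hcong]
  exact EReal.le_liminf_add

lemma mem_tangent_of_ne_top (hbot : ∀ x, φ x ≠ ⊥) (hxb : φ xb ≠ ⊤) {u : X}
    (hnb : subDeriv φ xb u ≠ ⊥) (hne : subDeriv φ xb u ≠ ⊤) :
    u ∈ contTangent {x | φ x ≠ ⊤} xb := by
  have h : Filter.liminf (fun p : ℝ × X => diffQuot φ xb p.1 p.2) ((𝓝[>] (0:ℝ)) ×ˢ 𝓝 u)
      ≤ (((subDeriv φ xb u).toReal : ℝ) : EReal) := by
    rw [EReal.coe_toReal hne hnb]; exact le_refl _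
  obtain ⟨t, v, ht0, htl, hvl, hlt⟩ := exists_seq_of_liminf_le h
  refine ⟨t, v, ht0, htl, hvl, fun k => ?_⟩
  show φ (xb + t k • v k) ≠ ⊤
  exact mem_of_dq_ne_top hbot hxb (ht0 k) (ne_top_of_le_ne_top (EReal.coe_ne_top _) (hlt k).le)

lemma eventually_mem_of_tendsto {t : ℕ → ℝ} (htl : Tendsto t atTop (𝓝 0)) {v : ℕ → X} {w : X}
    (hvl : Tendsto v atTop (𝓝 w)) {U : Set X} (hU : U ∈ 𝓝 xb) :
    ∀ᶠ k in atTop, xb + t k • v k ∈ U := by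
  have h : Tendsto (fun k => xb + t k • v k) atTop (𝓝 xb) := by
    have h1 : Tendsto (fun k => t k • v k) atTop (𝓝 ((0:ℝ) • w)) := htl.smul hvl
    rw [zero_smul] at h1
    simpa using (tendsto_const_nhds (x := xb) (f := (atTop : Filter ℕ))).add h1
  exact h.eventually_mem hU

end SumRuleAux
namespace SumRuleAux

variable {X : Type*} [NormedAddCommGroup X] [NormedSpace ℝ X]
variable {φ ψ : X → EReal} {xb : X}

lemma core_bound (hφb : ∀ x, φ x ≠ ⊥) (hψb : ∀ x, ψ x ≠ ⊥)
    (hφxb : φ xb ≠ ⊤) (hψxb : ψ xb ≠ ⊤)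
    (hφlip : RelLipschitzAround φ {x | φ x ≠ ⊤} xb)
    (hψlip : RelLipschitzAround ψ {x | ψ x ≠ ⊤} xb)
    (hφepi : epiDiffAt φ xb) (hψepi : epiDiffAt ψ xb) {u : X}
    (haφ : subDeriv φ xb u ≠ ⊤) (haψ : subDeriv ψ xb u ≠ ⊤)
    {t : ℕ → ℝ} {v : ℕ → X} (ht0 : ∀ k, 0 < t k) (htl : Tendsto t atTop (𝓝 0))
    (hvl : Tendsto v atTop (𝓝 u))
    (hvD : ∀ᶠ k in atTop, φ (xb + t k • v k) ≠ ⊤ ∧ ψ (xb + t k • v k) ≠ ⊤) :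
    ∃ s : ℕ → ℝ,
      Tendsto s atTop (𝓝 ((subDeriv φ xb u).toReal + (subDeriv ψ xb u).toReal)) ∧
      ∀ᶠ k in atTop, diffQuot (fun x => φ x + ψ x) xb (t k) (v k) ≤ ((s k : ℝ) : EReal) := by
  have hφnb := subDeriv_ne_bot hφb hφxb hφlip u
  have hψnb := subDeriv_ne_bot hψb hψxb hψlip u
  obtain ⟨ℓφ, hℓφ, Uφ, hUφ, HLφ⟩ := hφlip
  obtain ⟨ℓψ, hℓψ, Uψ, hUψ, HLψ⟩ := hψlip
  obtain ⟨wφ, ρφ, hwφl, hρφl, hφev⟩ := approx_seq hφb hφepi haφ hφnb ht0 htl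
  obtain ⟨wψ, ρψ, hwψl, hρψl, hψev⟩ := approx_seq hψb hψepi haψ hψnb ht0 htl
  have h1 : Tendsto (fun k => ‖v k - wφ k‖) atTop (𝓝 0) := by
    simpa using (hvl.sub hwφl).norm
  have h2 : Tendsto (fun k => ‖v k - wψ k‖) atTop (𝓝 0) := by
    simpa using (hvl.sub hwψl).norm
  refine ⟨fun k => ρφ k + ℓφ * ‖v k - wφ k‖ + (ρψ k + ℓψ * ‖v k - wψ k‖), ?_, ?_⟩
  · have := (hρφl.add (h1.const_mul ℓφ)).add (hρψl.add (h2.const_mul ℓψ))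
    simpa using this
  · filter_upwards [hφev, hψev, hvD,
      eventually_mem_of_tendsto htl hvl hUφ, eventually_mem_of_tendsto htl hwφl hUφ,
      eventually_mem_of_tendsto htl hvl hUψ, eventually_mem_of_tendsto htl hwψl hUψ]
      with k hφk hψk hDk hv1 hw1 hv2 hw2
    have e1 : diffQuot φ xb (t k) (v k) ≤ ((ρφ k + ℓφ * ‖v k - wφ k‖ : ℝ) : EReal) :=
      dq_transfer hφb hφxb hℓφ HLφ (ht0 k) hDk.1 hv1 hw1 hφk
    have e2 : diffQuot ψ xb (t k) (v k) ≤ ((ρψ k + ℓψ * ‖v k - wψ k‖ : ℝ) : EReal) :=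
      dq_transfer hψb hψxb hℓψ HLψ (ht0 k) hDk.2 hv2 hw2 hψk
    rw [dq_add hφb hψb hφxb hψxb (ht0 k) (v k), EReal.coe_add]
    exact add_le_add e1 e2

lemma qc_seq (hφb : ∀ x, φ x ≠ ⊥) (hψb : ∀ x, ψ x ≠ ⊥)
    (hφxb : φ xb ≠ ⊤) (hψxb : ψ xb ≠ ⊤)
    (hφlip : RelLipschitzAround φ {x | φ x ≠ ⊤} xb)
    (hψlip : RelLipschitzAround ψ {x | ψ x ≠ ⊤} xb)
    (hφepi : epiDiffAt φ xb) (hψepi : epiDiffAt ψ xb)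
    {κ : ℝ} (hκ : 0 < κ) {U : Set X} (hU : U ∈ 𝓝 xb)
    (hQC : ∀ x ∈ U, infDist x ({x | φ x ≠ ⊤} ∩ {x | ψ x ≠ ⊤}) ≤
      κ * (infDist x {x | φ x ≠ ⊤} + infDist x {x | ψ x ≠ ⊤}))
    {u : X} (haφ : subDeriv φ xb u ≠ ⊤) (haψ : subDeriv ψ xb u ≠ ⊤)
    {t : ℕ → ℝ} (ht0 : ∀ k, 0 < t k) (htl : Tendsto t atTop (𝓝 0)) :
    ∃ v : ℕ → X, Tendsto v atTop (𝓝 u) ∧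
      ∀ᶠ k in atTop, φ (xb + t k • v k) ≠ ⊤ ∧ ψ (xb + t k • v k) ≠ ⊤ := by
  have hφnb := subDeriv_ne_bot hφb hφxb hφlip u
  have hψnb := subDeriv_ne_bot hψb hψxb hψlip u
  obtain ⟨wφ, ρφ, hwφl, hρφl, hφev⟩ := approx_seq hφb hφepi haφ hφnb ht0 htl
  obtain ⟨wψ, ρψ, hwψl, hρψl, hψev⟩ := approx_seq hψb hψepi haψ hψnb ht0 htl
  set δ : ℕ → ℝ := fun k => κ * (‖u - wφ k‖ + ‖u - wψ k‖) + 1/((k:ℝ)+1) with hδdef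
  have hδl : Tendsto δ atTop (𝓝 0) := by
    have h1 : Tendsto (fun k => ‖u - wφ k‖) atTop (𝓝 0) := by
      simpa using ((tendsto_const_nhds (x := u)).sub hwφl).norm
    have h2 : Tendsto (fun k => ‖u - wψ k‖) atTop (𝓝 0) := by
      simpa using ((tendsto_const_nhds (x := u)).sub hwψl).norm
    have := ((h1.add h2).const_mul κ).add oneDivTendsto
    simpa [hδdef] using this
  have hev : ∀ᶠ k in atTop, ∃ vv : X,
      (φ (xb + t k • vv) ≠ ⊤ ∧ ψ (xb + t k • vv) ≠ ⊤) ∧ ‖vv - u‖ ≤ δ k := by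
    have hUev : ∀ᶠ k in atTop, xb + t k • u ∈ U :=
      eventually_mem_of_tendsto htl tendsto_const_nhds hU
    filter_upwards [hφev, hψev, hUev] with k hφk hψk hUk
    have hmφ : φ (xb + t k • wφ k) ≠ ⊤ :=
      mem_of_dq_ne_top hφb hφxb (ht0 k) (ne_top_of_le_ne_top (EReal.coe_ne_top _) hφk)
    have hmψ : ψ (xb + t k • wψ k) ≠ ⊤ :=
      mem_of_dq_ne_top hψb hψxb (ht0 k) (ne_top_of_le_ne_top (EReal.coe_ne_top _) hψk)
    have hdφ : infDist (xb + t k • u) {x | φ x ≠ ⊤} ≤ t k * ‖u - wφ k‖ := by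
      calc infDist (xb + t k • u) {x | φ x ≠ ⊤}
          ≤ dist (xb + t k • u) (xb + t k • wφ k) := infDist_le_dist_of_mem hmφ
        _ = t k * ‖u - wφ k‖ := by
            rw [dist_eq_norm, show (xb + t k • u) - (xb + t k • wφ k) = t k • (u - wφ k) by
              module, norm_smul, Real.norm_eq_abs, abs_of_pos (ht0 k)]
    have hdψ : infDist (xb + t k • u) {x | ψ x ≠ ⊤} ≤ t k * ‖u - wψ k‖ := by
      calc infDist (xb + t k • u) {x | ψ x ≠ ⊤}
          ≤ dist (xb + t k • u) (xb + t k • wψ k) := infDist_le_dist_of_mem hmψ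
        _ = t k * ‖u - wψ k‖ := by
            rw [dist_eq_norm, show (xb + t k • u) - (xb + t k • wψ k) = t k • (u - wψ k) by
              module, norm_smul, Real.norm_eq_abs, abs_of_pos (ht0 k)]
    have hlt : infDist (xb + t k • u) ({x | φ x ≠ ⊤} ∩ {x | ψ x ≠ ⊤}) < t k * δ k := by
      have hQ := hQC _ hUk
      have hstep : κ * (infDist (xb + t k • u) {x | φ x ≠ ⊤}
          + infDist (xb + t k • u) {x | ψ x ≠ ⊤})
          ≤ κ * (t k * ‖u - wφ k‖ + t k * ‖u - wψ k‖) :=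
        mul_le_mul_of_nonneg_left (add_le_add hdφ hdψ) hκ.le
      have heq : κ * (t k * ‖u - wφ k‖ + t k * ‖u - wψ k‖)
          = t k * (κ * (‖u - wφ k‖ + ‖u - wψ k‖)) := by ring
      have hlast : t k * (κ * (‖u - wφ k‖ + ‖u - wψ k‖)) < t k * δ k := by
        apply mul_lt_mul_of_pos_left _ (ht0 k)
        rw [hδdef]
        exact lt_add_of_pos_right _ (oneDivPos k)
      linarith
    have hDne : ({x | φ x ≠ ⊤} ∩ {x | ψ x ≠ ⊤} : Set X).Nonempty := ⟨xb, hφxb, hψxb⟩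
    obtain ⟨y, hyD, hy⟩ := (infDist_lt_iff hDne).mp hlt
    refine ⟨(t k)⁻¹ • (y - xb), ?_, ?_⟩
    · have hxy : xb + t k • ((t k)⁻¹ • (y - xb)) = y := by
        rw [smul_inv_smul₀ (ht0 k).ne']
        abel
      rw [hxy]
      exact ⟨hyD.1, hyD.2⟩
    · have e : (t k)⁻¹ • (y - (xb + t k • u)) = (t k)⁻¹ • (y - xb) - u := by
        rw [show y - (xb + t k • u) = (y - xb) - t k • u by abel, smul_sub,
          inv_smul_smul₀ (ht0 k).ne']
      calc ‖(t k)⁻¹ • (y - xb) - u‖ = ‖(t k)⁻¹ • (y - (xb + t k • u))‖ := by rw [e]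
        _ = (t k)⁻¹ * ‖y - (xb + t k • u)‖ := by
            rw [norm_smul, Real.norm_eq_abs, abs_of_pos (inv_pos.mpr (ht0 k))]
        _ ≤ (t k)⁻¹ * (t k * δ k) := by
            apply mul_le_mul_of_nonneg_left _ (inv_pos.mpr (ht0 k)).le
            rw [← dist_eq_norm, dist_comm]
            exact hy.le
        _ = δ k := by rw [← mul_assoc, inv_mul_cancel₀ (ht0 k).ne', one_mul]
  obtain ⟨v, hv⟩ := hev.choice
  exact ⟨v, tendsto_of_norm_sub_le hδl (hv.mono fun k hk => hk.2), hv.mono fun k hk => hk.1⟩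

end SumRuleAux
namespace SumRuleAux

variable {X : Type*} [NormedAddCommGroup X] [NormedSpace ℝ X]
variable {φ ψ : X → EReal} {xb : X}

lemma hard_le (hφb : ∀ x, φ x ≠ ⊥) (hψb : ∀ x, ψ x ≠ ⊥)
    (hφxb : φ xb ≠ ⊤) (hψxb : ψ xb ≠ ⊤)
    (hφlip : RelLipschitzAround φ {x | φ x ≠ ⊤} xb)
    (hψlip : RelLipschitzAround ψ {x | ψ x ≠ ⊤} xb)
    (hφepi : epiDiffAt φ xb) (hψepi : epiDiffAt ψ xb)
    (hQC : contTangent ({x | φ x ≠ ⊤} ∩ {x | ψ x ≠ ⊤}) xb =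
        contTangent {x | φ x ≠ ⊤} xb ∩ contTangent {x | ψ x ≠ ⊤} xb ∨
      ∃ κ : ℝ, 0 < κ ∧ ∃ U ∈ 𝓝 xb, ∀ x ∈ U,
        infDist x ({x | φ x ≠ ⊤} ∩ {x | ψ x ≠ ⊤}) ≤
          κ * (infDist x {x | φ x ≠ ⊤} + infDist x {x | ψ x ≠ ⊤}))
    (u : X) : subDeriv (fun x => φ x + ψ x) xb u ≤ subDeriv φ xb u + subDeriv ψ xb u := by
  have hφnb := subDeriv_ne_bot hφb hφxb hφlip u
  have hψnb := subDeriv_ne_bot hψb hψxb hψlip u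
  by_cases haφ : subDeriv φ xb u = ⊤
  · rw [haφ, EReal.top_add_of_ne_bot hψnb]; exact le_top
  by_cases haψ : subDeriv ψ xb u = ⊤
  · rw [haψ, EReal.add_top_of_ne_bot hφnb]; exact le_top
  obtain ⟨t, v, ht0, htl, hvl, hvD⟩ :
      ∃ t : ℕ → ℝ, ∃ v : ℕ → X, (∀ k, 0 < t k) ∧ Tendsto t atTop (𝓝 0) ∧
        Tendsto v atTop (𝓝 u) ∧
        ∀ᶠ k in atTop, φ (xb + t k • v k) ≠ ⊤ ∧ ψ (xb + t k • v k) ≠ ⊤ := by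
    rcases hQC with hT | ⟨κ, hκ, U, hU, hQC2⟩
    · have huφ := mem_tangent_of_ne_top hφb hφxb hφnb haφ
      have huψ := mem_tangent_of_ne_top hψb hψxb hψnb haψ
      have hmem : u ∈ contTangent ({x | φ x ≠ ⊤} ∩ {x | ψ x ≠ ⊤}) xb := by
        rw [hT]; exact ⟨huφ, huψ⟩
      obtain ⟨t, v, h1, h2, h3, h4⟩ := hmem
      exact ⟨t, v, h1, h2, h3, Eventually.of_forall fun k => ⟨(h4 k).1, (h4 k).2⟩⟩
    · obtain ⟨v, hvl, hvD⟩ := qc_seq hφb hψb hφxb hψxb hφlip hψlip hφepi hψepi hκ hU hQC2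
        haφ haψ oneDivPos oneDivTendsto
      exact ⟨_, v, oneDivPos, oneDivTendsto, hvl, hvD⟩
  obtain ⟨s, hsl, hse⟩ := core_bound hφb hψb hφxb hψxb hφlip hψlip hφepi hψepi haφ haψ
    ht0 htl hvl hvD
  have hp : Tendsto (fun k => (t k, v k)) atTop ((𝓝[>] (0:ℝ)) ×ˢ 𝓝 u) :=
    Tendsto.prodMk (tendsto_nhdsWithin_of_tendsto_nhds_of_eventually_within _ htl
      (Eventually.of_forall fun k => mem_Ioi.mpr (ht0 k))) hvl
  have s1 := liminf_le_seq (fun p : ℝ × X => diffQuot (fun x => φ x + ψ x) xb p.1 p.2) hp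
  have s2 := Filter.liminf_le_liminf hse
  have s3 := (EReal.tendsto_coe.mpr hsl).liminf_eq
  have s4 : (((subDeriv φ xb u).toReal + (subDeriv ψ xb u).toReal : ℝ) : EReal)
      = subDeriv φ xb u + subDeriv ψ xb u := by
    rw [EReal.coe_add, EReal.coe_toReal haφ hφnb, EReal.coe_toReal haψ hψnb]
  rw [← s4, ← s3]
  exact le_trans s1 s2

end SumRuleAux
namespace SumRuleAux

variable {X : Type*} [NormedAddCommGroup X] [NormedSpace ℝ X]
variable {φ ψ : X → EReal} {xb : X}

lemma outer_eq (σ : X → EReal) (xb : X) :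
    outerLim (fun t => epiSet (fun u => diffQuot σ xb t u)) = epiSet (subDeriv σ xb) := by
  ext q
  obtain ⟨u, r⟩ := q
  constructor
  · rintro ⟨t, w, ht0, htl, hwl, hwm⟩
    have hfst : Tendsto (fun k => (w k).1) atTop (𝓝 u) := (continuous_fst.tendsto _).comp hwl
    have hsnd : Tendsto (fun k => (w k).2) atTop (𝓝 r) := (continuous_snd.tendsto _).comp hwl
    have hp : Tendsto (fun k => (t k, (w k).1)) atTop ((𝓝[>] (0:ℝ)) ×ˢ 𝓝 u) :=
      Tendsto.prodMk (tendsto_nhdsWithin_of_tendsto_nhds_of_eventually_within _ htl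
        (Eventually.of_forall fun k => mem_Ioi.mpr (ht0 k))) hfst
    have s1 := liminf_le_seq (fun p : ℝ × X => diffQuot σ xb p.1 p.2) hp
    have s2 : atTop.liminf (fun k => diffQuot σ xb (t k) ((w k).1))
        ≤ atTop.liminf (fun k => (((w k).2 : ℝ) : EReal)) :=
      Filter.liminf_le_liminf (Eventually.of_forall fun k => hwm k)
    have s3 := (EReal.tendsto_coe.mpr hsnd).liminf_eq
    show subDeriv σ xb u ≤ (r : EReal)
    rw [← s3]
    exact le_trans s1 s2
  · intro hr
    have hr' : Filter.liminf (fun p : ℝ × X => diffQuot σ xb p.1 p.2)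
        ((𝓝[>] (0:ℝ)) ×ˢ 𝓝 u) ≤ (r : EReal) := hr
    obtain ⟨t, v, ht0, htl, hvl, hlt⟩ := exists_seq_of_liminf_le hr'
    refine ⟨t, fun k => (v k, r + 1/((k:ℝ)+1)), ht0, htl, ?_, fun k => (hlt k).le⟩
    rw [nhds_prod_eq]
    refine Tendsto.prodMk hvl ?_
    simpa using (tendsto_const_nhds (x := r)).add oneDivTendsto

lemma inner_subset (σ : X → EReal) (xb : X) :
    innerLim (fun t => epiSet (fun u => diffQuot σ xb t u)) ⊆ epiSet (subDeriv σ xb) := by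
  rintro ⟨u, r⟩ h
  obtain ⟨w, hwl, hwm⟩ := h (fun k => 1/((k:ℝ)+1)) oneDivPos oneDivTendsto
  have hfst : Tendsto (fun k => (w k).1) atTop (𝓝 u) := (continuous_fst.tendsto _).comp hwl
  have hsnd : Tendsto (fun k => (w k).2) atTop (𝓝 r) := (continuous_snd.tendsto _).comp hwl
  have hp : Tendsto (fun k : ℕ => ((1/((k:ℝ)+1) : ℝ), (w k).1)) atTop ((𝓝[>] (0:ℝ)) ×ˢ 𝓝 u) :=
    Tendsto.prodMk (tendsto_nhdsWithin_of_tendsto_nhds_of_eventually_within _ oneDivTendsto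
      (Eventually.of_forall fun k => mem_Ioi.mpr (oneDivPos k))) hfst
  have s1 := liminf_le_seq (fun p : ℝ × X => diffQuot σ xb p.1 p.2) hp
  have s2 : atTop.liminf (fun k : ℕ => diffQuot σ xb (1/((k:ℝ)+1)) ((w k).1))
      ≤ atTop.liminf (fun k => (((w k).2 : ℝ) : EReal)) :=
    Filter.liminf_le_liminf (hwm.mono fun k hk => hk)
  have s3 := (EReal.tendsto_coe.mpr hsnd).liminf_eq
  show subDeriv σ xb u ≤ (r : EReal)
  rw [← s3]
  exact le_trans s1 s2

lemma epi_subset_inner (hφb : ∀ x, φ x ≠ ⊥) (hψb : ∀ x, ψ x ≠ ⊥)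
    (hφxb : φ xb ≠ ⊤) (hψxb : ψ xb ≠ ⊤)
    (hφlip : RelLipschitzAround φ {x | φ x ≠ ⊤} xb)
    (hψlip : RelLipschitzAround ψ {x | ψ x ≠ ⊤} xb)
    (hφepi : epiDiffAt φ xb) (hψepi : epiDiffAt ψ xb)
    {κ : ℝ} (hκ : 0 < κ) {U : Set X} (hU : U ∈ 𝓝 xb)
    (hQC : ∀ x ∈ U, infDist x ({x | φ x ≠ ⊤} ∩ {x | ψ x ≠ ⊤}) ≤
      κ * (infDist x {x | φ x ≠ ⊤} + infDist x {x | ψ x ≠ ⊤})) :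
    epiSet (subDeriv (fun x => φ x + ψ x) xb) ⊆
      innerLim (fun t => epiSet (fun u => diffQuot (fun x => φ x + ψ x) xb t u)) := by
  rintro ⟨u, r⟩ hr
  intro t ht0 htl
  have hφnb := subDeriv_ne_bot hφb hφxb hφlip u
  have hψnb := subDeriv_ne_bot hψb hψxb hψlip u
  have hge := subDeriv_add_ge hφb hψb hφxb hψxb u
  have hσr : subDeriv φ xb u + subDeriv ψ xb u ≤ (r : EReal) := hge.trans hr
  have haφ : subDeriv φ xb u ≠ ⊤ := by
    intro h
    rw [h, EReal.top_add_of_ne_bot hψnb] at hσr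
    exact absurd hσr (by simp)
  have haψ : subDeriv ψ xb u ≠ ⊤ := by
    intro h
    rw [h, EReal.add_top_of_ne_bot hφnb] at hσr
    exact absurd hσr (by simp)
  obtain ⟨v, hvl, hvD⟩ := qc_seq hφb hψb hφxb hψxb hφlip hψlip hφepi hψepi hκ hU hQC
    haφ haψ ht0 htl
  obtain ⟨s, hsl, hse⟩ := core_bound hφb hψb hφxb hψxb hφlip hψlip hφepi hψepi haφ haψ
    ht0 htl hvl hvD
  have hab : (subDeriv φ xb u).toReal + (subDeriv ψ xb u).toReal ≤ r := by
    rw [← EReal.coe_toReal haφ hφnb, ← EReal.coe_toReal haψ hψnb, ← EReal.coe_add,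
      EReal.coe_le_coe_iff] at hσr
    exact hσr
  refine ⟨fun k => (v k, s k + (r - ((subDeriv φ xb u).toReal + (subDeriv ψ xb u).toReal))),
    ?_, ?_⟩
  · rw [nhds_prod_eq]
    refine Tendsto.prodMk hvl ?_
    have h' := hsl.add (tendsto_const_nhds
      (x := r - ((subDeriv φ xb u).toReal + (subDeriv ψ xb u).toReal)))
    have he : (subDeriv φ xb u).toReal + (subDeriv ψ xb u).toReal
        + (r - ((subDeriv φ xb u).toReal + (subDeriv ψ xb u).toReal)) = r := by ring
    rwa [he] at h'
  · filter_upwards [hse] with k hk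
    refine hk.trans ?_
    rw [EReal.coe_le_coe_iff]
    show s k ≤ s k + (r - ((subDeriv φ xb u).toReal + (subDeriv ψ xb u).toReal))
    linarith

end SumRuleAux

/-- subderivative sum rule. -/
theorem subderivative_sum_rule
    {X : Type*} [NormedAddCommGroup X] [NormedSpace ℝ X]
    (φ ψ : X → EReal) (xb : X)
    (hφbot : ∀ x, φ x ≠ ⊥) (hψbot : ∀ x, ψ x ≠ ⊥)
    (hxbφ : φ xb ≠ ⊤) (hxbψ : ψ xb ≠ ⊤)
    (hφlip : RelLipschitzAround φ {x | φ x ≠ ⊤} xb)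
    (hψlip : RelLipschitzAround ψ {x | ψ x ≠ ⊤} xb)
    (hφepi : epiDiffAt φ xb) (hψepi : epiDiffAt ψ xb)
    (hQC :
      contTangent ({x | φ x ≠ ⊤} ∩ {x | ψ x ≠ ⊤}) xb =
        contTangent {x | φ x ≠ ⊤} xb ∩ contTangent {x | ψ x ≠ ⊤} xb ∨
      ∃ κ : ℝ, 0 < κ ∧ ∃ U ∈ 𝓝 xb, ∀ x ∈ U,
        infDist x ({x | φ x ≠ ⊤} ∩ {x | ψ x ≠ ⊤}) ≤
          κ * (infDist x {x | φ x ≠ ⊤} + infDist x {x | ψ x ≠ ⊤})) :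
    (∀ u : X, subDeriv (fun x => φ x + ψ x) xb u = subDeriv φ xb u + subDeriv ψ xb u) ∧
    ((∃ κ : ℝ, 0 < κ ∧ ∃ U ∈ 𝓝 xb, ∀ x ∈ U,
        infDist x ({x | φ x ≠ ⊤} ∩ {x | ψ x ≠ ⊤}) ≤
          κ * (infDist x {x | φ x ≠ ⊤} + infDist x {x | ψ x ≠ ⊤})) →
      epiDiffAt (fun x => φ x + ψ x) xb) := by
  constructor
  · intro u
    exact le_antisymm
      (SumRuleAux.hard_le hφbot hψbot hxbφ hxbψ hφlip hψlip hφepi hψepi hQC u)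
      (SumRuleAux.subDeriv_add_ge hφbot hψbot hxbφ hxbψ u)
  · rintro ⟨κ, hκ, U, hU, hQC2⟩
    refine ⟨SumRuleAux.outer_eq _ _, ?_⟩
    exact Set.Subset.antisymm (SumRuleAux.inner_subset _ _)
      (SumRuleAux.epi_subset_inner hφbot hψbot hxbφ hxbψ hφlip hψlip hφepi hψepi hκ hU hQC2)
end
end

section
/- Let X and Y be normed spaces, let f : X → Y be continuously differentiable around x̄, and let θ : Y → (-∞,∞] be locally Lipschitz continuous around ȳ := f(x̄) and Dini–Hadamard regular at ȳ. Then the composition θ∘f is Dini–Hadamard regular at x̄, and the subdifferential chain rule holds as an equality: ∂⁻(θ∘f)(x̄) = ∇f(x̄)*(∂⁻θ(ȳ)), where ∇f(x̄)* : Y* → X* is the adjoint of the derivative. -/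
open Filter Topology Set Metric Pointwise

noncomputable section

variable {E : Type*} [NormedAddCommGroup E] [NormedSpace ℝ E]

section ChainRuleHelpers
set_option linter.unusedSectionVars false

variable {F : Type*} [NormedAddCommGroup F] [NormedSpace ℝ F]

lemma EReal_le_coe_of_forall_add {a : EReal} {b : ℝ}
    (h : ∀ ε : ℝ, 0 < ε → a ≤ ((b + ε : ℝ) : EReal)) : a ≤ (b : EReal) := by
  by_contra hc
  push_neg at hc
  obtain ⟨z, hz1, hz2⟩ := EReal.exists_between_coe_real hc
  have hbz : b < z := by exact_mod_cast hz1
  have h2 := h (z - b) (sub_pos.2 hbz)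
  rw [show b + (z - b) = z by ring] at h2
  exact absurd (lt_of_le_of_lt h2 hz2) (lt_irrefl _)

lemma EReal_coe_le_of_forall_sub {a : EReal} {b : ℝ}
    (h : ∀ ε : ℝ, 0 < ε → ((b - ε : ℝ) : EReal) ≤ a) : (b : EReal) ≤ a := by
  by_contra hc
  push_neg at hc
  obtain ⟨z, hz1, hz2⟩ := EReal.exists_between_coe_real hc
  have hzb : z < b := by exact_mod_cast hz2
  have h2 := h (b - z) (sub_pos.2 hzb)
  rw [show b - (b - z) = z by ring] at h2
  exact absurd (lt_of_lt_of_le hz1 h2) (lt_irrefl _)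

section Lip
variable {θ : F → EReal} {y : F} {ℓ δ : ℝ}

lemma real_lip (hbot : ∀ z, θ z ≠ ⊥) (hfin : ∀ z ∈ ball y δ, θ z ≠ ⊤)
    (hlip : ∀ z ∈ ball y δ, ∀ w ∈ ball y δ, θ z - θ w ≤ ((ℓ * ‖z - w‖ : ℝ) : EReal)) :
    ∀ z ∈ ball y δ, ∀ w ∈ ball y δ, (θ z).toReal - (θ w).toReal ≤ ℓ * ‖z - w‖ := by
  intro z hz w hw
  have h1 := hlip z hz w hw
  rw [← EReal.coe_toReal (hfin z hz) (hbot z), ← EReal.coe_toReal (hfin w hw) (hbot w),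
    ← EReal.coe_sub] at h1
  exact_mod_cast h1

lemma diffQuot_real (hbot : ∀ z, θ z ≠ ⊥) (hδ : 0 < δ) (hfin : ∀ z ∈ ball y δ, θ z ≠ ⊤)
    {t : ℝ} {w : F} (hmem : y + t • w ∈ ball y δ) :
    diffQuot θ y t w = ((t⁻¹ * ((θ (y + t • w)).toReal - (θ y).toReal) : ℝ) : EReal) := by
  rw [diffQuot, EReal.coe_mul, EReal.coe_sub, EReal.coe_toReal (hfin _ hmem) (hbot _),
    EReal.coe_toReal (hfin y (mem_ball_self hδ)) (hbot y)]

lemma diffQuot_lip (hbot : ∀ z, θ z ≠ ⊥) (hfin : ∀ z ∈ ball y δ, θ z ≠ ⊤)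
    (hlip : ∀ z ∈ ball y δ, ∀ w ∈ ball y δ, θ z - θ w ≤ ((ℓ * ‖z - w‖ : ℝ) : EReal))
    {t : ℝ} (ht : 0 < t) {w₁ w₂ : F}
    (h1 : y + t • w₁ ∈ ball y δ) (h2 : y + t • w₂ ∈ ball y δ) :
    |t⁻¹ * ((θ (y + t • w₁)).toReal - (θ y).toReal)
      - t⁻¹ * ((θ (y + t • w₂)).toReal - (θ y).toReal)| ≤ ℓ * ‖w₁ - w₂‖ := by
  have hq := real_lip hbot hfin hlip
  have ha := hq _ h1 _ h2
  have hb := hq _ h2 _ h1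
  have hnorm : ‖(y + t • w₁) - (y + t • w₂)‖ = t * ‖w₁ - w₂‖ := by
    rw [show (y + t • w₁) - (y + t • w₂) = t • (w₁ - w₂) by rw [smul_sub]; abel,
      norm_smul, Real.norm_eq_abs, abs_of_pos ht]
  rw [hnorm] at ha
  rw [norm_sub_rev, hnorm] at hb
  have habs : |(θ (y + t • w₁)).toReal - (θ (y + t • w₂)).toReal| ≤ ℓ * (t * ‖w₁ - w₂‖) :=
    abs_le.2 ⟨by linarith, by linarith⟩
  have key : t⁻¹ * ((θ (y + t • w₁)).toReal - (θ y).toReal)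
      - t⁻¹ * ((θ (y + t • w₂)).toReal - (θ y).toReal)
      = t⁻¹ * ((θ (y + t • w₁)).toReal - (θ (y + t • w₂)).toReal) := by ring
  rw [key, abs_mul, abs_of_pos (inv_pos.2 ht)]
  calc t⁻¹ * |(θ (y + t • w₁)).toReal - (θ (y + t • w₂)).toReal|
      ≤ t⁻¹ * (ℓ * (t * ‖w₁ - w₂‖)) := by
        exact mul_le_mul_of_nonneg_left habs (inv_pos.2 ht).le
    _ = ℓ * ‖w₁ - w₂‖ := by field_simp

lemma eventually_dq (hbot : ∀ z, θ z ≠ ⊥) (hδ : 0 < δ) (hfin : ∀ z ∈ ball y δ, θ z ≠ ⊤)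
    (hlip : ∀ z ∈ ball y δ, ∀ w ∈ ball y δ, θ z - θ w ≤ ((ℓ * ‖z - w‖ : ℝ) : EReal))
    (u : F) {ε : ℝ} (hε : 0 < ε) :
    ∀ᶠ p : ℝ × F in (𝓝[>] (0:ℝ)) ×ˢ 𝓝 u,
      0 < p.1 ∧ ‖p.2 - u‖ < ε ∧ y + p.1 • p.2 ∈ ball y δ ∧
      diffQuot θ y p.1 p.2
        = ((p.1⁻¹ * ((θ (y + p.1 • p.2)).toReal - (θ y).toReal) : ℝ) : EReal) ∧
      |p.1⁻¹ * ((θ (y + p.1 • p.2)).toReal - (θ y).toReal)| ≤ ℓ * ‖p.2‖ := by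
  have hc : 0 < δ / (‖u‖ + ε + 1) := by positivity
  have ht : Set.Ioo (0:ℝ) (δ / (‖u‖ + ε + 1)) ∈ 𝓝[>] (0:ℝ) :=
    Ioo_mem_nhdsGT_of_mem ⟨le_refl 0, hc⟩
  have hw : ball u ε ∈ 𝓝 u := ball_mem_nhds u hε
  filter_upwards [Filter.prod_mem_prod ht hw] with p hp
  obtain ⟨⟨ht1, ht2⟩, hw1⟩ := hp
  rw [mem_ball_iff_norm] at hw1
  have hn2 : ‖p.2‖ < ‖u‖ + ε := by
    have he : u + (p.2 - u) = p.2 := by abel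
    calc ‖p.2‖ = ‖u + (p.2 - u)‖ := by rw [he]
      _ ≤ ‖u‖ + ‖p.2 - u‖ := norm_add_le _ _
      _ < ‖u‖ + ε := by linarith
  have hmem : y + p.1 • p.2 ∈ ball y δ := by
    rw [mem_ball_iff_norm, add_sub_cancel_left, norm_smul, Real.norm_eq_abs, abs_of_pos ht1]
    have h1 : p.1 * ‖p.2‖ < (δ / (‖u‖ + ε + 1)) * (‖u‖ + ε + 1) := by
      nlinarith [norm_nonneg p.2, norm_nonneg u]
    rwa [div_mul_cancel₀ _ (by positivity : (‖u‖ + ε + 1) ≠ 0)] at h1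
  have hmem0 : y + p.1 • (0:F) ∈ ball y δ := by
    simp only [smul_zero, add_zero]; exact mem_ball_self hδ
  have hbd := diffQuot_lip hbot hfin hlip ht1 hmem hmem0
  simp only [smul_zero, add_zero, sub_zero, sub_self, mul_zero] at hbd
  refine ⟨ht1, hw1, hmem, diffQuot_real hbot hδ hfin hmem, by simpa using hbd⟩

end Lip

section Lip2
variable {θ : F → EReal} {y : F} {ℓ δ : ℝ}

lemma subDeriv_bounds (hℓ : 0 ≤ ℓ) (hδ : 0 < δ) (hbot : ∀ z, θ z ≠ ⊥)
    (hfin : ∀ z ∈ ball y δ, θ z ≠ ⊤)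
    (hlip : ∀ z ∈ ball y δ, ∀ w ∈ ball y δ, θ z - θ w ≤ ((ℓ * ‖z - w‖ : ℝ) : EReal))
    (u : F) :
    ((-(ℓ * ‖u‖) : ℝ) : EReal) ≤ subDeriv θ y u ∧ subDeriv θ y u ≤ ((ℓ * ‖u‖ : ℝ) : EReal) := by
  have hev : ∀ ε : ℝ, 0 < ε → ∀ᶠ p : ℝ × F in (𝓝[>] (0:ℝ)) ×ˢ 𝓝 u,
      ((-(ℓ * ‖u‖) - ε : ℝ) : EReal) ≤ diffQuot θ y p.1 p.2 ∧
      diffQuot θ y p.1 p.2 ≤ ((ℓ * ‖u‖ + ε : ℝ) : EReal) := by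
    intro ε hε
    have hε' : 0 < ε / (ℓ + 1) := by positivity
    filter_upwards [eventually_dq hbot hδ hfin hlip u hε'] with p hp
    obtain ⟨ht1, hw1, hmem, heq, hbd⟩ := hp
    have hn : ‖p.2‖ ≤ ‖u‖ + ε / (ℓ + 1) := by
      have he : u + (p.2 - u) = p.2 := by abel
      calc ‖p.2‖ = ‖u + (p.2 - u)‖ := by rw [he]
        _ ≤ ‖u‖ + ‖p.2 - u‖ := norm_add_le _ _
        _ ≤ ‖u‖ + ε / (ℓ + 1) := by linarith
    have habs : |p.1⁻¹ * ((θ (y + p.1 • p.2)).toReal - (θ y).toReal)| ≤ ℓ * ‖u‖ + ε := by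
      have h1 : ℓ * ‖p.2‖ ≤ ℓ * (‖u‖ + ε / (ℓ + 1)) := mul_le_mul_of_nonneg_left hn hℓ
      have h2 : ℓ * (ε / (ℓ + 1)) ≤ ε := by
        rw [mul_div_assoc']
        rw [div_le_iff₀ (by linarith)]
        nlinarith
      nlinarith [hbd]
    rw [heq]
    constructor
    · have := (abs_le.1 habs).1; exact_mod_cast by linarith
    · exact_mod_cast (abs_le.1 habs).2
  constructor
  · apply EReal_coe_le_of_forall_sub
    intro ε hε
    exact le_liminf_of_le (by isBoundedDefault) ((hev ε hε).mono fun p hp => hp.1)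
  · apply EReal_le_coe_of_forall_add
    intro ε hε
    exact liminf_le_of_frequently_le ((hev ε hε).mono fun p hp => hp.2).frequently

end Lip2

section Comp
variable {X Y : Type*} [NormedAddCommGroup X] [NormedSpace ℝ X]
  [NormedAddCommGroup Y] [NormedSpace ℝ Y]

lemma subDeriv_comp_eq {f : X → Y} {f' : X →L[ℝ] Y} {θ : Y → EReal} {xb : X} {ℓ δ : ℝ}
    (hs : HasStrictFDerivAt f f' xb) (hℓ : 0 ≤ ℓ) (hδ : 0 < δ)
    (hbot : ∀ z, θ z ≠ ⊥) (hfin : ∀ z ∈ ball (f xb) δ, θ z ≠ ⊤)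
    (hlip : ∀ z ∈ ball (f xb) δ, ∀ w ∈ ball (f xb) δ,
      θ z - θ w ≤ ((ℓ * ‖z - w‖ : ℝ) : EReal)) (u : X) :
    subDeriv (fun x => θ (f x)) xb u = subDeriv θ (f xb) (f' u) := by
  set y := f xb with hy
  set P : Filter (ℝ × X) := (𝓝[>] (0:ℝ)) ×ˢ 𝓝 u with hP
  set PY : Filter (ℝ × Y) := (𝓝[>] (0:ℝ)) ×ˢ 𝓝 (f' u) with hPY
  set g : ℝ × X → Y := fun p => p.1⁻¹ • (f (xb + p.1 • p.2) - f xb) with hgdef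
  have htfst : Tendsto (fun p : ℝ × X => p.1) P (𝓝 0) :=
    tendsto_fst.mono_right nhdsWithin_le_nhds
  have hsm : Tendsto (fun p : ℝ × X => p.1 • p.2) P (𝓝 0) := by
    have := htfst.smul (tendsto_snd : Tendsto (fun p : ℝ × X => p.2) P (𝓝 u))
    simpa using this
  have hm : Tendsto (fun p : ℝ × X => (xb + p.1 • p.2, xb)) P (𝓝 (xb, xb)) := by
    refine Filter.Tendsto.prodMk_nhds ?_ tendsto_const_nhds
    simpa using (tendsto_const_nhds (x := xb) (f := P)).add hsm
  have hO : (fun p : ℝ × X => f (xb + p.1 • p.2) - f xb - f' (p.1 • p.2))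
      =o[P] (fun p : ℝ × X => p.1 • p.2) := by
    have h := hs.isLittleO.comp_tendsto hm
    exact h.congr (fun p => by simp [add_sub_cancel_left]) (fun p => add_sub_cancel_left xb _)
  have htpos : ∀ᶠ p : ℝ × X in P, 0 < p.1 := by
    have h1 : ∀ᶠ t in 𝓝[>] (0:ℝ), 0 < t := eventually_mem_nhdsWithin
    exact h1.prod_inl _
  have hn2 : ∀ᶠ p : ℝ × X in P, ‖p.2‖ < ‖u‖ + 1 := by
    have h2 : ∀ᶠ w in 𝓝 u, ‖w‖ < ‖u‖ + 1 := by
      have : Continuous fun w : X => ‖w‖ := continuous_norm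
      exact (this.tendsto u).eventually_lt_const (by linarith)
    exact h2.prod_inr _
  have hdiff : Tendsto (fun p : ℝ × X => g p - f' p.2) P (𝓝 0) := by
    rw [NormedAddCommGroup.tendsto_nhds_zero]
    intro ε hε
    have hc : (0:ℝ) < ε / (2 * (‖u‖ + 1)) := by positivity
    have hOev := (Asymptotics.isLittleO_iff.1 hO) hc
    filter_upwards [hOev, htpos, hn2] with p hp ht1 hn
    have heq : g p - f' p.2 = p.1⁻¹ • (f (xb + p.1 • p.2) - f xb - f' (p.1 • p.2)) := by
      rw [smul_sub, hgdef]
      simp only [map_smul, smul_smul, inv_mul_cancel₀ ht1.ne', one_smul]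
    rw [heq, norm_smul, Real.norm_eq_abs, abs_of_pos (inv_pos.2 ht1)]
    have hns : ‖p.1 • p.2‖ = p.1 * ‖p.2‖ := by
      rw [norm_smul, Real.norm_eq_abs, abs_of_pos ht1]
    rw [hns] at hp
    have h3 : p.1⁻¹ * ‖f (xb + p.1 • p.2) - f xb - f' (p.1 • p.2)‖
        ≤ p.1⁻¹ * (ε / (2 * (‖u‖ + 1)) * (p.1 * ‖p.2‖)) :=
      mul_le_mul_of_nonneg_left hp (inv_pos.2 ht1).le
    have h4 : p.1⁻¹ * (ε / (2 * (‖u‖ + 1)) * (p.1 * ‖p.2‖))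
        = ε / (2 * (‖u‖ + 1)) * ‖p.2‖ := by field_simp
    rw [h4] at h3
    calc p.1⁻¹ * ‖f (xb + p.1 • p.2) - f xb - f' (p.1 • p.2)‖
        ≤ ε / (2 * (‖u‖ + 1)) * ‖p.2‖ := h3
      _ < ε := by
          rw [div_mul_eq_mul_div, div_lt_iff₀ (by positivity)]
          nlinarith [norm_nonneg p.2, norm_nonneg u]
  have hg : Tendsto g P (𝓝 (f' u)) := by
    have hsnd : Tendsto (fun p : ℝ × X => f' p.2) P (𝓝 (f' u)) :=
      (f'.continuous.tendsto u).comp tendsto_snd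
    have := hdiff.add hsnd
    simpa using this
  have hev : ∀ᶠ p : ℝ × X in P,
      diffQuot (fun x => θ (f x)) xb p.1 p.2 = diffQuot θ y p.1 (g p) := by
    filter_upwards [htpos] with p ht1
    have harg : y + p.1 • g p = f (xb + p.1 • p.2) := by
      rw [hgdef]
      simp only [smul_smul, mul_inv_cancel₀ ht1.ne', one_smul]
      abel
    rw [diffQuot, diffQuot, harg]
  -- direction ≥ : subDeriv θ y (f' u) ≤ subDeriv (θ ∘ f) xb u
  have hVmap : Filter.map (fun p : ℝ × X => (p.1, g p)) P ≤ PY :=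
    (tendsto_fst.prodMk hg : Tendsto (fun p : ℝ × X => (p.1, g p)) P PY)
  have hle1 : subDeriv θ y (f' u) ≤ subDeriv (fun x => θ (f x)) xb u := by
    have e1 : subDeriv (fun x => θ (f x)) xb u
        = liminf ((fun q : ℝ × Y => diffQuot θ y q.1 q.2) ∘ (fun p : ℝ × X => (p.1, g p))) P :=
      liminf_congr hev
    calc subDeriv θ y (f' u)
        ≤ liminf (fun q : ℝ × Y => diffQuot θ y q.1 q.2)
            (Filter.map (fun p : ℝ × X => (p.1, g p)) P) := liminf_le_liminf_of_le hVmap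
      _ = _ := by rw [e1]; rfl
  -- direction ≤
  have hle2 : subDeriv (fun x => θ (f x)) xb u ≤ subDeriv θ y (f' u) := by
    by_contra hcon
    push_neg at hcon
    obtain ⟨r, hr1, hr2⟩ := EReal.lt_iff_exists_real_btwn.1 hcon
    obtain ⟨r', hr'1, hr'2⟩ := EReal.lt_iff_exists_real_btwn.1 hr1
    have hrr' : r' < r := by exact_mod_cast hr'2
    set ε : ℝ := (r - r') / (2 * ℓ + 1) with hεdef
    have hε : 0 < ε := by
      apply div_pos (by linarith) (by linarith)
    have h2lε : 2 * ℓ * ε ≤ r - r' := by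
      rw [hεdef, mul_div_assoc']
      rw [div_le_iff₀ (by linarith)]
      nlinarith
    -- S t := diffQuot θ y t (g (t, u))
    have htu : Tendsto (fun t : ℝ => (t, u)) (𝓝[>] (0:ℝ)) P :=
      tendsto_id.prodMk tendsto_const_nhds
    have hgu : Tendsto (fun t : ℝ => g (t, u)) (𝓝[>] (0:ℝ)) (𝓝 (f' u)) := hg.comp htu
    have hcomp_le : subDeriv (fun x => θ (f x)) xb u
        ≤ liminf (fun t : ℝ => diffQuot θ y t (g (t, u))) (𝓝[>] (0:ℝ)) := by
      have hmapP : Filter.map (fun t : ℝ => (t, u)) (𝓝[>] (0:ℝ)) ≤ P := htu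
      have e2 : liminf (fun p : ℝ × X => diffQuot (fun x => θ (f x)) xb p.1 p.2)
          (Filter.map (fun t : ℝ => (t, u)) (𝓝[>] (0:ℝ)))
          = liminf (fun t : ℝ => diffQuot (fun x => θ (f x)) xb t u) (𝓝[>] (0:ℝ)) := rfl
      have e3 : liminf (fun t : ℝ => diffQuot (fun x => θ (f x)) xb t u) (𝓝[>] (0:ℝ))
          = liminf (fun t : ℝ => diffQuot θ y t (g (t, u))) (𝓝[>] (0:ℝ)) := by
        apply liminf_congr
        filter_upwards [eventually_mem_nhdsWithin] with t ht1
        have harg : y + t • g (t, u) = f (xb + t • u) := by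
          rw [hgdef]
          simp only [smul_smul, mul_inv_cancel₀ (ne_of_gt (show (0:ℝ) < t from ht1)), one_smul]
          abel
        rw [diffQuot, diffQuot, harg]
      calc subDeriv (fun x => θ (f x)) xb u
          ≤ liminf (fun p : ℝ × X => diffQuot (fun x => θ (f x)) xb p.1 p.2)
              (Filter.map (fun t : ℝ => (t, u)) (𝓝[>] (0:ℝ))) := liminf_le_liminf_of_le hmapP
        _ = _ := by rw [e2, e3]
    have hSfreq : ∀ᶠ t in 𝓝[>] (0:ℝ), (r : EReal) < diffQuot θ y t (g (t, u)) :=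
      eventually_lt_of_lt_liminf (lt_of_lt_of_le hr2 hcomp_le)
    have hgε : ∀ᶠ t in 𝓝[>] (0:ℝ), ‖g (t, u) - f' u‖ < ε := by
      have h := Metric.tendsto_nhds.1 hgu ε hε
      filter_upwards [h] with t ht
      rwa [dist_eq_norm] at ht
    have hb1 : ∀ᶠ t in 𝓝[>] (0:ℝ), ‖g (t, u)‖ < ‖f' u‖ + 1 :=
      hgu.norm.eventually_lt_const (lt_add_one _)
    have hball_ev : ∀ᶠ t in 𝓝[>] (0:ℝ), y + t • g (t, u) ∈ ball y δ := by
      have hc2 : (0:ℝ) < δ / (‖f' u‖ + 1) := by positivity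
      have hb2 : Set.Ioo (0:ℝ) (δ / (‖f' u‖ + 1)) ∈ 𝓝[>] (0:ℝ) :=
        Ioo_mem_nhdsGT_of_mem ⟨le_refl 0, hc2⟩
      filter_upwards [hb1, hb2] with t htn ht2
      obtain ⟨ht0, htlt⟩ := ht2
      rw [mem_ball_iff_norm, add_sub_cancel_left, norm_smul, Real.norm_eq_abs, abs_of_pos ht0]
      have h1 : t * ‖g (t, u)‖ < (δ / (‖f' u‖ + 1)) * (‖f' u‖ + 1) := by
        nlinarith [norm_nonneg (g (t, u)), norm_nonneg (f' u)]
      rwa [div_mul_cancel₀ _ (by positivity : (‖f' u‖ + 1) ≠ 0)] at h1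
    have hEPY := eventually_dq hbot hδ hfin hlip (f' u) hε
    have hside : ∀ᶠ q : ℝ × Y in PY,
        (r : EReal) < diffQuot θ y q.1 (g (q.1, u)) ∧ ‖g (q.1, u) - f' u‖ < ε ∧
        y + q.1 • g (q.1, u) ∈ ball y δ :=
      ((hSfreq.and (hgε.and hball_ev)).prod_inl _).mono
        (fun q hq => ⟨hq.1, hq.2.1, hq.2.2⟩)
    have hfinal : ∀ᶠ q : ℝ × Y in PY, ((r' : ℝ) : EReal) ≤ diffQuot θ y q.1 q.2 := by
      filter_upwards [hEPY, hside] with q hq hq2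
      obtain ⟨ht1, hwε, hmemw, heqw, _⟩ := hq
      obtain ⟨hSr, hgεt, hmemg⟩ := hq2
      have heqS := diffQuot_real hbot hδ hfin hmemg
      rw [heqS] at hSr
      have hss : r < q.1⁻¹ * ((θ (y + q.1 • g (q.1, u))).toReal - (θ y).toReal) := by
        exact_mod_cast hSr
      have hlipq := diffQuot_lip hbot hfin hlip ht1 hmemw hmemg
      have hdist : ‖q.2 - g (q.1, u)‖ ≤ 2 * ε := by
        have he : q.2 - g (q.1, u) = (q.2 - f' u) + (f' u - g (q.1, u)) := by abel
        rw [he]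
        have h5 := norm_add_le (q.2 - f' u) (f' u - g (q.1, u))
        rw [norm_sub_rev (f' u)] at h5
        linarith
      have h6 : ℓ * ‖q.2 - g (q.1, u)‖ ≤ 2 * ℓ * ε := by nlinarith
      have h7 := (abs_le.1 (hlipq.trans h6)).1
      rw [heqw]
      have h8 : r' ≤ q.1⁻¹ * ((θ (y + q.1 • q.2)).toReal - (θ y).toReal) := by linarith
      exact_mod_cast h8
    have hfin2 : ((r' : ℝ) : EReal) ≤ subDeriv θ y (f' u) :=
      le_liminf_of_le (by isBoundedDefault) hfinal
    exact absurd hr'1 (not_lt.2 hfin2)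
  exact le_antisymm hle2 hle1

end Comp

end ChainRuleHelpers

/-- Dini–Hadamard subdifferential chain rule for locally Lipschitzian,
Dini–Hadamard regular outer functions. -/
theorem DH_subdifferential_chain_rule
    {X Y : Type*} [NormedAddCommGroup X] [NormedSpace ℝ X]
    [NormedAddCommGroup Y] [NormedSpace ℝ Y]
    (f : X → Y) (f' : X →L[ℝ] Y) (θ : Y → EReal) (xb : X)
    (hf : ContDiffAt ℝ 1 f xb) (hf' : HasFDerivAt f f' xb)
    (hθbot : ∀ y, θ y ≠ ⊥)
    (hθlip : LocLipschitzAt θ (f xb))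
    (hθreg : DHRegular θ (f xb)) :
    DHRegular (fun x => θ (f x)) xb ∧
    subDiff (fun x => θ (f x)) xb =
      (fun l : Y →L[ℝ] ℝ => l.comp f') '' subDiff θ (f xb) := by
  obtain ⟨ℓ₀, U, hU, hfinU, hlipU⟩ := hθlip
  obtain ⟨δ, hδ, hball⟩ := Metric.mem_nhds_iff.1 hU
  set y := f xb with hy
  set ℓ : ℝ := max ℓ₀ 0 with hℓdef
  have hℓ : 0 ≤ ℓ := le_max_right _ _
  have hfin : ∀ z ∈ ball y δ, θ z ≠ ⊤ := fun z hz => hfinU z (hball hz)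
  have hlip : ∀ z ∈ ball y δ, ∀ w ∈ ball y δ, θ z - θ w ≤ ((ℓ * ‖z - w‖ : ℝ) : EReal) := by
    intro z hz w hw
    refine (hlipU z (hball hz) w (hball hw)).trans ?_
    exact EReal.coe_le_coe_iff.2
      (mul_le_mul_of_nonneg_right (le_max_left _ _) (norm_nonneg _))
  have hs : HasStrictFDerivAt f f' xb := hf.hasStrictFDerivAt' hf' one_ne_zero
  have hchain : ∀ u, subDeriv (fun x => θ (f x)) xb u = subDeriv θ y (f' u) :=
    subDeriv_comp_eq hs hℓ hδ hθbot hfin hlip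
  have hbd := subDeriv_bounds hℓ hδ hθbot hfin hlip
  have hne_bot : ∀ z : Y, subDeriv θ y z ≠ ⊥ := fun z =>
    (lt_of_lt_of_le (EReal.bot_lt_coe _) (hbd z).1).ne'
  have hne_top : ∀ z : Y, subDeriv θ y z ≠ ⊤ := fun z =>
    (lt_of_le_of_lt (hbd z).2 (EReal.coe_lt_top _)).ne
  set p : Y → ℝ := fun z => (subDeriv θ y z).toReal with hpdef
  have hp_eq : ∀ z, ((p z : ℝ) : EReal) = subDeriv θ y z := fun z =>
    EReal.coe_toReal (hne_top z) (hne_bot z)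
  have hp_le : ∀ z, p z ≤ ℓ * ‖z‖ := by
    intro z
    have h1 := (hbd z).2
    rw [← hp_eq z] at h1
    exact_mod_cast h1
  have hw_le_p : ∀ w ∈ subDiff θ y, ∀ z, w z ≤ p z := by
    intro w hw z
    have h1 := hw z
    rw [← hp_eq z] at h1
    exact_mod_cast h1
  have hN_add : ∀ z1 z2, p (z1 + z2) ≤ p z1 + p z2 := by
    intro z1 z2
    have h1 : subDeriv θ y (z1 + z2) ≤ ((p z1 + p z2 : ℝ) : EReal) := by
      rw [← hθreg (z1 + z2)]
      apply sSup_le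
      rintro x ⟨w, hw, rfl⟩
      apply EReal.coe_le_coe_iff.2
      rw [map_add]
      exact add_le_add (hw_le_p w hw z1) (hw_le_p w hw z2)
    rw [← hp_eq (z1 + z2)] at h1
    exact_mod_cast h1
  have hN_hom_le : ∀ c : ℝ, 0 < c → ∀ z, p (c • z) ≤ c * p z := by
    intro c hc z
    have h1 : subDeriv θ y (c • z) ≤ ((c * p z : ℝ) : EReal) := by
      rw [← hθreg (c • z)]
      apply sSup_le
      rintro x ⟨w, hw, rfl⟩
      apply EReal.coe_le_coe_iff.2
      rw [map_smul, smul_eq_mul]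
      exact mul_le_mul_of_nonneg_left (hw_le_p w hw z) hc.le
    rw [← hp_eq (c • z)] at h1
    exact_mod_cast h1
  have hN_hom : ∀ c : ℝ, 0 < c → ∀ z, p (c • z) = c * p z := by
    intro c hc z
    refine le_antisymm (hN_hom_le c hc z) ?_
    have h2 := hN_hom_le c⁻¹ (inv_pos.2 hc) (c • z)
    rw [inv_smul_smul₀ hc.ne'] at h2
    have h3 := mul_le_mul_of_nonneg_left h2 hc.le
    rwa [← mul_assoc, mul_inv_cancel₀ hc.ne', one_mul] at h3
  have hp0 : p (0 : Y) ≤ 0 := by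
    have h1 := hp_le 0
    simpa using h1
  have himage : ∀ v ∈ subDiff (fun x => θ (f x)) xb, ∃ w ∈ subDiff θ y, w.comp f' = v := by
    intro v hv
    have hv_le : ∀ u : X, v u ≤ p (f' u) := by
      intro u
      have h1 := hv u
      rw [hchain u, ← hp_eq (f' u)] at h1
      exact_mod_cast h1
    have hker : LinearMap.ker (f' : X →ₗ[ℝ] Y) ≤ LinearMap.ker (v : X →ₗ[ℝ] ℝ) := by
      intro u hu
      rw [LinearMap.mem_ker] at hu ⊢
      have hz : f' u = 0 := hu
      have ha : v u ≤ 0 := by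
        have h1 := hv_le u
        rw [hz] at h1
        linarith
      have hz' : f' (-u) = 0 := by rw [map_neg, hz, neg_zero]
      have hb : v (-u) ≤ 0 := by
        have h1 := hv_le (-u)
        rw [hz'] at h1
        linarith
      rw [map_neg] at hb
      show v u = 0
      linarith
    set h0 : (LinearMap.range (f' : X →ₗ[ℝ] Y)) →ₗ[ℝ] ℝ :=
      ((LinearMap.ker (f' : X →ₗ[ℝ] Y)).liftQ (v : X →ₗ[ℝ] ℝ) hker).comp
        (f' : X →ₗ[ℝ] Y).quotKerEquivRange.symm.toLinearMap with h0def
    have hval : ∀ (u : X) (h : f' u ∈ LinearMap.range (f' : X →ₗ[ℝ] Y)),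
        h0 ⟨(f' : X →ₗ[ℝ] Y) u, h⟩ = v u := by
      intro u h
      have h1 : ((f' : X →ₗ[ℝ] Y).quotKerEquivRange.symm ⟨(f' : X →ₗ[ℝ] Y) u, h⟩ :
          X ⧸ LinearMap.ker (f' : X →ₗ[ℝ] Y)) = (LinearMap.ker (f' : X →ₗ[ℝ] Y)).mkQ u :=
        LinearMap.quotKerEquivRange_symm_apply_image (f' : X →ₗ[ℝ] Y) u h
      rw [h0def]
      simp only [LinearMap.comp_apply, LinearEquiv.coe_toLinearMap]
      erw [h1]
      simp [Submodule.mkQ_apply]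
    have hdom : ∀ x : LinearMap.range (f' : X →ₗ[ℝ] Y), h0 x ≤ p x := by
      rintro ⟨z, hz⟩
      obtain ⟨u, rfl⟩ := hz
      exact le_of_eq_of_le (hval u (LinearMap.mem_range_self _ u)) (hv_le u)
    obtain ⟨gl, hgl_eq, hgl_le⟩ :=
      exists_extension_of_le_sublinear ⟨LinearMap.range (f' : X →ₗ[ℝ] Y), h0⟩ p
        hN_hom hN_add hdom
    have hcont : ∀ z : Y, ‖gl z‖ ≤ ℓ * ‖z‖ := by
      intro z
      rw [Real.norm_eq_abs]
      apply abs_le.2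
      constructor
      · have h1 := hgl_le (-z)
        rw [map_neg] at h1
        have h2 := hp_le (-z)
        rw [norm_neg] at h2
        linarith
      · exact (hgl_le z).trans (hp_le z)
    set w : Y →L[ℝ] ℝ := gl.mkContinuous ℓ hcont with hwdef
    have hw_app : ∀ z, w z = gl z := fun z => rfl
    have hw_mem : w ∈ subDiff θ y := by
      intro z
      rw [← hp_eq z, hw_app z]
      exact EReal.coe_le_coe_iff.2 (hgl_le z)
    refine ⟨w, hw_mem, ?_⟩
    ext u
    show w (f' u) = v u
    rw [hw_app]
    have h2 := hgl_eq ⟨(f' : X →ₗ[ℝ] Y) u, LinearMap.mem_range_self _ u⟩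
    exact h2.trans (hval u (LinearMap.mem_range_self _ u))
  have hsubdiff : subDiff (fun x => θ (f x)) xb
      = (fun l : Y →L[ℝ] ℝ => l.comp f') '' subDiff θ y := by
    apply Set.Subset.antisymm
    · intro v hv
      obtain ⟨w, hw, hcomp⟩ := himage v hv
      exact ⟨w, hw, hcomp⟩
    · rintro v ⟨w, hw, rfl⟩
      intro u
      rw [hchain u]
      show ((w (f' u) : ℝ) : EReal) ≤ _
      exact hw (f' u)
  refine ⟨?_, hsubdiff⟩
  intro u
  calc sSup ((fun v : X →L[ℝ] ℝ => (v u : EReal)) '' subDiff (fun x => θ (f x)) xb)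
      = sSup ((fun w : Y →L[ℝ] ℝ => (w (f' u) : EReal)) '' subDiff θ y) := by
        rw [hsubdiff, ← Set.image_comp]
        rfl
    _ = subDeriv θ y (f' u) := hθreg (f' u)
    _ = subDeriv (fun x => θ (f x)) xb u := (hchain u).symm
end
end

section
/- Let X and Y be normed spaces, let A : X → Y be a bounded linear operator, a ∈ Y, and let θ : Y → (-∞,∞] be piecewise linear-quadratic. Define φ(x) := θ(Ax + a). Then the subderivative chain rule dφ(x)(w) = dθ(Ax+a)(Aw) holds for all x ∈ dom φ and all w ∈ X. If in addition θ is convex and the set A*(∂θ(Ax+a)) is weak* closed in X*, then ∂⁻φ(x) = A*(∂θ(Ax+a)) for all x ∈ dom φ, where ∂θ denotes the subdifferential of convex analysis. -/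
open Filter Topology Set Metric Pointwise

noncomputable section

variable {E : Type*} [NormedAddCommGroup E] [NormedSpace ℝ E]

/-- A polyhedral convex set: intersection of finitely many closed half-spaces. -/
def IsPolyhedral {Y : Type*} [NormedAddCommGroup Y] [NormedSpace ℝ Y]
    (Ω : Set Y) : Prop :=
  ∃ (m : ℕ) (c : Fin m → (Y →L[ℝ] ℝ)) (d : Fin m → ℝ),
    Ω = {y | ∀ j, c j y ≤ d j}

/-- Piecewise linear-quadratic extended-real-valued function. -/
def PiecewiseLQ {Y : Type*} [NormedAddCommGroup Y] [NormedSpace ℝ Y]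
    (θ : Y → EReal) : Prop :=
  ∃ (s : ℕ) (Ω : Fin s → Set Y)
    (B : Fin s → (Y →L[ℝ] (Y →L[ℝ] ℝ))) (b : Fin s → (Y →L[ℝ] ℝ)) (β : Fin s → ℝ),
    (∀ i, IsPolyhedral (Ω i)) ∧
    (∀ i, ∀ y z : Y, B i y z = B i z y) ∧
    {y | θ y ≠ ⊤} = ⋃ i, Ω i ∧
    ∀ i, ∀ y ∈ Ω i, θ y = ((B i y y + b i y + β i : ℝ) : EReal)

/-- Convexity of an extended-real-valued function via its epigraph. -/
def ERealConvexOn {Y : Type*} [NormedAddCommGroup Y] [NormedSpace ℝ Y]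
    (θ : Y → EReal) : Prop :=
  Convex ℝ {p : Y × ℝ | θ p.1 ≤ (p.2 : EReal)}

/-- Subdifferential of convex analysis. -/
def convSubdiff {Y : Type*} [NormedAddCommGroup Y] [NormedSpace ℝ Y]
    (θ : Y → EReal) (y : Y) : Set (Y →L[ℝ] ℝ) :=
  {v | ∀ z : Y, θ y + ((v (z - y) : ℝ) : EReal) ≤ θ z}

section ChainRuleAux

open Filter Topology Set

variable {Y : Type*} [NormedAddCommGroup Y] [NormedSpace ℝ Y]

/-- Directions along which one eventually enters `Ω` starting from `y`. -/
def enterCone (Ω : Set Y) (y : Y) : Set Y := {u | ∀ᶠ t in 𝓝[>] (0:ℝ), y + t • u ∈ Ω}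

lemma IsPolyhedral.isClosed' {Ω : Set Y} (h : IsPolyhedral Ω) : IsClosed Ω := by
  obtain ⟨m, c, d, rfl⟩ := h
  rw [Set.setOf_forall]
  exact isClosed_iInter fun j => isClosed_le (c j).continuous continuous_const

@[simp] lemma mem_enterCone {Ω : Set Y} {y u : Y} :
    u ∈ enterCone Ω y ↔ ∀ᶠ t in 𝓝[>] (0:ℝ), y + t • u ∈ Ω := Iff.rfl

lemma enterCone.mem_of {Ω : Set Y} {y u : Y} (hcl : IsClosed Ω) (h : u ∈ enterCone Ω y) :
    y ∈ Ω := by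
  have hc : Continuous (fun t : ℝ => y + t • u) := by fun_prop
  have h2 := hc.tendsto 0
  simp only [zero_smul, add_zero] at h2
  exact hcl.mem_of_tendsto (h2.mono_left nhdsWithin_le_nhds) (mem_enterCone.mp h)

lemma enterCone_iff_poly {m : ℕ} {c : Fin m → Y →L[ℝ] ℝ} {d : Fin m → ℝ} {y u : Y}
    (hy : y ∈ {z : Y | ∀ j, c j z ≤ d j}) :
    u ∈ enterCone {z : Y | ∀ j, c j z ≤ d j} y ↔ ∀ j, c j y = d j → c j u ≤ 0 := by
  constructor
  · intro h j hact
    obtain ⟨t, htm, ht0⟩ := ((mem_enterCone.mp h).and self_mem_nhdsWithin).exists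
    have h2 := htm j
    rw [map_add, map_smul, smul_eq_mul, hact] at h2
    nlinarith
  · intro h
    have : ∀ j : Fin m, ∀ᶠ t in 𝓝[>] (0:ℝ), c j (y + t • u) ≤ d j := by
      intro j
      rcases eq_or_lt_of_le (hy j) with heq | hlt
      · filter_upwards [self_mem_nhdsWithin] with t ht
        rw [map_add, map_smul, smul_eq_mul]
        have := h j heq
        nlinarith [Set.mem_Ioi.mp ht]
      · have htend : Tendsto (fun t : ℝ => c j y + t * c j u) (𝓝[>] (0:ℝ)) (𝓝 (c j y)) := by
          have hc : Continuous (fun t : ℝ => c j y + t * c j u) := by fun_prop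
          have h2 := hc.tendsto 0
          simp only [zero_mul, add_zero] at h2
          exact h2.mono_left nhdsWithin_le_nhds
        filter_upwards [htend.eventually_lt_const hlt] with t ht
        rw [map_add, map_smul, smul_eq_mul]
        exact ht.le
    exact mem_enterCone.mpr (eventually_all.mpr this)

lemma prod_le_nhds (u : Y) : (𝓝[>] (0:ℝ)) ×ˢ 𝓝 u ≤ 𝓝 ((0:ℝ), u) := by
  rw [nhds_prod_eq]
  exact Filter.prod_mono nhdsWithin_le_nhds le_rfl

lemma not_enterCone_eventually {Ω : Set Y} (hpoly : IsPolyhedral Ω) {y u : Y}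
    (h : u ∉ enterCone Ω y) :
    ∀ᶠ q : ℝ × Y in (𝓝[>] (0:ℝ)) ×ˢ 𝓝 u, y + q.1 • q.2 ∉ Ω := by
  by_cases hy : y ∈ Ω
  · obtain ⟨m, c, d, rfl⟩ := hpoly
    rw [enterCone_iff_poly hy] at h
    push_neg at h
    obtain ⟨j, hact, hju⟩ := h
    have h1 : ∀ᶠ q : ℝ × Y in (𝓝[>] (0:ℝ)) ×ˢ 𝓝 u, 0 < q.1 :=
      Eventually.prod_inl self_mem_nhdsWithin _
    have h2 : ∀ᶠ q : ℝ × Y in (𝓝[>] (0:ℝ)) ×ˢ 𝓝 u, 0 < c j q.2 :=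
      Eventually.prod_inr (((c j).continuous.tendsto u).eventually_const_lt hju) _
    filter_upwards [h1, h2] with q hq1 hq2 hmem
    have h3 := hmem j
    rw [map_add, map_smul, smul_eq_mul, hact] at h3
    nlinarith
  · have hcl := hpoly.isClosed'
    have htt : Tendsto (fun q : ℝ × Y => y + q.1 • q.2) ((𝓝[>] (0:ℝ)) ×ˢ 𝓝 u) (𝓝 y) := by
      have hc : Continuous (fun q : ℝ × Y => y + q.1 • q.2) := by fun_prop
      have h2 := hc.tendsto ((0:ℝ), u)
      simp only [zero_smul, add_zero] at h2
      exact h2.mono_left (prod_le_nhds u)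
    exact htt.eventually (hcl.isOpen_compl.eventually_mem hy)

lemma enterCone_smul {Ω : Set Y} {y u : Y} (h : u ∈ enterCone Ω y) {m : ℝ} (hm : 0 < m) :
    m • u ∈ enterCone Ω y := by
  have htt : Tendsto (fun t : ℝ => t * m) (𝓝[>] (0:ℝ)) (𝓝[>] (0:ℝ)) := by
    rw [tendsto_nhdsWithin_iff]
    constructor
    · have hc : Continuous (fun t : ℝ => t * m) := by fun_prop
      have h2 := hc.tendsto 0
      simp only [zero_mul] at h2
      exact h2.mono_left nhdsWithin_le_nhds
    · filter_upwards [self_mem_nhdsWithin] with t ht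
      exact Set.mem_Ioi.mpr (mul_pos (Set.mem_Ioi.mp ht) hm)
  rw [mem_enterCone] at h ⊢
  filter_upwards [htt.eventually h] with t ht
  rwa [smul_smul]

lemma diffQuot_top {θ : Y → EReal} {y u : Y} {t p : ℝ} (hp : θ y = (p : EReal)) (ht : 0 < t)
    (htop : θ (y + t • u) = ⊤) : diffQuot θ y t u = ⊤ := by
  rw [diffQuot, htop, hp, EReal.top_sub_coe, EReal.coe_mul_top_of_pos (by positivity)]

lemma diffQuot_piece {θ : Y → EReal} {Ω : Set Y} {B : Y →L[ℝ] Y →L[ℝ] ℝ} {b : Y →L[ℝ] ℝ} {β : ℝ}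
    (hsym : ∀ y z, B y z = B z y) (hfor : ∀ y ∈ Ω, θ y = ((B y y + b y + β : ℝ) : EReal))
    {y u : Y} {t : ℝ} (hy : y ∈ Ω) (ht : 0 < t) (hmem : y + t • u ∈ Ω) :
    diffQuot θ y t u = ((2 * B y u + b u + t * B u u : ℝ) : EReal) := by
  rw [diffQuot, hfor _ hmem, hfor _ hy, ← EReal.coe_sub, ← EReal.coe_mul]
  congr 1
  have hexp : B (y + t • u) (y + t • u)
      = B y y + t * B y u + t * B u y + t * (t * B u u) := by
    simp only [map_add, map_smul, ContinuousLinearMap.add_apply, ContinuousLinearMap.smul_apply,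
      smul_eq_mul]
    ring
  have hb : b (y + t • u) = b y + t * b u := by
    rw [map_add, map_smul, smul_eq_mul]
  rw [hexp, hb, hsym u y]
  field_simp
  ring

lemma subDeriv_le_liminf_curve (θ : Y → EReal) (y u : Y) :
    subDeriv θ y u ≤ liminf (fun t => diffQuot θ y t u) (𝓝[>] (0:ℝ)) := by
  have hmap : Filter.map (fun t : ℝ => (t, u)) (𝓝[>] (0:ℝ)) ≤ (𝓝[>] (0:ℝ)) ×ˢ 𝓝 u :=
    Filter.Tendsto.prodMk tendsto_id tendsto_const_nhds
  have h1 : subDeriv θ y u ≤ liminf (fun q : ℝ × Y => diffQuot θ y q.1 q.2)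
      (Filter.map (fun t : ℝ => (t, u)) (𝓝[>] (0:ℝ))) :=
    liminf_le_liminf_of_le hmap
  have h2 : liminf (fun q : ℝ × Y => diffQuot θ y q.1 q.2)
      (Filter.map (fun t : ℝ => (t, u)) (𝓝[>] (0:ℝ)))
      = liminf (fun t => diffQuot θ y t u) (𝓝[>] (0:ℝ)) := by
    simp only [Filter.liminf, Filter.map_map]
    rfl
  rw [h2] at h1
  exact h1

lemma liminf_curve_le_piece {θ : Y → EReal} {Ω : Set Y} {B : Y →L[ℝ] Y →L[ℝ] ℝ}
    {b : Y →L[ℝ] ℝ} {β : ℝ}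
    (hsym : ∀ y z, B y z = B z y) (hfor : ∀ y ∈ Ω, θ y = ((B y y + b y + β : ℝ) : EReal))
    {y u : Y} (hy : y ∈ Ω) (hu : u ∈ enterCone Ω y) :
    liminf (fun t => diffQuot θ y t u) (𝓝[>] (0:ℝ)) ≤ ((2 * B y u + b u : ℝ) : EReal) := by
  have hcong : ∀ᶠ t in 𝓝[>] (0:ℝ),
      diffQuot θ y t u = ((2 * B y u + b u + t * B u u : ℝ) : EReal) := by
    filter_upwards [mem_enterCone.mp hu, self_mem_nhdsWithin] with t hmem ht
    exact diffQuot_piece hsym hfor hy (Set.mem_Ioi.mp ht) hmem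
  rw [liminf_congr hcong]
  have htends : Tendsto (fun t : ℝ => ((2 * B y u + b u + t * B u u : ℝ) : EReal)) (𝓝[>] (0:ℝ))
      (𝓝 ((2 * B y u + b u : ℝ) : EReal)) := by
    have hr : Tendsto (fun t : ℝ => 2 * B y u + b u + t * B u u) (𝓝[>] (0:ℝ))
        (𝓝 (2 * B y u + b u)) := by
      have hc : Continuous (fun t : ℝ => 2 * B y u + b u + t * B u u) := by fun_prop
      have h2 := hc.tendsto 0
      simp only [zero_mul, add_zero] at h2
      exact h2.mono_left nhdsWithin_le_nhds
    exact (continuous_coe_real_ereal.tendsto _).comp hr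
  exact le_of_eq htends.liminf_eq

/-- The core lemma: explicit formula for the Dini–Hadamard subderivative of a
piecewise linear-quadratic function. -/
lemma plq_subDeriv_eq {s : ℕ} {Ω : Fin s → Set Y} {B : Fin s → Y →L[ℝ] Y →L[ℝ] ℝ}
    {b : Fin s → Y →L[ℝ] ℝ} {β : Fin s → ℝ} {θ : Y → EReal}
    (hpoly : ∀ i, IsPolyhedral (Ω i)) (hsym : ∀ i, ∀ y z, B i y z = B i z y)
    (hdom : {y | θ y ≠ ⊤} = ⋃ i, Ω i)
    (hfor : ∀ i, ∀ y ∈ Ω i, θ y = ((B i y y + b i y + β i : ℝ) : EReal))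
    {y0 : Y} {p : ℝ} (hp : θ y0 = (p : EReal)) (u : Y) :
    subDeriv θ y0 u
      = sInf ((fun i => ((2 * B i y0 u + b i u : ℝ) : EReal)) ''
          {i | u ∈ enterCone (Ω i) y0}) := by
  apply le_antisymm
  · refine le_sInf fun x hx => ?_
    obtain ⟨i, hi, rfl⟩ := hx
    have hyi : y0 ∈ Ω i := enterCone.mem_of (hpoly i).isClosed' hi
    exact (subDeriv_le_liminf_curve θ y0 u).trans
      (liminf_curve_le_piece (hsym i) (hfor i) hyi hi)
  · refine le_of_forall_lt_imp_le_of_dense fun a ha => ?_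
    obtain ⟨br, habr, hbr⟩ := EReal.exists_between_coe_real ha
    refine le_trans habr.le ?_
    rw [subDeriv]
    refine le_liminf_of_le (by isBoundedDefault) ?_
    have hev : ∀ i : Fin s, ∀ᶠ q : ℝ × Y in (𝓝[>] (0:ℝ)) ×ˢ 𝓝 u,
        (y0 + q.1 • q.2 ∈ Ω i → (br : EReal) ≤ diffQuot θ y0 q.1 q.2) := by
      intro i
      by_cases hi : u ∈ enterCone (Ω i) y0
      · have hyi : y0 ∈ Ω i := enterCone.mem_of (hpoly i).isClosed' hi
        have hlt : br < 2 * B i y0 u + b i u := by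
          have h1 := sInf_le (Set.mem_image_of_mem
            (fun i => ((2 * B i y0 u + b i u : ℝ) : EReal))
            (show i ∈ {i | u ∈ enterCone (Ω i) y0} from hi))
          have h2 := lt_of_lt_of_le hbr h1
          exact_mod_cast h2
        have hcont : Tendsto (fun q : ℝ × Y => 2 * B i y0 q.2 + b i q.2 + q.1 * B i q.2 q.2)
            ((𝓝[>] (0:ℝ)) ×ˢ 𝓝 u) (𝓝 (2 * B i y0 u + b i u)) := by
          have hc : Continuous (fun q : ℝ × Y =>
              2 * B i y0 q.2 + b i q.2 + q.1 * B i q.2 q.2) := by fun_prop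
          have h2 := hc.tendsto ((0:ℝ), u)
          simp only [zero_mul, add_zero] at h2
          exact h2.mono_left (prod_le_nhds u)
        filter_upwards [hcont.eventually_const_lt hlt,
          Eventually.prod_inl self_mem_nhdsWithin (𝓝 u)] with q hq hq1 hmem
        rw [diffQuot_piece (hsym i) (hfor i) hyi hq1 hmem]
        exact_mod_cast hq.le
      · filter_upwards [not_enterCone_eventually (hpoly i) hi] with q hq hmem
        exact absurd hmem hq
    filter_upwards [eventually_all.mpr hev,
      Eventually.prod_inl self_mem_nhdsWithin (𝓝 u)] with q hq hq1
    by_cases htop : θ (y0 + q.1 • q.2) = ⊤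
    · rw [diffQuot_top hp hq1 htop]
      exact le_top
    · have hmem : y0 + q.1 • q.2 ∈ ⋃ i, Ω i := by
        rw [← hdom]
        exact htop
      obtain ⟨i, hi⟩ := Set.mem_iUnion.mp hmem
      exact hq i hi

end ChainRuleAux
section ChainRuleAux2

open Filter Topology Set

variable {Y : Type*} [NormedAddCommGroup Y] [NormedSpace ℝ Y]

lemma ereal_exists_real {x : EReal} (h1 : x ≠ ⊤) (h2 : x ≠ ⊥) : ∃ r : ℝ, x = (r : EReal) :=
  ⟨x.toReal, (EReal.coe_toReal h1 h2).symm⟩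

lemma grad_le_subDeriv {θ : Y → EReal} {y : Y} {p : ℝ} (hp : θ y = (p : EReal))
    (hbot : ∀ z, θ z ≠ ⊥) {l : Y →L[ℝ] ℝ} (hl : l ∈ convSubdiff θ y) (u : Y) :
    (l u : EReal) ≤ subDeriv θ y u := by
  rw [subDeriv]
  have hev : ∀ᶠ q : ℝ × Y in (𝓝[>] (0:ℝ)) ×ˢ 𝓝 u,
      ((l q.2 : ℝ) : EReal) ≤ diffQuot θ y q.1 q.2 := by
    filter_upwards [Eventually.prod_inl self_mem_nhdsWithin (𝓝 u)] with q hq1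
    have hkey := hl (y + q.1 • q.2)
    rw [hp] at hkey
    have hsub : l (y + q.1 • q.2 - y) = q.1 * l q.2 := by
      rw [add_sub_cancel_left, map_smul, smul_eq_mul]
    rw [hsub] at hkey
    by_cases htop : θ (y + q.1 • q.2) = ⊤
    · rw [diffQuot_top hp hq1 htop]
      exact le_top
    · obtain ⟨r, hr⟩ := ereal_exists_real htop (hbot _)
      rw [hr] at hkey
      have hreal : p + q.1 * l q.2 ≤ r := by exact_mod_cast hkey
      rw [diffQuot, hr, hp, ← EReal.coe_sub, ← EReal.coe_mul, EReal.coe_le_coe_iff]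
      have hq1' : (0:ℝ) < q.1 := hq1
      rw [show q.1⁻¹ * (r - p) = (r - p) / q.1 by ring, le_div_iff₀ hq1']
      nlinarith
  have htends : Tendsto (fun q : ℝ × Y => ((l q.2 : ℝ) : EReal)) ((𝓝[>] (0:ℝ)) ×ˢ 𝓝 u)
      (𝓝 ((l u : ℝ) : EReal)) := by
    have hc : Continuous fun q : ℝ × Y => l q.2 := by fun_prop
    exact ((continuous_coe_real_ereal.comp hc).tendsto ((0:ℝ), u)).mono_left (prod_le_nhds u)
  calc (l u : EReal)
      = liminf (fun q : ℝ × Y => ((l q.2 : ℝ) : EReal)) ((𝓝[>] (0:ℝ)) ×ˢ 𝓝 u) :=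
        htends.liminf_eq.symm
    _ ≤ _ := liminf_le_liminf hev

lemma mem_convSubdiff_of_le {θ : Y → EReal} (hconv : ERealConvexOn θ) {y : Y} {p : ℝ}
    (hp : θ y = (p : EReal)) (hbot : ∀ z, θ z ≠ ⊥) {l : Y →L[ℝ] ℝ}
    (hl : ∀ u, (l u : EReal) ≤ subDeriv θ y u) : l ∈ convSubdiff θ y := by
  intro z
  by_cases hz : θ z = ⊤
  · rw [hz]; exact le_top
  obtain ⟨q, hq⟩ := ereal_exists_real hz (hbot z)
  have hkey : subDeriv θ y (z - y) ≤ ((q - p : ℝ) : EReal) := by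
    refine (subDeriv_le_liminf_curve θ y (z - y)).trans ?_
    refine liminf_le_of_frequently_le (Eventually.frequently ?_)
    filter_upwards [Ioo_mem_nhdsGT_of_mem (show (0:ℝ) ∈ Set.Ico (0:ℝ) 1 from
      ⟨le_refl _, one_pos⟩)] with t ht
    have hyp : ((y, p) : Y × ℝ) ∈ {q : Y × ℝ | θ q.1 ≤ (q.2 : EReal)} := le_of_eq hp
    have hzq : ((z, q) : Y × ℝ) ∈ {q : Y × ℝ | θ q.1 ≤ (q.2 : EReal)} := le_of_eq hq
    have hcomb := hconv hyp hzq (by linarith [ht.2] : (0:ℝ) ≤ 1 - t) ht.1.le (by ring)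
    have hpt : (1 - t) • (y, p) + t • ((z, q) : Y × ℝ)
        = (y + t • (z - y), p + t * (q - p)) := by
      rw [Prod.smul_mk, Prod.smul_mk, Prod.mk_add_mk, Prod.mk.injEq]
      constructor
      · rw [smul_sub]
        module
      · simp only [smul_eq_mul]
        ring
    rw [hpt] at hcomb
    have hmem : θ (y + t • (z - y)) ≤ ((p + t * (q - p) : ℝ) : EReal) := hcomb
    by_cases htop : θ (y + t • (z - y)) = ⊤
    · rw [htop] at hmem
      exact absurd (top_le_iff.mp hmem) (EReal.coe_ne_top _)
    obtain ⟨r, hr⟩ := ereal_exists_real htop (hbot _)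
    rw [hr] at hmem
    have hrr : r ≤ p + t * (q - p) := by exact_mod_cast hmem
    rw [diffQuot, hr, hp, ← EReal.coe_sub, ← EReal.coe_mul, EReal.coe_le_coe_iff]
    rw [show t⁻¹ * (r - p) = (r - p) / t by ring, div_le_iff₀ ht.1]
    nlinarith [ht.1]
  have h2 := le_trans (hl (z - y)) hkey
  have h3 : l (z - y) ≤ q - p := by exact_mod_cast h2
  rw [hp, hq, ← EReal.coe_add, EReal.coe_le_coe_iff]
  linarith

lemma diffQuot_mono {θ : Y → EReal} (hconv : ERealConvexOn θ) {y : Y} {p : ℝ}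
    (hp : θ y = (p : EReal)) (hbot : ∀ z, θ z ≠ ⊥) {u : Y} {t t' : ℝ}
    (ht : 0 < t) (htt' : t ≤ t') :
    diffQuot θ y t u ≤ diffQuot θ y t' u := by
  have ht' : (0:ℝ) < t' := lt_of_lt_of_le ht htt'
  by_cases htop : θ (y + t' • u) = ⊤
  · rw [diffQuot_top hp ht' htop]
    exact le_top
  obtain ⟨q, hq⟩ := ereal_exists_real htop (hbot _)
  have hyp : ((y, p) : Y × ℝ) ∈ {q : Y × ℝ | θ q.1 ≤ (q.2 : EReal)} := le_of_eq hp
  have hzq : ((y + t' • u, q) : Y × ℝ) ∈ {q : Y × ℝ | θ q.1 ≤ (q.2 : EReal)} := le_of_eq hq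
  have hcomb := hconv hyp hzq (a := 1 - t / t') (b := t / t')
    (by rw [sub_nonneg]; exact div_le_one_of_le₀ htt' ht'.le)
    (by positivity) (by ring)
  have hpt : (1 - t / t') • (y, p) + (t / t') • ((y + t' • u, q) : Y × ℝ)
      = (y + t • u, p + (t / t') * (q - p)) := by
    rw [Prod.smul_mk, Prod.smul_mk, Prod.mk_add_mk, Prod.mk.injEq]
    constructor
    · rw [smul_add, smul_smul, div_mul_cancel₀ _ (ne_of_gt ht')]
      module
    · simp only [smul_eq_mul]
      ring
  rw [hpt] at hcomb
  have hmem : θ (y + t • u) ≤ ((p + t / t' * (q - p) : ℝ) : EReal) := hcomb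
  by_cases htop2 : θ (y + t • u) = ⊤
  · rw [htop2] at hmem
    exact absurd (top_le_iff.mp hmem) (EReal.coe_ne_top _)
  obtain ⟨r, hr⟩ := ereal_exists_real htop2 (hbot _)
  rw [hr] at hmem
  have hrr : r ≤ p + t / t' * (q - p) := by exact_mod_cast hmem
  rw [diffQuot, diffQuot, hr, hq, hp, ← EReal.coe_sub, ← EReal.coe_mul,
    ← EReal.coe_sub, ← EReal.coe_mul, EReal.coe_le_coe_iff]
  rw [show t⁻¹ * (r - p) = (r - p) / t by ring, show t'⁻¹ * (q - p) = (q - p) / t' by ring,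
    div_le_div_iff₀ ht ht']
  have h3 : t / t' * (q - p) * t' = (q - p) * t := by
    field_simp
  linarith [mul_le_mul_of_nonneg_right (by linarith : r - p ≤ t / t' * (q - p)) ht'.le, h3]

lemma liminf_curve_le_diffQuot {θ : Y → EReal} (hconv : ERealConvexOn θ) {y : Y} {p : ℝ}
    (hp : θ y = (p : EReal)) (hbot : ∀ z, θ z ≠ ⊥) {u : Y} {t : ℝ} (ht : 0 < t) :
    liminf (fun t' => diffQuot θ y t' u) (𝓝[>] (0:ℝ)) ≤ diffQuot θ y t u := by
  refine liminf_le_of_frequently_le (Eventually.frequently ?_)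
  filter_upwards [Ioo_mem_nhdsGT_of_mem (show (0:ℝ) ∈ Set.Ico (0:ℝ) t from
    ⟨le_refl _, ht⟩)] with t' ht'
  exact diffQuot_mono hconv hp hbot ht'.1 ht'.2.le

lemma epi_subDeriv_convex {θ : Y → EReal} (hconv : ERealConvexOn θ) {y : Y} {p : ℝ}
    (hp : θ y = (p : EReal)) (hbot : ∀ z, θ z ≠ ⊥)
    (hL : ∀ u : Y, liminf (fun t => diffQuot θ y t u) (𝓝[>] (0:ℝ)) = subDeriv θ y u) :
    Convex ℝ (epiSet (subDeriv θ y)) := by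
  rintro ⟨u₁, r₁⟩ h₁ ⟨u₂, r₂⟩ h₂ a c ha hc hac
  simp only [epiSet, Set.mem_setOf_eq] at h₁ h₂
  have hgoal : ∀ ε : ℝ, 0 < ε →
      subDeriv θ y (a • u₁ + c • u₂) ≤ ((a * r₁ + c * r₂ + ε : ℝ) : EReal) := by
    intro ε hε
    have hfr₁ : ∃ᶠ t in 𝓝[>] (0:ℝ), diffQuot θ y t u₁ < ((r₁ + ε : ℝ) : EReal) := by
      refine frequently_lt_of_liminf_lt (by isBoundedDefault) ?_
      rw [hL u₁]
      refine lt_of_le_of_lt h₁ ?_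
      exact_mod_cast (by linarith : r₁ < r₁ + ε)
    have hfr₂ : ∃ᶠ t in 𝓝[>] (0:ℝ), diffQuot θ y t u₂ < ((r₂ + ε : ℝ) : EReal) := by
      refine frequently_lt_of_liminf_lt (by isBoundedDefault) ?_
      rw [hL u₂]
      refine lt_of_le_of_lt h₂ ?_
      exact_mod_cast (by linarith : r₂ < r₂ + ε)
    obtain ⟨t₁, hdq₁, ht₁⟩ := (hfr₁.and_eventually self_mem_nhdsWithin).exists
    obtain ⟨t₂, hdq₂, ht₂⟩ := (hfr₂.and_eventually self_mem_nhdsWithin).exists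
    have ht₁' : (0:ℝ) < t₁ := ht₁
    have ht₂' : (0:ℝ) < t₂ := ht₂
    set t := min t₁ t₂ with htdef
    have ht : (0:ℝ) < t := lt_min ht₁' ht₂'
    have hm₁ : diffQuot θ y t u₁ < ((r₁ + ε : ℝ) : EReal) :=
      lt_of_le_of_lt (diffQuot_mono hconv hp hbot ht (min_le_left _ _)) hdq₁
    have hm₂ : diffQuot θ y t u₂ < ((r₂ + ε : ℝ) : EReal) :=
      lt_of_le_of_lt (diffQuot_mono hconv hp hbot ht (min_le_right _ _)) hdq₂
    -- extract real values
    have hext : ∀ u : Y, ∀ rr : ℝ, diffQuot θ y t u < ((rr : ℝ) : EReal) →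
        θ (y + t • u) ≤ ((p + t * rr : ℝ) : EReal) := by
      intro u rr hlt
      by_cases htop : θ (y + t • u) = ⊤
      · rw [diffQuot_top hp ht htop] at hlt
        exact absurd hlt (by simp)
      obtain ⟨r, hr⟩ := ereal_exists_real htop (hbot _)
      rw [diffQuot, hr, hp, ← EReal.coe_sub, ← EReal.coe_mul, EReal.coe_lt_coe_iff] at hlt
      rw [hr, EReal.coe_le_coe_iff]
      rw [show t⁻¹ * (r - p) = (r - p) / t by ring, div_lt_iff₀ ht] at hlt
      nlinarith
    have he₁ := hext u₁ (r₁ + ε) hm₁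
    have he₂ := hext u₂ (r₂ + ε) hm₂
    have hcomb := hconv (show ((y + t • u₁, p + t * (r₁ + ε)) : Y × ℝ) ∈
        {q : Y × ℝ | θ q.1 ≤ (q.2 : EReal)} from he₁)
      (show ((y + t • u₂, p + t * (r₂ + ε)) : Y × ℝ) ∈
        {q : Y × ℝ | θ q.1 ≤ (q.2 : EReal)} from he₂) ha hc hac
    have hpt : a • ((y + t • u₁, p + t * (r₁ + ε)) : Y × ℝ)
        + c • ((y + t • u₂, p + t * (r₂ + ε)) : Y × ℝ)
        = (y + t • (a • u₁ + c • u₂), p + t * (a * r₁ + c * r₂ + ε)) := by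
      rw [Prod.smul_mk, Prod.smul_mk, Prod.mk_add_mk, Prod.mk.injEq]
      constructor
      · have : a • (y + t • u₁) + c • (y + t • u₂)
            = (a + c) • y + t • (a • u₁ + c • u₂) := by
          module
        rw [this, hac, one_smul]
      · simp only [smul_eq_mul]
        linear_combination (p + t * ε) * hac
    rw [hpt] at hcomb
    have hmem : θ (y + t • (a • u₁ + c • u₂))
        ≤ ((p + t * (a * r₁ + c * r₂ + ε) : ℝ) : EReal) := hcomb
    rw [← hL (a • u₁ + c • u₂)]
    refine (liminf_curve_le_diffQuot hconv hp hbot ht).trans ?_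
    by_cases htop : θ (y + t • (a • u₁ + c • u₂)) = ⊤
    · rw [htop] at hmem
      exact absurd (top_le_iff.mp hmem) (EReal.coe_ne_top _)
    obtain ⟨r, hr⟩ := ereal_exists_real htop (hbot _)
    rw [hr] at hmem
    have hrr : r ≤ p + t * (a * r₁ + c * r₂ + ε) := by exact_mod_cast hmem
    rw [diffQuot, hr, hp, ← EReal.coe_sub, ← EReal.coe_mul, EReal.coe_le_coe_iff]
    rw [show t⁻¹ * (r - p) = (r - p) / t by ring, div_le_iff₀ ht]
    nlinarith
  by_contra hcon
  simp only [epiSet, Set.mem_setOf_eq, not_le] at hcon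
  have h1 : ((a * r₁ + c * r₂ : ℝ) : EReal)
      < subDeriv θ y (a • (u₁, r₁) + c • (u₂, r₂)).1 := hcon
  obtain ⟨mreal, hm1, hm2⟩ := EReal.exists_between_coe_real h1
  have hε : (0:ℝ) < mreal - (a * r₁ + c * r₂) := by
    have := hm1
    exact_mod_cast sub_pos.mpr (by exact_mod_cast this)
  have := hgoal (mreal - (a * r₁ + c * r₂)) hε
  have heq : a * r₁ + c * r₂ + (mreal - (a * r₁ + c * r₂)) = mreal := by ring
  rw [heq] at this
  have hfst : (a • (u₁, r₁) + c • ((u₂, r₂) : Y × ℝ)).1 = a • u₁ + c • u₂ := rfl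
  rw [hfst] at hm2
  exact absurd (lt_of_lt_of_le hm2 this) (lt_irrefl _)

end ChainRuleAux2
section ChainRuleAux3

open Filter Topology Set

variable {Y : Type*} [NormedAddCommGroup Y] [NormedSpace ℝ Y]

/-- Epigraph formula for the subderivative of a PLQ function, assuming the sInf formula. -/
lemma epi_subDeriv_formula {s : ℕ} {Ω : Fin s → Set Y} {B : Fin s → Y →L[ℝ] Y →L[ℝ] ℝ}
    {b : Fin s → Y →L[ℝ] ℝ} {θ : Y → EReal} {y0 : Y}
    (hF : ∀ u : Y, subDeriv θ y0 u
      = sInf ((fun i => ((2 * B i y0 u + b i u : ℝ) : EReal)) ''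
          {i | u ∈ enterCone (Ω i) y0})) :
    epiSet (subDeriv θ y0) = ⋃ i, {q : Y × ℝ |
      q.1 ∈ enterCone (Ω i) y0 ∧ 2 * B i y0 q.1 + b i q.1 ≤ q.2} := by
  ext ⟨u, r⟩
  simp only [epiSet, Set.mem_setOf_eq, Set.mem_iUnion]
  rw [hF u]
  constructor
  · intro h
    have hfin : ((fun i => ((2 * B i y0 u + b i u : ℝ) : EReal)) ''
        {i | u ∈ enterCone (Ω i) y0}).Finite := Set.Finite.image _ (Set.toFinite _)
    rcases Set.eq_empty_or_nonempty ((fun i => ((2 * B i y0 u + b i u : ℝ) : EReal)) ''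
        {i | u ∈ enterCone (Ω i) y0}) with hemp | hne
    · rw [hemp, sInf_empty] at h
      exact absurd h (by simp)
    · have hmem := hne.csInf_mem hfin
      obtain ⟨i, hi, heq⟩ := hmem
      refine ⟨i, hi, ?_⟩
      rw [← heq] at h
      simp only at h
      exact_mod_cast h
  · rintro ⟨i, hi, hle⟩
    refine le_trans (sInf_le (Set.mem_image_of_mem _
      (show i ∈ {i | u ∈ enterCone (Ω i) y0} from hi))) ?_
    exact_mod_cast hle

lemma epi_subDeriv_closed {s : ℕ} {Ω : Fin s → Set Y} {B : Fin s → Y →L[ℝ] Y →L[ℝ] ℝ}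
    {b : Fin s → Y →L[ℝ] ℝ} {θ : Y → EReal} {y0 : Y}
    (hpoly : ∀ i, IsPolyhedral (Ω i))
    (hF : ∀ u : Y, subDeriv θ y0 u
      = sInf ((fun i => ((2 * B i y0 u + b i u : ℝ) : EReal)) ''
          {i | u ∈ enterCone (Ω i) y0})) :
    IsClosed (epiSet (subDeriv θ y0)) := by
  rw [epi_subDeriv_formula hF]
  refine isClosed_iUnion_of_finite fun i => ?_
  by_cases hyi : y0 ∈ Ω i
  · obtain ⟨m, c, d, hΩ⟩ := hpoly i
    have hEC : enterCone (Ω i) y0 = {u : Y | ∀ j, c j y0 = d j → c j u ≤ 0} := by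
      ext u
      rw [hΩ] at hyi ⊢
      exact enterCone_iff_poly hyi
    have heq : {q : Y × ℝ | q.1 ∈ enterCone (Ω i) y0 ∧ 2 * B i y0 q.1 + b i q.1 ≤ q.2}
        = {q : Y × ℝ | ∀ j, c j y0 = d j → c j q.1 ≤ 0}
          ∩ {q : Y × ℝ | 2 * B i y0 q.1 + b i q.1 ≤ q.2} := by
      ext q
      simp only [Set.mem_setOf_eq, Set.mem_inter_iff, hEC]
    rw [heq]
    refine IsClosed.inter ?_ ?_
    · rw [Set.setOf_forall]
      refine isClosed_iInter fun j => ?_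
      by_cases hact : c j y0 = d j
      · have hset : {q : Y × ℝ | c j y0 = d j → c j q.1 ≤ 0} = {q : Y × ℝ | c j q.1 ≤ 0} := by
          ext q
          simp [hact]
        rw [hset]
        exact isClosed_le ((c j).continuous.comp continuous_fst) continuous_const
      · have hset : {q : Y × ℝ | c j y0 = d j → c j q.1 ≤ 0} = Set.univ := by
          ext q
          simp [hact]
        rw [hset]
        exact isClosed_univ
    · refine isClosed_le ?_ continuous_snd
      fun_prop
  · have hEC : enterCone (Ω i) y0 = ∅ := by
      rw [Set.eq_empty_iff_forall_notMem]
      exact fun u hu => hyi (enterCone.mem_of (hpoly i).isClosed' hu)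
    simp [hEC]

lemma epi_subDeriv_cone {s : ℕ} {Ω : Fin s → Set Y} {B : Fin s → Y →L[ℝ] Y →L[ℝ] ℝ}
    {b : Fin s → Y →L[ℝ] ℝ} {θ : Y → EReal} {y0 : Y}
    (hF : ∀ u : Y, subDeriv θ y0 u
      = sInf ((fun i => ((2 * B i y0 u + b i u : ℝ) : EReal)) ''
          {i | u ∈ enterCone (Ω i) y0})) :
    ∀ q ∈ epiSet (subDeriv θ y0), ∀ m : ℝ, 0 < m → m • q ∈ epiSet (subDeriv θ y0) := by
  intro q hq m hm
  rw [epi_subDeriv_formula hF] at hq ⊢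
  simp only [Set.mem_iUnion, Set.mem_setOf_eq] at hq ⊢
  obtain ⟨i, hi, hle⟩ := hq
  refine ⟨i, ?_, ?_⟩
  · have : (m • q).1 = m • q.1 := rfl
    rw [this]
    exact enterCone_smul hi hm
  · have h1 : (m • q).1 = m • q.1 := rfl
    have h2 : (m • q).2 = m * q.2 := rfl
    rw [h1, h2]
    simp only [map_smul, smul_eq_mul]
    nlinarith

lemma subDeriv_ne_bot' {s : ℕ} {Ω : Fin s → Set Y} {B : Fin s → Y →L[ℝ] Y →L[ℝ] ℝ}
    {b : Fin s → Y →L[ℝ] ℝ} {θ : Y → EReal} {y0 : Y}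
    (hF : ∀ u : Y, subDeriv θ y0 u
      = sInf ((fun i => ((2 * B i y0 u + b i u : ℝ) : EReal)) ''
          {i | u ∈ enterCone (Ω i) y0})) (u : Y) :
    subDeriv θ y0 u ≠ ⊥ := by
  rw [hF u]
  rcases Set.eq_empty_or_nonempty ((fun i => ((2 * B i y0 u + b i u : ℝ) : EReal)) ''
      {i | u ∈ enterCone (Ω i) y0}) with hemp | hne
  · rw [hemp, sInf_empty]
    exact top_ne_bot
  · have hmem := hne.csInf_mem (Set.Finite.image _ (Set.toFinite _))
    obtain ⟨i, _, heq⟩ := hmem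
    rw [← heq]
    exact EReal.coe_ne_bot _

lemma subDeriv_zero_eq {s : ℕ} {Ω : Fin s → Set Y} {B : Fin s → Y →L[ℝ] Y →L[ℝ] ℝ}
    {b : Fin s → Y →L[ℝ] ℝ} {θ : Y → EReal} {y0 : Y}
    (hF : ∀ u : Y, subDeriv θ y0 u
      = sInf ((fun i => ((2 * B i y0 u + b i u : ℝ) : EReal)) ''
          {i | u ∈ enterCone (Ω i) y0}))
    {i : Fin s} (hyi : y0 ∈ Ω i) :
    subDeriv θ y0 0 = 0 := by
  rw [hF 0]
  have hi : (0:Y) ∈ enterCone (Ω i) y0 := by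
    rw [mem_enterCone]
    filter_upwards [self_mem_nhdsWithin] with t _
    simpa using hyi
  have himg : (fun i => ((2 * B i y0 0 + b i 0 : ℝ) : EReal)) ''
      {i | (0:Y) ∈ enterCone (Ω i) y0} = {(0 : EReal)} := by
    rw [Set.eq_singleton_iff_nonempty_unique_mem]
    constructor
    · exact ⟨_, Set.mem_image_of_mem _ (show i ∈ {i | (0:Y) ∈ enterCone (Ω i) y0} from hi)⟩
    · rintro x ⟨j, _, rfl⟩
      simp
  rw [himg, sInf_singleton]

/-- Abstract separation lemma: a closed convex cone-like epigraph admits linear minorants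
achieving any value below the function. -/
lemma exists_linear_minorant {h : Y → EReal} (hconv : Convex ℝ (epiSet h))
    (hclosed : IsClosed (epiSet h))
    (hcone : ∀ q ∈ epiSet h, ∀ m : ℝ, 0 < m → m • q ∈ epiSet h)
    (h0 : h 0 = 0) (hnb : ∀ u, h u ≠ ⊥) {z : Y} {c : ℝ} (hc : (c : EReal) < h z) :
    ∃ l : Y →L[ℝ] ℝ, (∀ u, ((l u : ℝ) : EReal) ≤ h u) ∧ c < l z := by
  have h00 : ((0:Y), (0:ℝ)) ∈ epiSet h := by
    simp only [epiSet, Set.mem_setOf_eq, h0]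
    exact_mod_cast le_refl (0:ℝ)
  have sep : ∀ (z' : Y) (c' : ℝ), (c' : EReal) < h z' →
      ∃ (f : Y →L[ℝ] ℝ) (γ sp : ℝ), γ ≤ 0 ∧ 0 < sp ∧
        (∀ (u : Y) (r : ℝ), h u ≤ (r : EReal) → f u + γ * r ≤ 0) ∧ sp < f z' + γ * c' := by
    intro z' c' hc'
    have hnotmem : (z', c') ∉ epiSet h := fun hmem => absurd (not_le.mpr hc') (by
      simp only [epiSet, Set.mem_setOf_eq] at hmem
      exact not_not.mpr hmem)
    obtain ⟨F, sp, hFlt, hFz⟩ := geometric_hahn_banach_closed_point hconv hclosed hnotmem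
    set f : Y →L[ℝ] ℝ := F.comp (ContinuousLinearMap.inl ℝ Y ℝ) with hf
    have hFsplit : ∀ q : Y × ℝ, F q = f q.1 + q.2 * F (0, 1) := by
      intro q
      have hdecomp : q = ((q.1, 0) : Y × ℝ) + q.2 • ((0:Y), (1:ℝ)) := by
        rw [Prod.smul_mk]
        simp
      rw [hdecomp, map_add, map_smul]
      simp [hf]
    have hsp : 0 < sp := by
      have := hFlt _ h00
      rw [hFsplit ((0:Y), (0:ℝ))] at this
      simpa using this
    have hγ : F (0, 1) ≤ 0 := by
      by_contra hγpos
      push_neg at hγpos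
      set n : ℝ := max 1 ((sp + 1) / F (0, 1)) with hn
      have hn1 : (1:ℝ) ≤ n := le_max_left _ _
      have hmem : ((0:Y), n) ∈ epiSet h := by
        simp only [epiSet, Set.mem_setOf_eq]
        rw [h0]
        exact_mod_cast by linarith
      have hlt := hFlt _ hmem
      rw [hFsplit ((0:Y), n)] at hlt
      simp only [map_zero, zero_add] at hlt
      have hn2 : (sp + 1) / F (0, 1) ≤ n := le_max_right _ _
      rw [div_le_iff₀ hγpos] at hn2
      linarith
    have hlin : ∀ (u : Y) (r : ℝ), h u ≤ (r : EReal) → f u + F (0, 1) * r ≤ 0 := by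
      intro u r hur
      have hmem : (u, r) ∈ epiSet h := hur
      by_contra hpos
      push_neg at hpos
      have hq := hFlt _ (hcone _ hmem (sp / (f u + F (0, 1) * r)) (by positivity))
      rw [hFsplit _] at hq
      have h1 : ((sp / (f u + F (0,1) * r)) • ((u, r) : Y × ℝ)).1
          = (sp / (f u + F (0,1) * r)) • u := rfl
      have h2 : ((sp / (f u + F (0,1) * r)) • ((u, r) : Y × ℝ)).2
          = (sp / (f u + F (0,1) * r)) * r := rfl
      rw [h1, h2, map_smul, smul_eq_mul] at hq
      have h3 : sp / (f u + F (0,1) * r) * f u + sp / (f u + F (0,1) * r) * r * F (0,1)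
          = sp / (f u + F (0,1) * r) * (f u + F (0,1) * r) := by ring
      rw [h3, div_mul_cancel₀ _ (ne_of_gt hpos)] at hq
      exact absurd hq (lt_irrefl _)
    refine ⟨f, F (0, 1), sp, hγ, hsp, hlin, ?_⟩
    rw [hFsplit ((z', c'))] at hFz
    linarith [hFz]
  obtain ⟨f, γ, sp, hγ, hsp, hlin, hfz⟩ := sep z c hc
  rcases lt_or_eq_of_le hγ with hγneg | hγzero
  · refine ⟨(-γ)⁻¹ • f, fun u => ?_, ?_⟩
    · by_cases htop : h u = ⊤
      · rw [htop]; exact le_top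
      obtain ⟨r, hr⟩ := ereal_exists_real htop (hnb u)
      have := hlin u r (le_of_eq hr)
      rw [hr, EReal.coe_le_coe_iff]
      have hexp : ((-γ)⁻¹ • f) u = (-γ)⁻¹ * f u := rfl
      rw [hexp, show (-γ)⁻¹ * f u = f u / (-γ) by ring, div_le_iff₀ (by linarith : (0:ℝ) < -γ)]
      nlinarith
    · have hexp : ((-γ)⁻¹ • f) z = (-γ)⁻¹ * f z := rfl
      rw [hexp, show (-γ)⁻¹ * f z = f z / (-γ) by ring, lt_div_iff₀ (by linarith : (0:ℝ) < -γ)]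
      nlinarith
  · -- γ = 0
    obtain ⟨f₀, γ₀, sp₀, hγ₀, hsp₀, hlin₀, hfz₀⟩ := sep 0 (-1)
      (by rw [h0]; exact_mod_cast (by norm_num : (-1:ℝ) < (0:ℝ)))
    have hf₀0 : f₀ 0 = 0 := map_zero f₀
    have hγ₀neg : γ₀ < 0 := by
      rw [hf₀0] at hfz₀
      nlinarith
    set l₀ : Y →L[ℝ] ℝ := (-γ₀)⁻¹ • f₀ with hl₀
    have hl₀le : ∀ u, ((l₀ u : ℝ) : EReal) ≤ h u := by
      intro u
      by_cases htop : h u = ⊤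
      · rw [htop]; exact le_top
      obtain ⟨r, hr⟩ := ereal_exists_real htop (hnb u)
      have := hlin₀ u r (le_of_eq hr)
      rw [hr, EReal.coe_le_coe_iff]
      have hexp : l₀ u = (-γ₀)⁻¹ * f₀ u := rfl
      rw [hexp, show (-γ₀)⁻¹ * f₀ u = f₀ u / (-γ₀) by ring,
        div_le_iff₀ (by linarith : (0:ℝ) < -γ₀)]
      nlinarith
    -- f z > 0 and f ≤ 0 on dom h
    rw [hγzero] at hlin hfz
    simp only [zero_mul, add_zero] at hlin hfz
    have hfzpos : 0 < f z := lt_trans hsp hfz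
    set n : ℝ := max 1 ((c - l₀ z) / f z + 1) with hn
    have hn1 : (1:ℝ) ≤ n := le_max_left _ _
    refine ⟨l₀ + n • f, fun u => ?_, ?_⟩
    · by_cases htop : h u = ⊤
      · rw [htop]; exact le_top
      obtain ⟨r, hr⟩ := ereal_exists_real htop (hnb u)
      have h1 := hlin u r (le_of_eq hr)
      have h2 := hl₀le u
      rw [hr, EReal.coe_le_coe_iff] at h2 ⊢
      have hexp : (l₀ + n • f) u = l₀ u + n * f u := rfl
      rw [hexp]
      nlinarith
    · have hexp : (l₀ + n • f) z = l₀ z + n * f z := rfl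
      rw [hexp]
      have hn2 : (c - l₀ z) / f z + 1 ≤ n := le_max_right _ _
      rw [div_add' _ _ _ (ne_of_gt hfzpos), div_le_iff₀ hfzpos] at hn2
      nlinarith

lemma convSubdiff_convex {θ : Y → EReal} {y : Y} {p : ℝ} (hp : θ y = (p : EReal)) :
    Convex ℝ (convSubdiff θ y) := by
  intro l₁ h₁ l₂ h₂ a c ha hc hac
  intro z
  have k₁ := h₁ z
  have k₂ := h₂ z
  rw [hp] at k₁ k₂ ⊢
  by_cases hz : θ z = ⊤
  · rw [hz]; exact le_top
  have hzb : θ z ≠ ⊥ := by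
    intro hbz
    rw [hbz, le_bot_iff] at k₁
    exact (EReal.coe_ne_bot _) (by exact_mod_cast k₁)
  obtain ⟨q, hq⟩ := ereal_exists_real hz hzb
  rw [hq] at k₁ k₂ ⊢
  have hk₁ : p + l₁ (z - y) ≤ q := by exact_mod_cast k₁
  have hk₂ : p + l₂ (z - y) ≤ q := by exact_mod_cast k₂
  have hexp : (a • l₁ + c • l₂) (z - y) = a * l₁ (z - y) + c * l₂ (z - y) := rfl
  rw [hexp, ← EReal.coe_add, EReal.coe_le_coe_iff]
  have h3 : p + (a * l₁ (z - y) + c * l₂ (z - y))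
      = a * (p + l₁ (z - y)) + c * (p + l₂ (z - y)) := by linear_combination (-p) * hac
  have h4 : a * q + c * q = q := by linear_combination q * hac
  linarith [mul_le_mul_of_nonneg_left hk₁ ha, mul_le_mul_of_nonneg_left hk₂ hc, h3, h4]

end ChainRuleAux3
section WeakDualAux

open Filter Topology Set

instance weakDual_locallyConvex {X : Type*} [NormedAddCommGroup X] [NormedSpace ℝ X] :
    LocallyConvexSpace ℝ (WeakDual ℝ X) :=
  inferInstanceAs (LocallyConvexSpace ℝ (WeakBilin (topDualPairing ℝ X)))

lemma weakDual_dual_repr {X : Type*} [NormedAddCommGroup X] [NormedSpace ℝ X]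
    (F : WeakDual ℝ X →L[ℝ] ℝ) : ∃ w : X, ∀ l : X →L[ℝ] ℝ, F l = l w := by
  classical
  have hinj : Function.Injective (topDualPairing ℝ X) := ContinuousLinearMap.coe_injective
  have hemb := WeakBilin.isEmbedding (B := topDualPairing ℝ X) hinj
  have hU : F ⁻¹' (Metric.ball (0:ℝ) 1) ∈ 𝓝 (0 : WeakDual ℝ X) := by
    have h0 : F 0 = 0 := map_zero F
    have := F.continuous.tendsto (0 : WeakDual ℝ X)
    rw [h0] at this
    exact this (Metric.ball_mem_nhds _ one_pos)
  erw [hemb.isInducing.nhds_eq_comap, Filter.mem_comap] at hU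
  obtain ⟨V, hV, hVsub⟩ := hU
  have hz : (fun y => topDualPairing ℝ X (0 : WeakDual ℝ X) y) = (fun _ : X => (0:ℝ)) := by
    funext y; rfl
  rw [hz, nhds_pi, Filter.mem_pi] at hV
  obtain ⟨I, hIfin, t, ht, htsub⟩ := hV
  -- key vanishing property
  have key : ∀ l : X →L[ℝ] ℝ, (∀ x ∈ I, l x = 0) → F l = 0 := by
    intro l hl
    by_contra hF0
    have hball : ∀ c : ℝ, (c • l : X →L[ℝ] ℝ) ∈ F ⁻¹' (Metric.ball (0:ℝ) 1) := by
      intro c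
      apply hVsub
      apply htsub
      intro x hx
      have : topDualPairing ℝ X (c • l : X →L[ℝ] ℝ) x = 0 := by
        show c • l x = 0
        rw [hl x hx, smul_zero]
      simp only [Set.mem_pi] at *
      rw [this]
      exact mem_of_mem_nhds (ht x)
    have h2 := hball (2 / F l)
    change F ((2 / F l) • l) ∈ Metric.ball (0:ℝ) 1 at h2
    rw [Metric.mem_ball, dist_zero_right] at h2
    have : F ((2 / F l) • l) = (2 / F l) * F l := by
      exact F.map_smul (2 / F l) l
    rw [this, div_mul_cancel₀ _ hF0] at h2
    norm_num at h2
  -- linear algebra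
  haveI : Fintype ↥I := hIfin.fintype
  set L : ↥I → (WeakDual ℝ X) →ₗ[ℝ] ℝ :=
    fun x => ((topDualPairing ℝ X).flip (x : X) : (WeakDual ℝ X) →ₗ[ℝ] ℝ) with hL
  have hker : ⨅ x : ↥I, LinearMap.ker (L x) ≤ LinearMap.ker (F.toLinearMap) := by
    intro l hl
    simp only [Submodule.mem_iInf, LinearMap.mem_ker] at hl ⊢
    exact key l (fun x hx => hl ⟨x, hx⟩)
  have hspan := mem_span_of_iInf_ker_le_ker hker
  rw [Submodule.mem_span_range_iff_exists_fun] at hspan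
  obtain ⟨c, hc⟩ := hspan
  refine ⟨∑ x : ↥I, c x • (x : X), fun l => ?_⟩
  have := congrArg (fun (G : (WeakDual ℝ X) →ₗ[ℝ] ℝ) => G l) hc
  simp only [LinearMap.coe_sum, Finset.sum_apply, LinearMap.smul_apply] at this
  have hsum : ∑ x : ↥I, c x • (L x) l = l (∑ x : ↥I, c x • (x:X)) := by
    rw [map_sum]
    refine Finset.sum_congr rfl (fun x _ => ?_)
    rw [map_smul]
    rfl
  exact this.symm.trans ((Finset.sum_apply _ _ _).trans hsum)

end WeakDualAux

/-- unconditional chain rules for compositions of piecewise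
linear-quadratic functions with affine mappings. -/
theorem chain_rules_plq_affine
    {X Y : Type*} [NormedAddCommGroup X] [NormedSpace ℝ X]
    [NormedAddCommGroup Y] [NormedSpace ℝ Y]
    (A : X →L[ℝ] Y) (a : Y) (θ : Y → EReal)
    (hθbot : ∀ y, θ y ≠ ⊥)
    (hθ : PiecewiseLQ θ) :
    (∀ x : X, θ (A x + a) ≠ ⊤ → ∀ w : X,
      subDeriv (fun x' => θ (A x' + a)) x w = subDeriv θ (A x + a) (A w)) ∧
    (ERealConvexOn θ →
      ∀ x : X, θ (A x + a) ≠ ⊤ →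
        IsWeakStarClosed ((fun l : Y →L[ℝ] ℝ => l.comp A) '' convSubdiff θ (A x + a)) →
        subDiff (fun x' => θ (A x' + a)) x =
          (fun l : Y →L[ℝ] ℝ => l.comp A) '' convSubdiff θ (A x + a)) := by
  classical
  obtain ⟨s, Ω, B, b, β, hpoly, hsym, hdom, hfor⟩ := hθ
  set φ : X → EReal := fun x' => θ (A x' + a) with hφdef
  set Ω' : Fin s → Set X := fun i => (fun x' => A x' + a) ⁻¹' (Ω i) with hΩ'def
  set B' : Fin s → X →L[ℝ] X →L[ℝ] ℝ := fun i => (((B i).comp A).flip).comp A with hB'def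
  set b' : Fin s → X →L[ℝ] ℝ := fun i => (b i).comp A + (2:ℝ) • ((B i a).comp A) with hb'def
  set β' : Fin s → ℝ := fun i => B i a a + b i a + β i with hβ'def
  have hB'apply : ∀ i (x₁ x₂ : X), B' i x₁ x₂ = B i (A x₂) (A x₁) := by
    intro i x₁ x₂
    rw [hB'def]
    simp [ContinuousLinearMap.flip_apply]
  have hb'apply : ∀ i (x₁ : X), b' i x₁ = b i (A x₁) + 2 * B i a (A x₁) := by
    intro i x₁
    rw [hb'def]
    simp
  have hΩ'mem : ∀ i (x' : X), x' ∈ Ω' i ↔ A x' + a ∈ Ω i := by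
    intro i x'
    rw [hΩ'def]
    exact Iff.rfl
  have hpoly' : ∀ i, IsPolyhedral (Ω' i) := by
    intro i
    obtain ⟨m, c, d, hΩ⟩ := hpoly i
    refine ⟨m, fun j => (c j).comp A, fun j => d j - c j a, ?_⟩
    ext x'
    rw [hΩ'mem, hΩ]
    simp only [Set.mem_setOf_eq, map_add, ContinuousLinearMap.comp_apply]
    exact forall_congr' fun j => by constructor <;> intro h <;> linarith
  have hsym' : ∀ i, ∀ x₁ x₂ : X, B' i x₁ x₂ = B' i x₂ x₁ := by
    intro i x₁ x₂
    rw [hB'apply, hB'apply, hsym i]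
  have hdom' : {x' : X | φ x' ≠ ⊤} = ⋃ i, Ω' i := by
    ext x'
    simp only [Set.mem_setOf_eq, Set.mem_iUnion]
    have h2 := Set.ext_iff.mp hdom (A x' + a)
    simp only [Set.mem_setOf_eq, Set.mem_iUnion] at h2
    rw [show φ x' = θ (A x' + a) from rfl]
    rw [h2]
    exact exists_congr fun i => (hΩ'mem i x').symm
  have hfor' : ∀ i, ∀ x' ∈ Ω' i, φ x' = ((B' i x' x' + b' i x' + β' i : ℝ) : EReal) := by
    intro i x' hx'
    have h1 := hfor i (A x' + a) ((hΩ'mem i x').mp hx')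
    rw [show φ x' = θ (A x' + a) from rfl, h1]
    congr 1
    rw [hB'apply, hb'apply, hβ'def]
    have e1 : B i (A x' + a) (A x' + a)
        = B i (A x') (A x') + B i (A x') a + B i a (A x') + B i a a := by
      simp only [map_add, ContinuousLinearMap.add_apply]
      ring
    have e2 : b i (A x' + a) = b i (A x') + b i a := map_add _ _ _
    have e3 : B i (A x') a = B i a (A x') := hsym i _ _
    rw [e1, e2, e3]
    ring
  have part1 : ∀ x : X, θ (A x + a) ≠ ⊤ → ∀ w : X,
      subDeriv φ x w = subDeriv θ (A x + a) (A w) := by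
    intro x hx w
    obtain ⟨p, hp⟩ := ereal_exists_real hx (hθbot _)
    have hp' : φ x = (p : EReal) := hp
    have h1 := plq_subDeriv_eq hpoly' hsym' hdom' hfor' hp' w
    have h2 := plq_subDeriv_eq hpoly hsym hdom hfor hp (A w)
    rw [h1, h2]
    have hsets : {i | w ∈ enterCone (Ω' i) x} = {i | A w ∈ enterCone (Ω i) (A x + a)} := by
      ext i
      simp only [Set.mem_setOf_eq, mem_enterCone]
      refine eventually_congr (Eventually.of_forall fun t => ?_)
      rw [hΩ'mem]
      have e5 : A (x + t • w) + a = A x + a + t • A w := by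
        rw [map_add, map_smul, add_right_comm]
      rw [e5]
    have himg : (fun i => ((2 * B' i x w + b' i w : ℝ) : EReal)) '' {i | w ∈ enterCone (Ω' i) x}
        = (fun i => ((2 * B i (A x + a) (A w) + b i (A w) : ℝ) : EReal)) ''
          {i | A w ∈ enterCone (Ω i) (A x + a)} := by
      rw [← hsets]
      refine Set.image_congr fun i _ => ?_
      congr 1
      rw [hB'apply, hb'apply]
      have e3 : B i (A w) (A x) = B i (A x) (A w) := hsym i _ _
      have e4 : B i (A x + a) (A w) = B i (A x) (A w) + B i a (A w) := by
        simp only [map_add, ContinuousLinearMap.add_apply]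
      rw [e3, e4]
      ring
    rw [himg]
  refine ⟨part1, ?_⟩
  intro hconv x hx hclosed
  obtain ⟨p, hp⟩ := ereal_exists_real hx (hθbot _)
  have hFθ := fun u => plq_subDeriv_eq hpoly hsym hdom hfor hp u
  have hLθ : ∀ u : Y, liminf (fun t => diffQuot θ (A x + a) t u) (𝓝[>] (0:ℝ))
      = subDeriv θ (A x + a) u := by
    intro u
    refine le_antisymm ?_ (subDeriv_le_liminf_curve θ _ u)
    rw [hFθ u]
    refine le_sInf fun vv hvv => ?_
    obtain ⟨i, hi, rfl⟩ := hvv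
    exact liminf_curve_le_piece (hsym i) (hfor i) (enterCone.mem_of (hpoly i).isClosed' hi) hi
  have hconvE := epi_subDeriv_convex hconv hp hθbot hLθ
  have hclE := epi_subDeriv_closed hpoly hFθ
  have hconeE := epi_subDeriv_cone hFθ
  obtain ⟨i0, hi0⟩ : ∃ i, A x + a ∈ Ω i := by
    have hxd : A x + a ∈ {y | θ y ≠ ⊤} := hx
    rw [hdom] at hxd
    exact Set.mem_iUnion.mp hxd
  have h0E := subDeriv_zero_eq hFθ hi0
  have hnbE := subDeriv_ne_bot' hFθ
  ext v
  constructor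
  · intro hv
    by_contra hvS
    have hSconv : Convex ℝ (show Set (WeakDual ℝ X) from
        (fun l : Y →L[ℝ] ℝ => l.comp A) '' convSubdiff θ (A x + a)) := by
      have hM := convSubdiff_convex hp
      let Mlin : (Y →L[ℝ] ℝ) →ₗ[ℝ] (X →L[ℝ] ℝ) :=
        { toFun := fun l => l.comp A
          map_add' := fun l₁ l₂ => by ext u; simp
          map_smul' := fun cc l => by ext u; simp }
      exact hM.linear_image Mlin
    obtain ⟨F, sp, hFlt, hFv⟩ := geometric_hahn_banach_closed_point hSconv hclosed hvS
    obtain ⟨w, hw⟩ := weakDual_dual_repr F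
    have hub : subDeriv θ (A x + a) (A w) ≤ (sp : EReal) := by
      by_contra hgt
      push_neg at hgt
      obtain ⟨l, hl, hlz⟩ := exists_linear_minorant hconvE hclE hconeE h0E hnbE hgt
      have hlsub : l ∈ convSubdiff θ (A x + a) := mem_convSubdiff_of_le hconv hp hθbot hl
      have hlt := hFlt (l.comp A) ⟨l, hlsub, rfl⟩
      rw [hw (l.comp A)] at hlt
      have hlt2 : l (A w) < sp := hlt
      exact absurd hlt2 (not_lt.mpr hlz.le)
    have hvw := hv w
    rw [part1 x hx w] at hvw
    have hvs : (v w : ℝ) ≤ sp := by exact_mod_cast le_trans hvw hub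
    rw [hw v] at hFv
    linarith
  · rintro ⟨l, hl, rfl⟩
    intro u
    rw [part1 x hx u]
    have := grad_le_subDeriv hp hθbot hl (A u)
    exact this
end
end
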